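/- arXiv:1201.2999 — 11 statements merged into one kernel-verified Lean document; each statement's English description precedes it below -/
import Mathlib

section
/- For all x in [0, 1/2], the binary entropy function satisfies h2(x) >= 1 - (1-2x)^2. -/
/-- The binary entropy function `h2(x) = -x log2 x - (1-x) log2 (1-x)`. -/
noncomputable def h2 (x : ℝ) : ℝ := -(x * Real.logb 2 x) - (1 - x) * Real.logb 2 (1 - x)

open Real Set

noncomputable def Gfun (x : ℝ) : ℝ := Real.binEntropy x - 4 * Real.log 2 * (x * (1 - x))
noncomputable def gfun (x : ℝ) : ℝ :=
  Real.log (1 - x) - Real.log x - 4 * Real.log 2 * (1 - 2 * x)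

lemma log2_pos : (0:ℝ) < Real.log 2 := Real.log_pos (by norm_num)

lemma log2_gt : (0.6931471803 : ℝ) < Real.log 2 := Real.log_two_gt_d9

lemma hasDerivAt_Gfun {x : ℝ} (h0 : x ≠ 0) (h1 : x ≠ 1) : HasDerivAt Gfun (gfun x) x := by
  have h2 : HasDerivAt (fun x : ℝ => 4 * Real.log 2 * (x * (1 - x)))
      (4 * Real.log 2 * (1 - 2 * x)) x := by
    have : HasDerivAt (fun x : ℝ => x * (1 - x)) (1 - 2 * x) x := by
      have := ((hasDerivAt_id x).mul ((hasDerivAt_const x 1).sub (hasDerivAt_id x)))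
      convert this using 1 <;> try rfl
      simp [id]; ring
    simpa using this.const_mul (4 * Real.log 2)
  have hb := Real.hasDerivAt_binEntropy h0 h1
  have := hb.sub h2
  unfold Gfun gfun
  convert this using 1 <;> rfl

lemma hasDerivAt_gfun {x : ℝ} (h0 : 0 < x) (h1 : x < 1) :
    HasDerivAt gfun (8 * Real.log 2 - (1 / x + 1 / (1 - x))) x := by
  have hx1 : (0:ℝ) < 1 - x := by linarith
  have d1 : HasDerivAt (fun x : ℝ => Real.log (1 - x)) (-(1 / (1 - x))) x := by
    have := (Real.hasDerivAt_log hx1.ne').comp x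
      (((hasDerivAt_const x (1:ℝ)).sub (hasDerivAt_id x)))
    convert this using 1 <;> try rfl
    field_simp; ring
  have d2 : HasDerivAt Real.log (1 / x) x := by
    simpa [one_div] using Real.hasDerivAt_log h0.ne'
  have d3 : HasDerivAt (fun x : ℝ => 4 * Real.log 2 * (1 - 2 * x)) (-(8 * Real.log 2)) x := by
    have : HasDerivAt (fun x : ℝ => 1 - 2 * x) (-2 : ℝ) x := by
      convert ((hasDerivAt_const x (1:ℝ)).sub ((hasDerivAt_id x).const_mul 2)) using 1 <;> try rfl
      simp
    have := this.const_mul (4 * Real.log 2)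
    convert this using 1 <;> try rfl
    ring
  have := (d1.sub d2).sub d3
  convert this using 1 <;> try rfl
  ring

lemma continuousAt_gfun {x : ℝ} (h0 : 0 < x) (h1 : x < 1) : ContinuousAt gfun x :=
  (hasDerivAt_gfun h0 h1).differentiableAt.continuousAt

noncomputable def cst : ℝ := (1 - Real.sqrt (1 - 1 / (2 * Real.log 2))) / 2

lemma cst_facts : 0 < cst ∧ cst < 1/2 ∧ 8 * Real.log 2 * (cst * (1 - cst)) = 1 := by
  have hL := log2_pos
  have hL2 := log2_gt
  have harg_pos : 0 < 1 - 1 / (2 * Real.log 2) := by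
    rw [sub_pos, div_lt_one (by linarith)]; linarith
  have harg_lt1 : 1 - 1 / (2 * Real.log 2) < 1 := by
    have : 0 < 1 / (2 * Real.log 2) := by positivity
    linarith
  set s := Real.sqrt (1 - 1 / (2 * Real.log 2)) with hs
  have hs_pos : 0 < s := Real.sqrt_pos.2 harg_pos
  have hs_sq : s ^ 2 = 1 - 1 / (2 * Real.log 2) := Real.sq_sqrt harg_pos.le
  have hs_lt1 : s < 1 := by nlinarith
  refine ⟨by unfold cst; rw [← hs]; linarith, by unfold cst; rw [← hs]; linarith, ?_⟩
  have : cst * (1 - cst) = (1 - s ^ 2) / 4 := by unfold cst; rw [← hs]; ring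
  rw [this, hs_sq]
  field_simp
  ring

lemma gfun_half : gfun (1/2) = 0 := by unfold gfun; norm_num

lemma gfun_nonpos {x : ℝ} (hx : x ∈ Icc cst (1/2)) : gfun x ≤ 0 := by
  obtain ⟨hc0, hc12, hcc⟩ := cst_facts
  have hmono : StrictMonoOn gfun (Icc cst (1/2)) := by
    apply strictMonoOn_of_deriv_pos (convex_Icc _ _)
    · intro y hy
      exact (continuousAt_gfun (lt_of_lt_of_le hc0 hy.1) (by linarith [hy.2])).continuousWithinAt
    · intro y hy
      rw [interior_Icc] at hy
      have hy0 : 0 < y := hc0.trans hy.1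
      have hy1 : y < 1 := by linarith [hy.2]
      have hy1' : 0 < 1 - y := by linarith
      rw [(hasDerivAt_gfun hy0 hy1).deriv]
      have e : 1 / y + 1 / (1 - y) = 1 / (y * (1 - y)) := by field_simp; ring
      have hp : 0 < y * (1 - y) := mul_pos hy0 hy1'
      have key : 1 < 8 * Real.log 2 * (y * (1 - y)) := by
        rw [← hcc]
        have h1 : 0 < y - cst := by linarith [hy.1]
        have h2 : 0 < 1 - y - cst := by linarith [hy.2]
        nlinarith [mul_pos (mul_pos h1 h2) (by linarith [log2_pos] : (0:ℝ) < 8 * Real.log 2)]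
      rw [e, sub_pos, div_lt_iff₀ hp]
      linarith
  rcases eq_or_lt_of_le hx.2 with h | h
  · rw [h, gfun_half]
  · have := hmono hx ⟨hc12.le, le_refl _⟩ h
    rw [gfun_half] at this
    exact this.le

lemma Gfun_half : Gfun (1/2) = 0 := by
  unfold Gfun
  rw [show (1:ℝ)/2 = 2⁻¹ by norm_num, Real.binEntropy_two_inv]
  ring

lemma Gfun_zero : Gfun 0 = 0 := by simp [Gfun]

lemma Gfun_cont : ContinuousOn Gfun (Icc 0 (1:ℝ)) :=
  (Real.binEntropy_continuous.sub (by continuity)).continuousOn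

lemma Gfun_nonneg2 : ∀ x ∈ Icc cst (1/2), 0 ≤ Gfun x := by
  obtain ⟨hc0, hc12, hcc⟩ := cst_facts
  have hanti : AntitoneOn Gfun (Icc cst (1/2)) := by
    apply antitoneOn_of_deriv_nonpos (convex_Icc _ _)
    · exact (Real.binEntropy_continuous.sub (by continuity)).continuousOn
    · intro y hy
      rw [interior_Icc] at hy
      have hy0 : 0 < y := hc0.trans hy.1
      exact (hasDerivAt_Gfun hy0.ne' (by linarith [hy.2])).differentiableAt.differentiableWithinAt
    · intro y hy
      rw [interior_Icc] at hy
      have hy0 : 0 < y := hc0.trans hy.1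
      rw [(hasDerivAt_Gfun hy0.ne' (by linarith [hy.2])).deriv]
      exact gfun_nonpos ⟨hy.1.le, hy.2.le⟩
  intro x hx
  have := hanti hx ⟨hc12.le, le_refl _⟩ hx.2
  rw [Gfun_half] at this
  exact this

lemma gfun_anti : AntitoneOn gfun (Ioo 0 cst) := by
  obtain ⟨hc0, hc12, hcc⟩ := cst_facts
  have := strictAntiOn_of_deriv_neg (convex_Ioo (0:ℝ) cst)
    (fun y hy => (continuousAt_gfun hy.1 (by linarith [hy.2])).continuousWithinAt)
    (f := gfun) ?_
  · exact this.antitoneOn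
  · intro y hy
    rw [interior_Ioo] at hy
    have hy0 : 0 < y := hy.1
    have hy1 : y < 1 := by linarith [hy.2]
    have hy1' : 0 < 1 - y := by linarith
    rw [(hasDerivAt_gfun hy0 hy1).deriv]
    have e : 1 / y + 1 / (1 - y) = 1 / (y * (1 - y)) := by field_simp; ring
    have hp : 0 < y * (1 - y) := mul_pos hy0 hy1'
    have key : 8 * Real.log 2 * (y * (1 - y)) < 1 := by
      rw [← hcc]
      have h1 : 0 < cst - y := by linarith [hy.2]
      have h2 : 0 < 1 - cst - y := by linarith [hy.2]
      nlinarith [mul_pos (mul_pos h1 h2) (by linarith [log2_pos] : (0:ℝ) < 8 * Real.log 2)]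
    rw [e, sub_neg, lt_div_iff₀ hp]
    linarith

lemma Gfun_concave : ConcaveOn ℝ (Icc 0 cst) Gfun := by
  obtain ⟨hc0, hc12, hcc⟩ := cst_facts
  apply AntitoneOn.concaveOn_of_deriv (convex_Icc _ _)
    (show ContinuousOn Gfun (Icc 0 cst) from
      (Real.binEntropy_continuous.sub (by continuity)).continuousOn)
  · rw [interior_Icc]
    intro y hy
    exact (hasDerivAt_Gfun hy.1.ne' (by linarith [hy.2])).differentiableAt.differentiableWithinAt
  · rw [interior_Icc]
    intro a ha b hb hab
    rw [(hasDerivAt_Gfun ha.1.ne' (by linarith [ha.2])).deriv,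
        (hasDerivAt_Gfun hb.1.ne' (by linarith [hb.2])).deriv]
    exact gfun_anti ha hb hab

theorem Gfun_nonneg : ∀ x ∈ Icc (0:ℝ) (1/2), 0 ≤ Gfun x := by
  obtain ⟨hc0, hc12, hcc⟩ := cst_facts
  intro x hx
  rcases le_or_gt x cst with h | h
  · have hx0 := hx.1
    have hb : (0:ℝ) ≤ x / cst := by positivity
    have ha : (0:ℝ) ≤ 1 - x / cst := by
      rw [sub_nonneg, div_le_one hc0]; exact h
    have hab : (1 - x / cst) + x / cst = 1 := by ring
    have hcon := Gfun_concave.2 (x := (0:ℝ)) (y := cst)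
      ⟨le_refl 0, hc0.le⟩ ⟨hc0.le, le_refl _⟩ ha hb hab
    have hx' : (1 - x / cst) • (0:ℝ) + (x / cst) • cst = x := by
      rw [smul_eq_mul, smul_eq_mul]
      field_simp; ring
    rw [hx', Gfun_zero, smul_eq_mul, smul_eq_mul, mul_zero, zero_add] at hcon
    have hGc : 0 ≤ Gfun cst := Gfun_nonneg2 cst ⟨le_refl _, hc12.le⟩
    nlinarith [hcon, hGc, hb]
  · exact Gfun_nonneg2 x ⟨h.le, hx.2⟩

/-- For all `x ∈ [0, 1/2]`, the binary entropy satisfies `h2(x) ≥ 1 - (1-2x)^2`. -/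
theorem binary_entropy_lower_bound :
    ∀ x ∈ Set.Icc (0:ℝ) (1/2), 1 - (1 - 2*x)^2 ≤ h2 x := by
  intro x hx
  have hG := Gfun_nonneg x hx
  have hL := log2_pos
  have hh : h2 x = Real.binEntropy x / Real.log 2 := by
    unfold h2 Real.binEntropy Real.logb
    rw [Real.log_inv, Real.log_inv]
    ring
  rw [hh, le_div_iff₀ hL]
  unfold Gfun at hG
  nlinarith [hG]
end

section
/- For all x in [0, 1/2], the binary entropy function satisfies h2(x) <= 2*sqrt(x*(1-x)). -/
set_option maxHeartbeats 1000000



noncomputable def gE (x : ℝ) : ℝ := 2 * Real.log 2 * Real.sqrt (x*(1-x)) - Real.binEntropy x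
noncomputable def gE' (x : ℝ) : ℝ :=
  Real.log 2 * (1-2*x) / Real.sqrt (x*(1-x)) - Real.log (1-x) + Real.log x
noncomputable def gE'' (x : ℝ) : ℝ :=
  1/(1-x) + 1/x - Real.log 2 / (2*(x*(1-x))*Real.sqrt (x*(1-x)))

lemma hasDerivAt_gE {x : ℝ} (h0 : 0 < x) (h1 : x < 1) : HasDerivAt gE (gE' x) x := by
  have hu : HasDerivAt (fun x : ℝ => x*(1-x)) (1-2*x) x := by
    have := (hasDerivAt_id x).mul ((hasDerivAt_const x (1:ℝ)).sub (hasDerivAt_id x))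
    simp only [id] at this
    (convert this using 1 <;> try rfl); simp only [Pi.sub_apply, id]; ring
  have hs : 0 < x*(1-x) := by nlinarith
  have hr : Real.sqrt (x*(1-x)) ≠ 0 := (Real.sqrt_pos.mpr hs).ne'
  have hsq : HasDerivAt (fun x : ℝ => Real.sqrt (x*(1-x)))
      (1/(2*Real.sqrt (x*(1-x))) * (1-2*x)) x :=
    (Real.hasDerivAt_sqrt hs.ne').comp x hu
  have hb := Real.hasDerivAt_binEntropy h0.ne' (by linarith : x ≠ 1)
  have h := (hsq.const_mul (2*Real.log 2)).sub hb
  (convert h using 1 <;> try rfl)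
  unfold gE'
  field_simp
  ring

lemma hasDerivAt_gE' {x : ℝ} (h0 : 0 < x) (h1 : x < 1) : HasDerivAt gE' (gE'' x) x := by
  have hu : HasDerivAt (fun x : ℝ => x*(1-x)) (1-2*x) x := by
    have := (hasDerivAt_id x).mul ((hasDerivAt_const x (1:ℝ)).sub (hasDerivAt_id x))
    simp only [id] at this
    (convert this using 1 <;> try rfl); simp only [Pi.sub_apply, id]; ring
  have hs : 0 < x*(1-x) := by nlinarith
  have hrpos : 0 < Real.sqrt (x*(1-x)) := Real.sqrt_pos.mpr hs
  have hr : Real.sqrt (x*(1-x)) ≠ 0 := hrpos.ne'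
  have hr2 : Real.sqrt (x*(1-x)) ^ 2 = x*(1-x) := Real.sq_sqrt hs.le
  have hx1 : (1:ℝ) - x ≠ 0 := by linarith
  have hsq : HasDerivAt (fun x : ℝ => Real.sqrt (x*(1-x)))
      (1/(2*Real.sqrt (x*(1-x))) * (1-2*x)) x :=
    (Real.hasDerivAt_sqrt hs.ne').comp x hu
  have hnum : HasDerivAt (fun x : ℝ => Real.log 2 * (1-2*x)) (Real.log 2 * (-2)) x := by
    have := ((hasDerivAt_const x (1:ℝ)).sub ((hasDerivAt_id x).const_mul 2)).const_mul (Real.log 2)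
    simp only [id] at this
    (convert this using 1 <;> try rfl); ring
  have hdiv := hnum.div hsq hr
  have hlog1 : HasDerivAt (fun x : ℝ => Real.log (1-x)) (-(1/(1-x))) x := by
    have := (Real.hasDerivAt_log hx1).comp x
      ((hasDerivAt_const x (1:ℝ)).sub (hasDerivAt_id x))
    simp only [zero_sub] at this
    (convert this using 1 <;> try rfl)
    field_simp
  have hlogx : HasDerivAt Real.log x⁻¹ x := Real.hasDerivAt_log h0.ne'
  have h := (hdiv.sub hlog1).add hlogx
  (convert h using 1 <;> try rfl)
  unfold gE''
  set r := Real.sqrt (x*(1-x)) with hrdef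
  field_simp
  linear_combination (Real.log 2 * (4*x*(1-x) - 1)) * hr2

lemma gE_half : gE (1/2) = 0 := by
  have h4 : Real.sqrt ((1:ℝ)/2*(1-1/2)) = 1/2 := by
    rw [show (1:ℝ)/2*(1-1/2) = (1/2)^2 by norm_num, Real.sqrt_sq (by norm_num)]
  have hb : Real.binEntropy (1/2) = Real.log 2 := by
    rw [show (1:ℝ)/2 = 2⁻¹ by norm_num, Real.binEntropy_two_inv]
  unfold gE
  rw [h4, hb]; ring

lemma gE'_half : gE' (1/2) = 0 := by
  unfold gE'
  norm_num

lemma binEntropy_zero' : gE 0 = 0 := by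
  unfold gE
  simp

/-- For all `x ∈ [0, 1/2]`, the binary entropy satisfies `h2(x) ≤ 2√(x(1-x))`. -/
theorem binary_entropy_upper_bound_sqrt :
    ∀ x ∈ Set.Icc (0:ℝ) (1/2), h2 x ≤ 2 * Real.sqrt (x * (1 - x)) := by
  have hc0 : 0 < Real.log 2 := Real.log_pos (by norm_num)
  have hc1 : Real.log 2 < 1 := by
    have := Real.log_two_lt_d9; linarith
  set c := Real.log 2 with hcdef
  set s := Real.sqrt (1 - c^2) with hsdef
  have hs2 : s^2 = 1 - c^2 := Real.sq_sqrt (by nlinarith)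
  have hs0 : 0 < s := Real.sqrt_pos.mpr (by nlinarith)
  have hs1 : s < 1 := by
    nlinarith [hs2, hs0]
  set x₀ : ℝ := (1 - s)/2 with hx₀def
  have hx₀0 : 0 < x₀ := by unfold x₀; linarith
  have hx₀h : x₀ < 1/2 := by unfold x₀; linarith
  have hx₀key : x₀ * (1 - x₀) = c^2/4 := by
    unfold x₀; nlinarith [hs2]
  -- gE'' ≥ 0 on (x₀, 1/2)
  have hgpp_nonneg : ∀ x ∈ Set.Ioo x₀ (1/2), 0 ≤ gE'' x := by
    rintro x ⟨hxl, hxr⟩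
    have hx0 : 0 < x := lt_trans hx₀0 hxl
    have hx1 : x < 1 := by linarith
    have hu : c^2/4 ≤ x*(1-x) := by nlinarith
    have hup : 0 < x*(1-x) := by nlinarith
    have hrge : c/2 ≤ Real.sqrt (x*(1-x)) := by
      have : Real.sqrt (c^2/4) ≤ Real.sqrt (x*(1-x)) := Real.sqrt_le_sqrt hu
      rwa [show c^2/4 = (c/2)^2 by ring, Real.sqrt_sq (by positivity)] at this
    have hrpos : 0 < Real.sqrt (x*(1-x)) := Real.sqrt_pos.mpr hup
    unfold gE''
    have h1x : (0:ℝ) < 1 - x := by linarith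
    have hsum : 1/(1-x) + 1/x = 1/(x*(1-x)) := by field_simp; ring
    rw [hsum, sub_nonneg, div_le_div_iff₀ (by positivity) (by positivity)]
    nlinarith [hrpos]
  -- gE'' ≤ 0 on (0, x₀)
  have hgpp_nonpos : ∀ x ∈ Set.Ioo 0 x₀, gE'' x ≤ 0 := by
    rintro x ⟨hxl, hxr⟩
    have hx1 : x < 1 := by linarith
    have hu : x*(1-x) ≤ c^2/4 := by nlinarith
    have hup : 0 < x*(1-x) := by nlinarith
    have hrle : Real.sqrt (x*(1-x)) ≤ c/2 := by
      have : Real.sqrt (x*(1-x)) ≤ Real.sqrt (c^2/4) := Real.sqrt_le_sqrt hu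
      rwa [show c^2/4 = (c/2)^2 by ring, Real.sqrt_sq (by positivity)] at this
    have hrpos : 0 < Real.sqrt (x*(1-x)) := Real.sqrt_pos.mpr hup
    unfold gE''
    have h1x : (0:ℝ) < 1 - x := by linarith
    have hsum : 1/(1-x) + 1/x = 1/(x*(1-x)) := by field_simp; ring
    rw [hsum, sub_nonpos, div_le_div_iff₀ (by positivity) (by positivity)]
    nlinarith [hrpos]
  -- gE' is monotone on [x₀, 1/2]
  have hmono : MonotoneOn gE' (Set.Icc x₀ (1/2)) := by
    apply monotoneOn_of_hasDerivWithinAt_nonneg (f' := gE'') (convex_Icc _ _)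
    · intro x hx
      exact ((hasDerivAt_gE' (lt_of_lt_of_le hx₀0 hx.1) (by linarith [hx.2])).differentiableAt).continuousAt.continuousWithinAt
    · intro x hx
      rw [interior_Icc] at hx
      exact (hasDerivAt_gE' (lt_trans hx₀0 hx.1) (by linarith [hx.2])).hasDerivWithinAt
    · intro x hx
      rw [interior_Icc] at hx
      exact hgpp_nonneg x hx
  -- gE is antitone on [x₀, 1/2]
  have hanti : AntitoneOn gE (Set.Icc x₀ (1/2)) := by
    apply antitoneOn_of_hasDerivWithinAt_nonpos (f' := gE') (convex_Icc _ _)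
    · intro x hx
      exact ((hasDerivAt_gE (lt_of_lt_of_le hx₀0 hx.1) (by linarith [hx.2])).differentiableAt).continuousAt.continuousWithinAt
    · intro x hx
      rw [interior_Icc] at hx
      exact (hasDerivAt_gE (lt_trans hx₀0 hx.1) (by linarith [hx.2])).hasDerivWithinAt
    · intro x hx
      rw [interior_Icc] at hx
      have := hmono (Set.mem_Icc.mpr ⟨hx.1.le, hx.2.le⟩)
        (Set.mem_Icc.mpr ⟨hx₀h.le, le_refl _⟩) hx.2.le
      rw [gE'_half] at this
      exact this
  -- gE ≥ 0 on [x₀, 1/2]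
  have hge_right : ∀ x ∈ Set.Icc x₀ (1/2), 0 ≤ gE x := by
    intro x hx
    have := hanti hx (Set.mem_Icc.mpr ⟨hx₀h.le, le_refl _⟩) hx.2
    rw [gE_half] at this
    exact this
  -- gE is concave on [0, x₀]
  have hconc : ConcaveOn ℝ (Set.Icc 0 x₀) gE := by
    apply concaveOn_of_hasDerivWithinAt2_nonpos (f' := gE') (f'' := gE'') (convex_Icc _ _)
    · have : Continuous gE := by
        unfold gE
        exact ((continuous_const.mul ((continuous_id.mul
          (continuous_const.sub continuous_id)).sqrt))).sub Real.binEntropy_continuous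
      exact this.continuousOn
    · intro x hx
      rw [interior_Icc] at hx
      exact (hasDerivAt_gE hx.1 (by linarith [hx.2, hx₀h])).hasDerivWithinAt
    · intro x hx
      rw [interior_Icc] at hx
      exact (hasDerivAt_gE' hx.1 (by linarith [hx.2, hx₀h])).hasDerivWithinAt
    · intro x hx
      rw [interior_Icc] at hx
      exact hgpp_nonpos x hx
  -- gE ≥ 0 on [0, x₀]
  have hge_left : ∀ x ∈ Set.Icc 0 x₀, 0 ≤ gE x := by
    rintro x ⟨hxl, hxr⟩
    have ht0 : 0 ≤ x / x₀ := by positivity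
    have ht1 : x / x₀ ≤ 1 := by
      rw [div_le_one hx₀0]; exact hxr
    have := hconc.2 (Set.mem_Icc.mpr ⟨le_refl (0:ℝ), hx₀0.le⟩)
      (Set.mem_Icc.mpr ⟨hx₀0.le, le_refl x₀⟩)
      (by linarith : (0:ℝ) ≤ 1 - x/x₀) ht0 (by ring)
    simp only [smul_eq_mul, mul_zero, zero_add] at this
    have hx₀mem : x₀ ∈ Set.Icc x₀ (1/2) := Set.mem_Icc.mpr ⟨le_refl _, hx₀h.le⟩
    have h0' : gE 0 = 0 := binEntropy_zero'
    rw [h0'] at this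
    have hxeq : x / x₀ * x₀ = x := by field_simp
    rw [hxeq] at this
    have := le_trans (by nlinarith [hge_right x₀ hx₀mem] : (0:ℝ) ≤ (1 - x/x₀) * 0 + x/x₀ * gE x₀) this
    linarith [this]
  -- conclude
  intro x hx
  obtain ⟨hx0, hx12⟩ := hx
  have hge : 0 ≤ gE x := by
    rcases le_total x x₀ with h | h
    · exact hge_left x (Set.mem_Icc.mpr ⟨hx0, h⟩)
    · exact hge_right x (Set.mem_Icc.mpr ⟨h, hx12⟩)
  have hh : h2 x * c = Real.binEntropy x := by
    unfold h2 Real.binEntropy Real.logb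
    rw [Real.log_inv, Real.log_inv]
    field_simp
    ring
  unfold gE at hge
  rw [← mul_le_mul_iff_left₀ hc0, hh]
  linarith [hge]
end

section
/- For all x in [0, 1/2], the binary entropy function satisfies h2(x) <= (11/4)*x^(3/4). -/
private lemma aux_t (t : ℝ) (ht : 0 < t) :
    t - 4 * t * Real.log t ≤ 4 * Real.exp (-(3/4 : ℝ)) := by
  have hep : (0:ℝ) < Real.exp (-(3/4 : ℝ)) := Real.exp_pos _
  have h := Real.log_le_sub_one_of_pos (div_pos hep ht)
  rw [Real.log_div (Real.exp_ne_zero _) ht.ne', Real.log_exp] at h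
  have h2 : t * (-(3/4 : ℝ) - Real.log t) ≤ Real.exp (-(3/4 : ℝ)) - t := by
    have := mul_le_mul_of_nonneg_left h ht.le
    have hne : t ≠ 0 := ht.ne'
    calc t * (-(3/4 : ℝ) - Real.log t) ≤ t * (Real.exp (-(3/4:ℝ)) / t - 1) := this
      _ = Real.exp (-(3/4:ℝ)) - t := by field_simp
  nlinarith

private lemma key_ineq (x : ℝ) (hx : 0 < x) :
    x - x * Real.log x ≤ 4 * Real.exp (-(3/4 : ℝ)) * x ^ ((3:ℝ)/4) := by
  set t := x ^ ((1:ℝ)/4) with hts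
  have ht : 0 < t := Real.rpow_pos_of_pos hx _
  have hmul : x ^ ((3:ℝ)/4) * t = x := by
    rw [hts, ← Real.rpow_add hx]; norm_num
  have hlog : Real.log x = 4 * Real.log t := by
    rw [hts, Real.log_rpow hx]; ring
  have h34 : 0 < x ^ ((3:ℝ)/4) := Real.rpow_pos_of_pos hx _
  have := aux_t t ht
  calc x - x * Real.log x = x ^ ((3:ℝ)/4) * (t - 4 * t * Real.log t) := by
        rw [hlog]; linear_combination (4 * Real.log t - 1) * hmul
    _ ≤ x ^ ((3:ℝ)/4) * (4 * Real.exp (-(3/4 : ℝ))) :=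
        mul_le_mul_of_nonneg_left this h34.le
    _ = 4 * Real.exp (-(3/4 : ℝ)) * x ^ ((3:ℝ)/4) := by ring

private lemma second_term (x : ℝ) (hx0 : 0 ≤ x) (hx1 : x < 1) :
    -((1 - x) * Real.log (1 - x)) ≤ x := by
  have h1 : 0 < 1 - x := by linarith
  have h := Real.log_le_sub_one_of_pos (show (0:ℝ) < (1-x)⁻¹ by positivity)
  rw [Real.log_inv] at h
  -- h : -log (1-x) ≤ (1-x)⁻¹ - 1
  have := mul_le_mul_of_nonneg_left h h1.le
  have heq : (1 - x) * ((1-x)⁻¹ - 1) = x := by field_simp; ring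
  nlinarith

private lemma exp34 : (2.1 : ℝ) ≤ Real.exp ((3:ℝ)/4) := by
  have he : (2.7182818283 : ℝ) < Real.exp 1 := Real.exp_one_gt_d9
  have h3 : (19.4481 : ℝ) < Real.exp 3 := by
    have h1 : (2.7182818283 : ℝ) ^ 3 < (Real.exp 1) ^ 3 :=
      pow_lt_pow_left₀ he (by norm_num) (by norm_num)
    have h2 : Real.exp 3 = (Real.exp 1) ^ 3 := by
      rw [← Real.exp_nat_mul]; norm_num
    rw [h2]; nlinarith
  have h4 : Real.exp 3 = (Real.exp ((3:ℝ)/4)) ^ 4 := by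
    rw [← Real.exp_nat_mul]; norm_num
  have h5 : (2.1 : ℝ) ^ 4 ≤ (Real.exp ((3:ℝ)/4)) ^ 4 := by
    rw [← h4]; nlinarith
  exact le_of_pow_le_pow_left₀ (by norm_num) (Real.exp_pos _).le h5

/-- For all `x ∈ [0, 1/2]`, the binary entropy satisfies `h2(x) ≤ (11/4) x^(3/4)`. -/
theorem binary_entropy_upper_bound_rpow :
    ∀ x ∈ Set.Icc (0:ℝ) (1/2), h2 x ≤ (11/4) * x ^ ((3:ℝ)/4) := by
  rintro x ⟨hx0, hx2⟩
  rcases eq_or_lt_of_le hx0 with rfl | hx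
  · rw [Real.zero_rpow (by norm_num)]
    simp [h2]
  have hx1 : x < 1 := by linarith
  have hlog2 : (0.6931471803 : ℝ) < Real.log 2 := Real.log_two_gt_d9
  have hlog2' : (0:ℝ) < Real.log 2 := by linarith
  have h34 : 0 < x ^ ((3:ℝ)/4) := Real.rpow_pos_of_pos hx _
  have hh2 : h2 x = (-(x * Real.log x) - (1 - x) * Real.log (1 - x)) / Real.log 2 := by
    unfold h2 Real.logb; ring
  have hbin : -(x * Real.log x) - (1 - x) * Real.log (1 - x) ≤ x - x * Real.log x := by
    have := second_term x hx0 hx1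
    linarith
  have hkey := key_ineq x hx
  -- exp(-(3/4)) ≤ 1/2.1
  have hexp : Real.exp (-(3/4:ℝ)) ≤ 1 / 2.1 := by
    have h := exp34
    have hpos : (0:ℝ) < Real.exp ((3:ℝ)/4) := Real.exp_pos _
    rw [Real.exp_neg]
    calc (Real.exp ((3:ℝ)/4))⁻¹ ≤ (2.1:ℝ)⁻¹ := inv_anti₀ (by norm_num) h
      _ = 1/2.1 := by norm_num
  have hchain : -(x * Real.log x) - (1 - x) * Real.log (1 - x)
      ≤ 4 * (1/2.1) * x ^ ((3:ℝ)/4) := by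
    have : 4 * Real.exp (-(3/4:ℝ)) * x ^ ((3:ℝ)/4) ≤ 4 * (1/2.1) * x ^ ((3:ℝ)/4) := by
      nlinarith
    linarith
  rw [hh2, div_le_iff₀ hlog2']
  have : (4 : ℝ) * (1/2.1) * x ^ ((3:ℝ)/4) ≤ 11/4 * x ^ ((3:ℝ)/4) * Real.log 2 := by
    nlinarith
  linarith
end

section
/- For all x in [0, 1/2], h2(x) >= 1 - (2/ln 2)*(x - 1/2)^2 - 8*(x-1/2)^4/(ln(2)*(1 - 4*(x-1/2)^2)) (where for x strictly in (0,1/2] the denominator is positive). -/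
private noncomputable def fAux (t : ℝ) : ℝ :=
  2*t + t^3/(1-t^2) - (Real.log (1+t) - Real.log (1-t))

private lemma fAux_hasDeriv {t : ℝ} (ht : t ∈ Set.Ioo (-1:ℝ) 1) :
    HasDerivAt fAux ((t^4+t^2)/(1-t^2)^2) t := by
  obtain ⟨ht1, ht2⟩ := ht
  have h1 : (0:ℝ) < 1 + t := by linarith
  have h2 : (0:ℝ) < 1 - t := by linarith
  have hD : (1:ℝ) - t^2 ≠ 0 := by nlinarith
  have d1 : HasDerivAt (fun t : ℝ => t^3/(1-t^2))
      ((3*t^2*(1-t^2) - t^3*(0 - 2*t))/(1-t^2)^2) t := by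
    exact HasDerivAt.div (by simpa using hasDerivAt_pow 3 t)
      (by simpa using (hasDerivAt_pow 2 t).const_sub 1) hD
  have d2 : HasDerivAt (fun t : ℝ => Real.log (1+t)) ((1+t)⁻¹ * 1) t :=
    (Real.hasDerivAt_log (ne_of_gt h1)).comp t ((hasDerivAt_id t).const_add 1)
  have d3 : HasDerivAt (fun t : ℝ => Real.log (1-t)) ((1-t)⁻¹ * (-1)) t :=
    (Real.hasDerivAt_log (ne_of_gt h2)).comp t ((hasDerivAt_id t).const_sub 1)
  have := ((hasDerivAt_id t).const_mul 2 |>.add d1).sub (d2.sub d3)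
  convert this using 1 <;> try rfl
  field_simp
  ring

private lemma logdiff_le {s : ℝ} (h0 : 0 ≤ s) (h1 : s < 1) :
    Real.log (1+s) - Real.log (1-s) ≤ 2*s + s^3/(1-s^2) := by
  have hsub : Set.Icc (0:ℝ) s ⊆ Set.Ioo (-1:ℝ) 1 := fun t ht =>
    ⟨by linarith [ht.1], by linarith [ht.2]⟩
  have hmono : MonotoneOn fAux (Set.Icc 0 s) := by
    apply monotoneOn_of_deriv_nonneg (convex_Icc 0 s)
    · exact fun t ht => (fAux_hasDeriv (hsub ht)).differentiableAt.continuousAt.continuousWithinAt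
    · intro t ht
      rw [interior_Icc] at ht
      exact (fAux_hasDeriv (hsub (Set.Ioo_subset_Icc_self ht))).differentiableAt.differentiableWithinAt
    · intro t ht
      rw [interior_Icc] at ht
      rw [(fAux_hasDeriv (hsub (Set.Ioo_subset_Icc_self ht))).deriv]
      have : (0:ℝ) < 1 - t^2 := by nlinarith [ht.1, ht.2, h1]
      positivity
  have h00 : fAux 0 = 0 := by simp [fAux]
  have := hmono (Set.left_mem_Icc.2 h0) (Set.right_mem_Icc.2 h0) h0
  rw [h00] at this
  unfold fAux at this
  linarith

/-- For `x ∈ (0, 1/2]` (so that the denominator `1 - 4(x-1/2)^2` is positive),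
`h2(x) ≥ 1 - (2/ln 2)(x-1/2)^2 - 8(x-1/2)^4/(ln 2 · (1 - 4(x-1/2)^2))`. -/
theorem binary_entropy_taylor_lower_bound :
    ∀ x ∈ Set.Ioc (0:ℝ) (1/2),
      1 - (2 / Real.log 2) * (x - 1/2)^2
        - 8 * (x - 1/2)^4 / (Real.log 2 * (1 - 4 * (x - 1/2)^2)) ≤ h2 x := by
  intro x hx
  obtain ⟨hx0, hxh⟩ := hx
  obtain ⟨s, rfl⟩ : ∃ s : ℝ, x = (1-s)/2 := ⟨1 - 2*x, by ring⟩
  have hs0 : 0 ≤ s := by linarith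
  have hs1 : s < 1 := by linarith
  have hL : (0:ℝ) < Real.log 2 := Real.log_pos (by norm_num)
  have hD : (0:ℝ) < 1 - s^2 := by nlinarith
  set L := Real.log 2 with hLdef
  set a := Real.log (1-s) with ha
  set b := Real.log (1+s) with hb
  -- key facts
  have hlogprod : a + b ≤ -s^2 := by
    have h1s : (0:ℝ) < 1 - s := by linarith
    have h1p : (0:ℝ) < 1 + s := by linarith
    have := Real.log_le_sub_one_of_pos (mul_pos h1s h1p)
    rw [Real.log_mul (ne_of_gt h1s) (ne_of_gt h1p)] at this
    nlinarith
  have hdiff : b - a ≤ 2*s + s^3/(1-s^2) := logdiff_le hs0 hs1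
  have hmul : s*(b - a) ≤ 2*s^2 + s^4/(1-s^2) := by
    have := mul_le_mul_of_nonneg_left hdiff hs0
    have he : s * (2*s + s^3/(1-s^2)) = 2*s^2 + s^4/(1-s^2) := by
      field_simp
    linarith [he ▸ this]
  have key : (1-s)*a + (1+s)*b ≤ s^2 + s^4/(1-s^2) := by nlinarith
  -- rewrite h2
  have hx2 : (1:ℝ) - (1-s)/2 = (1+s)/2 := by ring
  have hlogx : Real.log ((1-s)/2) = a - L := by
    rw [Real.log_div (by linarith) (by norm_num), ha, hLdef]
  have hlog1x : Real.log ((1+s)/2) = b - L := by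
    rw [Real.log_div (by linarith) (by norm_num), hb, hLdef]
  have hh2 : h2 ((1-s)/2) = (L - ((1-s)*a + (1+s)*b)/2) / L := by
    rw [h2, Real.logb, Real.logb, hx2, hlogx, hlog1x]
    field_simp
    ring
  rw [hh2, le_div_iff₀ hL]
  have he1 : ((1-s)/2 - 1/2)^2 = s^2/4 := by ring
  have he2 : ((1-s)/2 - 1/2)^4 = s^4/16 := by ring
  have he3 : 1 - 4*((1-s)/2 - 1/2)^2 = 1 - s^2 := by ring
  rw [he3, he1, he2]
  have hclear : (1 - 2 / L * (s^2/4) - 8 * (s^4/16) / (L * (1 - s^2))) * L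
      = L - s^2/2 - (s^4/(1-s^2))/2 := by
    field_simp
    ring
  rw [hclear]
  linarith
end

section
/- Let mu, nu be probability measures on [0,1] with CDFs F, G. Suppose for all z in [0,1], integral from z to 1 of F(x) dx <= integral from z to 1 of G(x) dx (i.e., mu is degraded with respect to nu in the |D|-domain). Define D(mu,nu) = integral from 0 to 1 of x*(G(x)-F(x)) dx. Then D(mu,nu) >= d(mu,nu)^2 / 4, where d is the Wasserstein-1 distance (the L1 distance of CDFs). -/
open MeasureTheory

/-- Cumulative distribution function of a measure on `ℝ`. -/
noncomputable def cdf (μ : Measure ℝ) (x : ℝ) : ℝ := (μ (Set.Iic x)).toReal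

/-- The Wasserstein-1 distance between measures on `[0,1]`,
expressed as the `L¹` distance of their CDFs. -/
noncomputable def W1 (μ ν : Measure ℝ) : ℝ := ∫ x in (0:ℝ)..1, |cdf μ x - cdf ν x|

open Set
open scoped ENNReal

namespace DegProof

variable {m μ ν : Measure ℝ}

set_option linter.unusedSectionVars false
set_option linter.unusedVariables false

lemma cdf_nonneg (m : Measure ℝ) (x : ℝ) : 0 ≤ cdf m x := ENNReal.toReal_nonneg

lemma cdf_le_one [IsProbabilityMeasure m] (x : ℝ) : cdf m x ≤ 1 := by
  unfold cdf
  have h1 : (m (Set.Iic x)) ≤ 1 := prob_le_one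
  calc (m (Set.Iic x)).toReal ≤ (1 : ℝ≥0∞).toReal :=
        ENNReal.toReal_mono (by simp) h1
    _ = 1 := by simp

lemma cdf_mono [IsFiniteMeasure m] : Monotone (cdf m) := by
  intro a b hab
  exact ENNReal.toReal_mono (measure_ne_top m _) (measure_mono (Set.Iic_subset_Iic.2 hab))

lemma cdf_measurable [IsFiniteMeasure m] : Measurable (cdf m) :=
  (cdf_mono (m := m)).measurable

lemma measure_Icc_eq_one [IsProbabilityMeasure m] (hm : m (Set.Icc (0:ℝ) 1)ᶜ = 0) :
    m (Set.Icc (0:ℝ) 1) = 1 := by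
  have := measure_add_measure_compl (μ := m) (s := Set.Icc (0:ℝ) 1) measurableSet_Icc
  rw [hm, add_zero] at this
  simpa using this

lemma cdf_eq_one [IsProbabilityMeasure m] (hm : m (Set.Icc (0:ℝ) 1)ᶜ = 0)
    {x : ℝ} (hx : 1 ≤ x) : cdf m x = 1 := by
  have h1 : m (Set.Iic x) = 1 := by
    have hsub : Set.Icc (0:ℝ) 1 ⊆ Set.Iic x := fun y hy => le_trans hy.2 hx
    have := measure_mono (μ := m) hsub
    rw [measure_Icc_eq_one hm] at this
    exact le_antisymm (prob_le_one) this
  unfold cdf; rw [h1]; simp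

lemma cdf_eq_zero [IsProbabilityMeasure m] (hm : m (Set.Icc (0:ℝ) 1)ᶜ = 0)
    {x : ℝ} (hx : x < 0) : cdf m x = 0 := by
  have h1 : m (Set.Iic x) = 0 := by
    have hsub : Set.Iic x ⊆ (Set.Icc (0:ℝ) 1)ᶜ := by
      intro y hy
      simp only [Set.mem_compl_iff, Set.mem_Icc, not_and_or, not_le]
      left; exact lt_of_le_of_lt hy hx
    exact le_antisymm (le_trans (measure_mono hsub) (le_of_eq hm)) bot_le
  unfold cdf; rw [h1]; simp

/-- right continuity style fact: `cdf m (sInf S) ≥ v` if every neighborhood to the right meets S -/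
lemma cdf_right_lim [IsProbabilityMeasure m] {s : ℝ} :
    Filter.Tendsto (fun n : ℕ => cdf m (s + 1/(n+1))) Filter.atTop (nhds (cdf m s)) := by
  have hmeas : ∀ n : ℕ, MeasurableSet (Set.Iic (s + 1/((n:ℝ)+1))) := fun n => measurableSet_Iic
  have hanti : Antitone (fun n : ℕ => Set.Iic (s + 1/((n:ℝ)+1))) := by
    intro a b hab
    apply Set.Iic_subset_Iic.2
    have : (1:ℝ)/((b:ℝ)+1) ≤ 1/((a:ℝ)+1) := by
      apply one_div_le_one_div_of_le
      · positivity
      · exact_mod_cast add_le_add_left (Nat.cast_le.2 hab) 1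
    linarith
  have hint : (⋂ n : ℕ, Set.Iic (s + 1/((n:ℝ)+1))) = Set.Iic s := by
    ext y
    simp only [Set.mem_iInter, Set.mem_Iic]
    constructor
    · intro h
      by_contra hy
      push_neg at hy
      obtain ⟨n, hn⟩ := exists_nat_one_div_lt (show (0:ℝ) < y - s by linarith)
      have := h n
      linarith
    · intro h n
      have : (0:ℝ) < 1/((n:ℝ)+1) := by positivity
      linarith
  have htend := MeasureTheory.tendsto_measure_iInter_atTop (μ := m) (fun n => (hmeas n).nullMeasurableSet) hanti ⟨0, measure_ne_top _ _⟩
  rw [hint] at htend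
  have := (ENNReal.tendsto_toReal (measure_ne_top m (Set.Iic s))).comp htend
  exact this


/-- (generalized inverse) quantile function -/
noncomputable def qf (m : Measure ℝ) (v : ℝ) : ℝ := sInf {x | min v 1 ≤ cdf m x}

section q
variable [IsProbabilityMeasure m] (hm : m (Set.Icc (0:ℝ) 1)ᶜ = 0)
include hm

lemma qf_set_nonempty (v : ℝ) : {x | min v 1 ≤ cdf m x}.Nonempty :=
  ⟨1, by simp [cdf_eq_one hm le_rfl, min_le_right v 1]⟩

lemma qf_set_bddBelow {v : ℝ} (hv : 0 < v) : BddBelow {x | min v 1 ≤ cdf m x} := by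
  refine ⟨0, fun x hx => ?_⟩
  by_contra hx0
  push_neg at hx0
  have := cdf_eq_zero hm hx0
  have hv1 : (0:ℝ) < min v 1 := lt_min hv one_pos
  simp only [Set.mem_setOf_eq, this] at hx
  linarith

lemma qf_nonneg {v : ℝ} (hv : 0 < v) : 0 ≤ qf m v :=
  le_csInf (qf_set_nonempty hm v) (by
    intro x hx
    by_contra hx0
    push_neg at hx0
    have := cdf_eq_zero hm hx0
    have hv1 : (0:ℝ) < min v 1 := lt_min hv one_pos
    simp only [Set.mem_setOf_eq, this] at hx
    linarith)

lemma qf_le_one {v : ℝ} : qf m v ≤ 1 := by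
  unfold qf
  by_cases hb : BddBelow {x | min v 1 ≤ cdf m x}
  · exact csInf_le hb (by simp [cdf_eq_one hm le_rfl, min_le_right v 1])
  · rw [Real.sInf_of_not_bddBelow hb]; exact zero_le_one

/-- cdf at the infimum is still ≥ v : right continuity -/
lemma cdf_qf_ge {v : ℝ} (hv : 0 < v) : min v 1 ≤ cdf m (qf m v) := by
  set s := qf m v with hs
  have key : ∀ n : ℕ, min v 1 ≤ cdf m (s + 1/(n+1)) := by
    intro n
    have hpos : (0:ℝ) < 1/((n:ℝ)+1) := by positivity
    obtain ⟨t, ht, htlt⟩ := (csInf_lt_iff (qf_set_bddBelow hm hv) (qf_set_nonempty hm v)).1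
      (show sInf {x | min v 1 ≤ cdf m x} < s + 1/(n+1) by show qf m v < s + 1/(n+1); linarith)
    exact le_trans ht (cdf_mono (le_of_lt htlt))
  exact ge_of_tendsto' (cdf_right_lim (m := m) (s := s)) key

/-- Galois connection -/
lemma qf_le_iff {v x : ℝ} (hv : 0 < v) (hv1 : v ≤ 1) : qf m v ≤ x ↔ v ≤ cdf m x := by
  have hmin : min v 1 = v := min_eq_left hv1
  constructor
  · intro h
    have := cdf_qf_ge hm hv
    rw [hmin] at this
    exact this.trans (cdf_mono h)
  · intro h
    exact csInf_le (qf_set_bddBelow hm hv) (by simp [hmin, h])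

lemma lt_qf_iff {v x : ℝ} (hv : 0 < v) (hv1 : v ≤ 1) : x < qf m v ↔ cdf m x < v := by
  rw [← not_le, ← not_le, qf_le_iff hm hv hv1]

lemma qf_monotone : Monotone (qf m) := by
  intro a b hab
  by_cases hb : BddBelow {x | min a 1 ≤ cdf m x}
  · apply csInf_le_csInf hb (qf_set_nonempty hm b)
    intro x hx
    exact le_trans (min_le_min_right 1 hab) hx
  · -- then sInf = 0 and qf m b ≥ 0 or also not bdd
    unfold qf
    rw [Real.sInf_of_not_bddBelow hb]
    by_cases hb2 : BddBelow {x | min b 1 ≤ cdf m x}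
    · -- b's set bddBelow: show 0 ≤ sInf
      -- a's set not bddBelow means min a 1 ≤ 0 basically; anyway need 0 ≤ qf m b
      by_cases hbpos : 0 < b
      · exact qf_nonneg hm hbpos
      · -- b ≤ 0 : then b's set ⊇ a's set... min b 1 = b ≤ 0 ≤ cdf: set = univ: contradiction with bdd
        exfalso
        apply hb2.elim
        intro c hc
        push_neg at hbpos
        have : (c - 1) ∈ {x | min b 1 ≤ cdf m x} := by
          simp only [Set.mem_setOf_eq]
          exact le_trans (le_trans (min_le_left b 1) hbpos) (cdf_nonneg m _)
        have := hc this
        linarith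
    · unfold qf at *
      rw [Real.sInf_of_not_bddBelow hb2]

lemma qf_mem_Icc {v : ℝ} (hv : 0 < v) : qf m v ∈ Set.Icc (0:ℝ) 1 :=
  ⟨qf_nonneg hm hv, qf_le_one hm⟩

end q

instance restr_fin (a b : ℝ) : IsFiniteMeasure (volume.restrict (Ioc a b)) := by
  constructor
  rw [Measure.restrict_apply_univ, Real.volume_Ioc]
  exact ENNReal.ofReal_lt_top

lemma integrable_of_bdd {α : Type*} [MeasurableSpace α] {mm : Measure α} [IsFiniteMeasure mm]
    {h : α → ℝ} (hmeas : Measurable h) (C : ℝ) (hb : ∀ a, |h a| ≤ C) :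
    Integrable h mm :=
  ⟨hmeas.aestronglyMeasurable,
    MeasureTheory.HasFiniteIntegral.of_bounded (C := C) (Filter.Eventually.of_forall hb)⟩

lemma ite_int {c z : ℝ} (hc1 : c ≤ 1) :
    ∫ x in Ioc z 1, (if x < c then (1:ℝ) else 0) = max (c - z) 0 := by
  have hind : (fun x : ℝ => if x < c then (1:ℝ) else 0) = (Iio c).indicator (fun _ => (1:ℝ)) := by
    funext x
    simp [Set.indicator_apply, Set.mem_Iio]
  rw [hind, MeasureTheory.integral_indicator measurableSet_Iio]
  rw [MeasureTheory.setIntegral_const, measureReal_def, Measure.restrict_apply measurableSet_Iio]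
  have hset : Iio c ∩ Ioc z 1 = Ioo z c := by
    ext x
    simp only [Set.mem_inter_iff, Set.mem_Iio, Set.mem_Ioc, Set.mem_Ioo]
    constructor
    · rintro ⟨h1, h2, h3⟩; exact ⟨h2, h1⟩
    · rintro ⟨h1, h2⟩; exact ⟨h2, h1, le_trans (le_of_lt h2) hc1⟩
  rw [hset, Real.volume_Ioo]
  rcases le_or_gt c z with h | h
  · rw [ENNReal.ofReal_of_nonpos (by linarith), max_eq_right (by linarith)]
    simp
  · rw [ENNReal.toReal_ofReal (by linarith), max_eq_left (by linarith)]
    simp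

lemma ite_int2 {c : ℝ} (hc0 : 0 ≤ c) (hc1 : c ≤ 1) :
    ∫ x in Ioc (0:ℝ) 1, (if x < c then 2*x else 0) = c^2 := by
  have hind : (fun x : ℝ => if x < c then 2*x else 0) = (Iio c).indicator (fun x => 2*x) := by
    funext x
    simp [Set.indicator_apply, Set.mem_Iio]
  rw [hind, MeasureTheory.integral_indicator measurableSet_Iio]
  rw [Measure.restrict_restrict measurableSet_Iio]
  have hset : Iio c ∩ Ioc (0:ℝ) 1 = Ioo 0 c := by
    ext x
    simp only [Set.mem_inter_iff, Set.mem_Iio, Set.mem_Ioc, Set.mem_Ioo]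
    constructor
    · rintro ⟨h1, h2, h3⟩; exact ⟨h2, h1⟩
    · rintro ⟨h1, h2⟩; exact ⟨h2, h1, le_trans (le_of_lt h2) hc1⟩
  rw [hset]
  rw [← MeasureTheory.integral_Ioc_eq_integral_Ioo]
  rw [← intervalIntegral.integral_of_le hc0]
  have : ∫ x in (0:ℝ)..c, 2*x = 2 * ∫ x in (0:ℝ)..c, x := intervalIntegral.integral_const_mul 2 _
  rw [this, integral_id]
  ring

lemma ite_intv {a : ℝ} (ha0 : 0 ≤ a) :
    ∫ v in Ioc (0:ℝ) 1, (if a < v then (1:ℝ) else 0) = 1 - min a 1 := by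
  have hind : (fun v : ℝ => if a < v then (1:ℝ) else 0) = (Ioi a).indicator (fun _ => (1:ℝ)) := by
    funext v
    simp [Set.indicator_apply, Set.mem_Ioi]
  rw [hind, MeasureTheory.integral_indicator measurableSet_Ioi]
  rw [MeasureTheory.setIntegral_const, measureReal_def, Measure.restrict_apply measurableSet_Ioi]
  have hset : Ioi a ∩ Ioc (0:ℝ) 1 = Ioc (max a 0) 1 := by
    ext v
    simp only [Set.mem_inter_iff, Set.mem_Ioi, Set.mem_Ioc, max_lt_iff]
    tauto
  rw [hset, Real.volume_Ioc, max_eq_left ha0]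
  rcases le_or_gt a 1 with h | h
  · rw [ENNReal.toReal_ofReal (by linarith), min_eq_left h]; simp
  · rw [ENNReal.ofReal_of_nonpos (by linarith), min_eq_right (le_of_lt h)]; simp


lemma qf_measurable [IsProbabilityMeasure m] (hm : m (Set.Icc (0:ℝ) 1)ᶜ = 0) :
    Measurable (qf m) := (qf_monotone hm).measurable

lemma integrable_of_bdd_ae {α : Type*} [MeasurableSpace α] {mm : Measure α} [IsFiniteMeasure mm]
    {h : α → ℝ} (hmeas : Measurable h) (C : ℝ) (hb : ∀ᵐ a ∂mm, |h a| ≤ C) :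
    Integrable h mm :=
  ⟨hmeas.aestronglyMeasurable,
    MeasureTheory.HasFiniteIntegral.of_bounded (C := C) hb⟩

lemma swap_int {m1 m2 : Measure ℝ} [IsFiniteMeasure m1] [IsFiniteMeasure m2]
    {h : ℝ × ℝ → ℝ} (hmeas : Measurable h) (C : ℝ) (hb : ∀ᵐ p ∂(m1.prod m2), |h p| ≤ C) :
    ∫ v, (∫ x, h (v, x) ∂m2) ∂m1 = ∫ x, (∫ v, h (v, x) ∂m1) ∂m2 :=
  MeasureTheory.integral_integral_swap (f := fun v x => h (v, x))
    (integrable_of_bdd_ae hmeas C hb)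

section E
variable [IsProbabilityMeasure m] (hm : m (Set.Icc (0:ℝ) 1)ᶜ = 0)
include hm

lemma meas_ite1 : Measurable (fun p : ℝ × ℝ => if cdf m p.2 < p.1 then (1:ℝ) else 0) := by
  have hset : MeasurableSet {p : ℝ × ℝ | cdf m p.2 < p.1} :=
    measurableSet_lt (cdf_measurable.comp measurable_snd) measurable_fst
  exact Measurable.ite hset measurable_const measurable_const

lemma E2 {z : ℝ} (hz0 : 0 ≤ z) (hz1 : z ≤ 1) :
    ∫ v in Ioc (0:ℝ) 1, max (qf m v - z) 0 = ∫ x in Ioc z 1, (1 - cdf m x) := by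
  have hb : ∀ᵐ p ∂((volume.restrict (Ioc (0:ℝ) 1)).prod (volume.restrict (Ioc z 1))),
      |(fun p : ℝ × ℝ => if cdf m p.2 < p.1 then (1:ℝ) else 0) p| ≤ 1 := by
    filter_upwards with p
    by_cases h : cdf m p.2 < p.1 <;> simp [h]
  have hswap := swap_int (m1 := volume.restrict (Ioc (0:ℝ) 1))
    (m2 := volume.restrict (Ioc z 1)) (meas_ite1 hm) 1 hb
  have hL : ∫ v in Ioc (0:ℝ) 1, (∫ x in Ioc z 1, (if cdf m x < v then (1:ℝ) else 0))
      = ∫ v in Ioc (0:ℝ) 1, max (qf m v - z) 0 := by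
    apply MeasureTheory.setIntegral_congr_fun measurableSet_Ioc
    intro v hv
    have hiff : ∀ x : ℝ, (cdf m x < v) = (x < qf m v) := fun x =>
      propext (lt_qf_iff hm hv.1 hv.2).symm
    simp only [hiff]
    exact ite_int (qf_le_one hm)
  have hR : ∫ x in Ioc z 1, (∫ v in Ioc (0:ℝ) 1, (if cdf m x < v then (1:ℝ) else 0))
      = ∫ x in Ioc z 1, (1 - cdf m x) := by
    apply MeasureTheory.setIntegral_congr_fun measurableSet_Ioc
    intro x _
    dsimp only
    rw [ite_intv (cdf_nonneg m x), min_eq_left (cdf_le_one x)]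
  rw [← hL, hswap, hR]

lemma Emoment :
    ∫ v in Ioc (0:ℝ) 1, (qf m v)^2 = ∫ x in Ioc (0:ℝ) 1, 2*x*(1 - cdf m x) := by
  have hmeas : Measurable (fun p : ℝ × ℝ => if cdf m p.2 < p.1 then 2*p.2 else 0) := by
    have hset : MeasurableSet {p : ℝ × ℝ | cdf m p.2 < p.1} :=
      measurableSet_lt (cdf_measurable.comp measurable_snd) measurable_fst
    exact Measurable.ite hset (measurable_snd.const_mul 2) measurable_const
  have hb : ∀ᵐ p ∂((volume.restrict (Ioc (0:ℝ) 1)).prod (volume.restrict (Ioc (0:ℝ) 1))),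
      |(fun p : ℝ × ℝ => if cdf m p.2 < p.1 then 2*p.2 else 0) p| ≤ 2 := by
    rw [Measure.prod_restrict]
    filter_upwards [MeasureTheory.ae_restrict_mem ((measurableSet_Ioc).prod measurableSet_Ioc)]
      with p hp
    obtain ⟨_, hp2⟩ := hp
    simp only [Set.mem_Ioc] at hp2
    by_cases h : cdf m p.2 < p.1 <;> simp [h, abs_of_nonneg]
    rw [abs_of_nonneg (by linarith)]
    linarith
  have hswap := swap_int (m1 := volume.restrict (Ioc (0:ℝ) 1))
    (m2 := volume.restrict (Ioc (0:ℝ) 1)) hmeas 2 hb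
  have hL : ∫ v in Ioc (0:ℝ) 1, (∫ x in Ioc (0:ℝ) 1, (if cdf m x < v then 2*x else 0))
      = ∫ v in Ioc (0:ℝ) 1, (qf m v)^2 := by
    apply MeasureTheory.setIntegral_congr_fun measurableSet_Ioc
    intro v hv
    have hiff : ∀ x : ℝ, (cdf m x < v) = (x < qf m v) := fun x =>
      propext (lt_qf_iff hm hv.1 hv.2).symm
    simp only [hiff]
    exact ite_int2 (qf_nonneg hm hv.1) (qf_le_one hm)
  have hR : ∫ x in Ioc (0:ℝ) 1, (∫ v in Ioc (0:ℝ) 1, (if cdf m x < v then 2*x else 0))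
      = ∫ x in Ioc (0:ℝ) 1, 2*x*(1 - cdf m x) := by
    apply MeasureTheory.setIntegral_congr_fun measurableSet_Ioc
    intro x _
    dsimp only
    have : (fun v : ℝ => if cdf m x < v then 2*x else 0)
        = fun v : ℝ => (2*x) * (if cdf m x < v then (1:ℝ) else 0) := by
      funext v
      by_cases h : cdf m x < v <;> simp [h]
    rw [this, MeasureTheory.integral_const_mul, ite_intv (cdf_nonneg m x),
      min_eq_left (cdf_le_one x)]
  rw [← hL, hswap, hR]

end E

-- new material
lemma int_restrict_bdd {h : ℝ → ℝ} {a b : ℝ} (hmeas : Measurable h) (C : ℝ)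
    (hb : ∀ v ∈ Ioc a b, |h v| ≤ C) : Integrable h (volume.restrict (Ioc a b)) := by
  apply integrable_of_bdd_ae hmeas C
  filter_upwards [MeasureTheory.ae_restrict_mem measurableSet_Ioc] with v hv
  exact hb v hv

lemma meas_itec {c : ℝ} : Measurable (fun x : ℝ => if x < c then (1:ℝ) else 0) := by
  have : MeasurableSet {x : ℝ | x < c} := measurableSet_Iio
  exact Measurable.ite this measurable_const measurable_const

lemma meas_itev {a : ℝ} : Measurable (fun v : ℝ => if a < v then (1:ℝ) else 0) := by
  have : MeasurableSet {v : ℝ | a < v} := measurableSet_Ioi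
  exact Measurable.ite this measurable_const measurable_const

lemma abs_ite_eq (a b : ℝ) (x : ℝ) :
    |(if x < a then (1:ℝ) else 0) - (if x < b then (1:ℝ) else 0)|
      = (if x < a then (1:ℝ) else 0) + (if x < b then (1:ℝ) else 0)
        - 2 * (if x < min a b then (1:ℝ) else 0) := by
  simp only [lt_min_iff]
  rcases lt_or_ge x a with h1 | h1 <;> rcases lt_or_ge x b with h2 | h2
  · rw [if_pos h1, if_pos h2, if_pos ⟨h1, h2⟩]; norm_num
  · rw [if_pos h1, if_neg (not_lt.2 h2), if_neg (fun hc => (not_lt.2 h2) hc.2)]; norm_num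
  · rw [if_neg (not_lt.2 h1), if_pos h2, if_neg (fun hc => (not_lt.2 h1) hc.1)]
    rw [abs_of_nonpos (by norm_num)]; norm_num
  · rw [if_neg (not_lt.2 h1), if_neg (not_lt.2 h2), if_neg (fun hc => (not_lt.2 h1) hc.1)]
    norm_num

lemma abs_itev_eq (F G : ℝ) (v : ℝ) :
    |(if F < v then (1:ℝ) else 0) - (if G < v then (1:ℝ) else 0)|
      = (if F < v then (1:ℝ) else 0) + (if G < v then (1:ℝ) else 0)
        - 2 * (if max F G < v then (1:ℝ) else 0) := by
  simp only [max_lt_iff]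
  rcases lt_or_ge F v with h1 | h1 <;> rcases lt_or_ge G v with h2 | h2
  · rw [if_pos h1, if_pos h2, if_pos ⟨h1, h2⟩]; norm_num
  · rw [if_pos h1, if_neg (not_lt.2 h2), if_neg (fun hc => (not_lt.2 h2) hc.2)]; norm_num
  · rw [if_neg (not_lt.2 h1), if_pos h2, if_neg (fun hc => (not_lt.2 h1) hc.1)]
    rw [abs_of_nonpos (by norm_num)]; norm_num
  · rw [if_neg (not_lt.2 h1), if_neg (not_lt.2 h2), if_neg (fun hc => (not_lt.2 h1) hc.1)]
    norm_num

section Ed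
variable [IsProbabilityMeasure μ] [IsProbabilityMeasure ν]
  (hμ : μ (Set.Icc (0:ℝ) 1)ᶜ = 0) (hν : ν (Set.Icc (0:ℝ) 1)ᶜ = 0)
include hμ hν

lemma Ed : ∫ v in Ioc (0:ℝ) 1, |qf μ v - qf ν v| = ∫ x in Ioc (0:ℝ) 1, |cdf μ x - cdf ν x| := by
  have hmeas : Measurable (fun p : ℝ × ℝ =>
      |(if cdf μ p.2 < p.1 then (1:ℝ) else 0) - (if cdf ν p.2 < p.1 then (1:ℝ) else 0)|) := by
    have h1 : MeasurableSet {p : ℝ × ℝ | cdf μ p.2 < p.1} :=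
      measurableSet_lt (cdf_measurable.comp measurable_snd) measurable_fst
    have h2 : MeasurableSet {p : ℝ × ℝ | cdf ν p.2 < p.1} :=
      measurableSet_lt (cdf_measurable.comp measurable_snd) measurable_fst
    exact ((Measurable.ite h1 measurable_const measurable_const).sub
      (Measurable.ite h2 measurable_const measurable_const)).abs
  have hb : ∀ᵐ p ∂((volume.restrict (Ioc (0:ℝ) 1)).prod (volume.restrict (Ioc (0:ℝ) 1))),
      |(fun p : ℝ × ℝ =>
        |(if cdf μ p.2 < p.1 then (1:ℝ) else 0) - (if cdf ν p.2 < p.1 then (1:ℝ) else 0)|) p|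
        ≤ 1 := by
    filter_upwards with p
    by_cases h1 : cdf μ p.2 < p.1 <;> by_cases h2 : cdf ν p.2 < p.1 <;> simp [h1, h2]
  have hswap := swap_int (m1 := volume.restrict (Ioc (0:ℝ) 1))
    (m2 := volume.restrict (Ioc (0:ℝ) 1)) hmeas 1 hb
  have hL : ∫ v in Ioc (0:ℝ) 1, (∫ x in Ioc (0:ℝ) 1,
      |(if cdf μ x < v then (1:ℝ) else 0) - (if cdf ν x < v then (1:ℝ) else 0)|)
      = ∫ v in Ioc (0:ℝ) 1, |qf μ v - qf ν v| := by
    apply MeasureTheory.setIntegral_congr_fun measurableSet_Ioc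
    intro v hv
    dsimp only
    have hiff1 : ∀ x : ℝ, (cdf μ x < v) = (x < qf μ v) := fun x =>
      propext (lt_qf_iff hμ hv.1 hv.2).symm
    have hiff2 : ∀ x : ℝ, (cdf ν x < v) = (x < qf ν v) := fun x =>
      propext (lt_qf_iff hν hv.1 hv.2).symm
    simp only [hiff1, hiff2]
    have heq : (fun x : ℝ => |(if x < qf μ v then (1:ℝ) else 0) - (if x < qf ν v then (1:ℝ) else 0)|)
        = fun x => (if x < qf μ v then (1:ℝ) else 0) + (if x < qf ν v then (1:ℝ) else 0)
          - 2 * (if x < min (qf μ v) (qf ν v) then (1:ℝ) else 0) := by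
      funext x; exact abs_ite_eq _ _ x
    rw [heq]
    have i1 : Integrable (fun x : ℝ => if x < qf μ v then (1:ℝ) else 0)
        (volume.restrict (Ioc (0:ℝ) 1)) := by
      apply int_restrict_bdd meas_itec 1
      intro x _; by_cases h : x < qf μ v <;> simp [h]
    have i2 : Integrable (fun x : ℝ => if x < qf ν v then (1:ℝ) else 0)
        (volume.restrict (Ioc (0:ℝ) 1)) := by
      apply int_restrict_bdd meas_itec 1
      intro x _; by_cases h : x < qf ν v <;> simp [h]
    have i3 : Integrable (fun x : ℝ => (2:ℝ) * (if x < min (qf μ v) (qf ν v) then (1:ℝ) else 0))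
        (volume.restrict (Ioc (0:ℝ) 1)) := by
      apply int_restrict_bdd (meas_itec.const_mul 2) 2
      intro x _; by_cases h : x < min (qf μ v) (qf ν v) <;> simp [h]
    have i12 : Integrable (fun x : ℝ => (if x < qf μ v then (1:ℝ) else 0)
        + (if x < qf ν v then (1:ℝ) else 0)) (volume.restrict (Ioc (0:ℝ) 1)) := i1.add i2
    rw [MeasureTheory.integral_sub i12 i3, MeasureTheory.integral_add i1 i2,
      MeasureTheory.integral_const_mul]
    rw [ite_int (qf_le_one hμ), ite_int (qf_le_one hν),
      ite_int (c := min (qf μ v) (qf ν v)) (le_trans (min_le_left _ _) (qf_le_one hμ))]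
    rw [sub_zero, sub_zero, sub_zero]
    rw [max_eq_left (qf_nonneg hμ hv.1), max_eq_left (qf_nonneg hν hv.1),
      max_eq_left (le_min (qf_nonneg hμ hv.1) (qf_nonneg hν hv.1))]
    rcases le_total (qf μ v) (qf ν v) with h | h
    · rw [min_eq_left h, abs_of_nonpos (by linarith)]; ring
    · rw [min_eq_right h, abs_of_nonneg (by linarith)]; ring
  have hR : ∫ x in Ioc (0:ℝ) 1, (∫ v in Ioc (0:ℝ) 1,
      |(if cdf μ x < v then (1:ℝ) else 0) - (if cdf ν x < v then (1:ℝ) else 0)|)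
      = ∫ x in Ioc (0:ℝ) 1, |cdf μ x - cdf ν x| := by
    apply MeasureTheory.setIntegral_congr_fun measurableSet_Ioc
    intro x _
    dsimp only
    have heq : (fun v : ℝ => |(if cdf μ x < v then (1:ℝ) else 0) - (if cdf ν x < v then (1:ℝ) else 0)|)
        = fun v => (if cdf μ x < v then (1:ℝ) else 0) + (if cdf ν x < v then (1:ℝ) else 0)
          - 2 * (if max (cdf μ x) (cdf ν x) < v then (1:ℝ) else 0) := by
      funext v; exact abs_itev_eq _ _ v
    rw [heq]
    have i1 : Integrable (fun v : ℝ => if cdf μ x < v then (1:ℝ) else 0)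
        (volume.restrict (Ioc (0:ℝ) 1)) := by
      apply int_restrict_bdd meas_itev 1
      intro v _; by_cases h : cdf μ x < v <;> simp [h]
    have i2 : Integrable (fun v : ℝ => if cdf ν x < v then (1:ℝ) else 0)
        (volume.restrict (Ioc (0:ℝ) 1)) := by
      apply int_restrict_bdd meas_itev 1
      intro v _; by_cases h : cdf ν x < v <;> simp [h]
    have i3 : Integrable (fun v : ℝ => (2:ℝ) * (if max (cdf μ x) (cdf ν x) < v then (1:ℝ) else 0))
        (volume.restrict (Ioc (0:ℝ) 1)) := by
      apply int_restrict_bdd (meas_itev.const_mul 2) 2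
      intro v _; by_cases h : max (cdf μ x) (cdf ν x) < v <;> simp [h]
    have i12 : Integrable (fun v : ℝ => (if cdf μ x < v then (1:ℝ) else 0)
        + (if cdf ν x < v then (1:ℝ) else 0)) (volume.restrict (Ioc (0:ℝ) 1)) := i1.add i2
    rw [MeasureTheory.integral_sub i12 i3, MeasureTheory.integral_add i1 i2,
      MeasureTheory.integral_const_mul]
    rw [ite_intv (cdf_nonneg μ x), ite_intv (cdf_nonneg ν x),
      ite_intv (a := max (cdf μ x) (cdf ν x)) (le_trans (cdf_nonneg μ x) (le_max_left _ _))]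
    rw [min_eq_left (cdf_le_one x), min_eq_left (cdf_le_one x),
      min_eq_left (max_le (cdf_le_one x) (cdf_le_one x))]
    rcases le_total (cdf μ x) (cdf ν x) with h | h
    · rw [max_eq_right h, abs_of_nonpos (by linarith)]; ring
    · rw [max_eq_left h, abs_of_nonneg (by linarith)]; ring
  rw [← hL, hswap, hR]

end Ed

lemma qf_nonneg' [IsProbabilityMeasure m] (hm : m (Set.Icc (0:ℝ) 1)ᶜ = 0) {v : ℝ} (hv : 0 ≤ v) :
    0 ≤ qf m v := by
  rcases lt_or_eq_of_le hv with h | h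
  · exact qf_nonneg hm h
  · rw [← h]
    unfold qf
    have hset : {x : ℝ | min (0:ℝ) 1 ≤ cdf m x} = Set.univ := by
      ext x
      simp [min_eq_left (zero_le_one), cdf_nonneg]
    rw [hset, Real.sInf_of_not_bddBelow]
    intro hbdd
    obtain ⟨c, hc⟩ := hbdd
    have := hc (Set.mem_univ (c - 1))
    linarith

lemma int_qf [IsProbabilityMeasure m] (hm : m (Set.Icc (0:ℝ) 1)ᶜ = 0) {a : ℝ} (ha : 0 ≤ a) :
    Integrable (qf m) (volume.restrict (Ioc a 1)) := by
  apply int_restrict_bdd (qf_measurable hm) 1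
  intro v hv
  rw [abs_of_nonneg (qf_nonneg hm (lt_of_le_of_lt ha hv.1))]
  exact qf_le_one hm

lemma int_qf_max [IsProbabilityMeasure m] (hm : m (Set.Icc (0:ℝ) 1)ᶜ = 0) {a c : ℝ} (ha : 0 ≤ a)
    (hc : 0 ≤ c) : Integrable (fun v => max (qf m v - c) 0) (volume.restrict (Ioc a 1)) := by
  apply int_restrict_bdd (((qf_measurable hm).sub measurable_const).max measurable_const) 1
  intro v hv
  simp only [Pi.sub_apply]
  rw [abs_of_nonneg (le_max_right _ _)]
  rcases le_total (qf m v - c) 0 with h | h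
  · rw [max_eq_right h]; norm_num
  · rw [max_eq_left h]
    have := qf_le_one hm (m := m) (v := v)
    linarith

section T
variable [IsProbabilityMeasure μ] [IsProbabilityMeasure ν]
  (hμ : μ (Set.Icc (0:ℝ) 1)ᶜ = 0) (hν : ν (Set.Icc (0:ℝ) 1)ᶜ = 0)
  (hdegS : ∀ c : ℝ, 0 ≤ c → c ≤ 1 →
    ∫ x in Ioc c 1, (1 - cdf ν x) ≤ ∫ x in Ioc c 1, (1 - cdf μ x))
include hμ hν hdegS

lemma tail_mono {w : ℝ} (hw0 : 0 ≤ w) (hw1 : w < 1) :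
    ∫ v in Ioc w 1, qf ν v ≤ ∫ v in Ioc w 1, qf μ v := by
  set c := qf μ w with hc
  have hc0 : 0 ≤ c := qf_nonneg' hμ hw0
  have hc1 : c ≤ 1 := qf_le_one hμ
  have hvol : ((volume.restrict (Ioc w 1)) Set.univ).toReal = 1 - w := by
    rw [Measure.restrict_apply_univ, Real.volume_Ioc, ENNReal.toReal_ofReal (by linarith)]
  -- split of the full-interval integral of max (qf μ - c) 0
  have hsplit : ∀ (mm : Measure ℝ) (hmm : mm (Set.Icc (0:ℝ) 1)ᶜ = 0)
      (_ : IsProbabilityMeasure mm),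
      ∫ v in Ioc (0:ℝ) 1, max (qf mm v - c) 0
        = (∫ v in Ioc (0:ℝ) w, max (qf mm v - c) 0) + ∫ v in Ioc w 1, max (qf mm v - c) 0 := by
    intro mm hmm hp
    rw [← Set.Ioc_union_Ioc_eq_Ioc hw0 (le_of_lt hw1)]
    rw [MeasureTheory.setIntegral_union (Set.Ioc_disjoint_Ioc_of_le le_rfl) measurableSet_Ioc
      ((int_qf_max hmm le_rfl hc0).mono_measure
        (Measure.restrict_mono (Set.Ioc_subset_Ioc_right (le_of_lt hw1)) le_rfl))
      (int_qf_max hmm hw0 hc0)]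
  -- A : equality for μ side
  have hA : ∫ v in Ioc (0:ℝ) 1, max (qf μ v - c) 0
      = (∫ v in Ioc w 1, qf μ v) - (1 - w) * c := by
    rw [hsplit μ hμ inferInstance]
    have h1 : ∫ v in Ioc (0:ℝ) w, max (qf μ v - c) 0 = 0 := by
      rw [MeasureTheory.setIntegral_congr_fun measurableSet_Ioc
        (g := fun _ => (0:ℝ)) ?_, MeasureTheory.integral_zero]
      intro v hv
      dsimp only
      rw [max_eq_right (sub_nonpos.2 (qf_monotone hμ hv.2))]
    have h2 : ∫ v in Ioc w 1, max (qf μ v - c) 0 = (∫ v in Ioc w 1, qf μ v) - (1 - w) * c := by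
      rw [MeasureTheory.setIntegral_congr_fun measurableSet_Ioc
        (g := fun v => qf μ v - c) ?_]
      · rw [MeasureTheory.integral_sub (int_qf hμ hw0) (integrable_const c),
          MeasureTheory.integral_const, measureReal_def, hvol, smul_eq_mul]
      · intro v hv
        dsimp only
        rw [max_eq_left (sub_nonneg.2 (qf_monotone hμ (le_of_lt hv.1)))]
    rw [h1, h2, zero_add]
  -- B : degradation comparison
  have hB : ∫ v in Ioc (0:ℝ) 1, max (qf ν v - c) 0 ≤ ∫ v in Ioc (0:ℝ) 1, max (qf μ v - c) 0 := by
    rw [E2 hμ hc0 hc1, E2 hν hc0 hc1]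
    exact hdegS c hc0 hc1
  -- C : lower bound for ν side
  have hC : (∫ v in Ioc w 1, qf ν v) - (1 - w) * c ≤ ∫ v in Ioc (0:ℝ) 1, max (qf ν v - c) 0 := by
    have h1 : (∫ v in Ioc w 1, qf ν v) - (1 - w) * c = ∫ v in Ioc w 1, (qf ν v - c) := by
      rw [MeasureTheory.integral_sub (int_qf hν hw0) (integrable_const c),
        MeasureTheory.integral_const, measureReal_def, hvol, smul_eq_mul]
    have h2 : ∫ v in Ioc w 1, (qf ν v - c) ≤ ∫ v in Ioc w 1, max (qf ν v - c) 0 := by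
      apply MeasureTheory.setIntegral_mono_on
        ((int_qf hν hw0).sub (integrable_const c)) (int_qf_max hν hw0 hc0) measurableSet_Ioc
      intro v _
      exact le_max_left _ _
    have h3 : ∫ v in Ioc w 1, max (qf ν v - c) 0 ≤ ∫ v in Ioc (0:ℝ) 1, max (qf ν v - c) 0 := by
      rw [hsplit ν hν inferInstance]
      have : 0 ≤ ∫ v in Ioc (0:ℝ) w, max (qf ν v - c) 0 :=
        MeasureTheory.setIntegral_nonneg measurableSet_Ioc (fun v _ => le_max_right _ _)
      linarith
    linarith
  linarith

lemma tail_mono' {w : ℝ} (hw0 : 0 ≤ w) :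
    ∫ v in Ioc w 1, qf ν v ≤ ∫ v in Ioc w 1, qf μ v := by
  rcases lt_or_ge w 1 with h | h
  · exact tail_mono hμ hν hdegS hw0 h
  · have : Ioc w 1 = (∅ : Set ℝ) := Set.Ioc_eq_empty (not_lt.2 h)
    rw [this]
    simp

/-- the core positivity: ∫ g (f − g) ≥ 0 -/
lemma N_nonneg : 0 ≤ ∫ v in Ioc (0:ℝ) 1, qf ν v * (qf μ v - qf ν v) := by
  -- step 1: rewrite integrand via inner z-integral
  have hval : ∀ v ∈ Ioc (0:ℝ) 1,
      qf ν v * (qf μ v - qf ν v)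
        = ∫ z in Ioc (0:ℝ) 1, (if z < qf ν v then qf μ v - qf ν v else 0) := by
    intro v hv
    have : (fun z : ℝ => if z < qf ν v then qf μ v - qf ν v else 0)
        = fun z : ℝ => (qf μ v - qf ν v) * (if z < qf ν v then (1:ℝ) else 0) := by
      funext z
      by_cases h : z < qf ν v <;> simp [h]
    rw [this, MeasureTheory.integral_const_mul, ite_int (qf_le_one hν),
      max_eq_left (by rw [sub_zero]; exact qf_nonneg hν hv.1), sub_zero]
    ring
  rw [MeasureTheory.setIntegral_congr_fun measurableSet_Ioc hval]
  -- step 2: swap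
  have hmeas : Measurable (fun p : ℝ × ℝ => if p.2 < qf ν p.1 then qf μ p.1 - qf ν p.1 else 0) := by
    have hset : MeasurableSet {p : ℝ × ℝ | p.2 < qf ν p.1} :=
      measurableSet_lt measurable_snd ((qf_measurable hν).comp measurable_fst)
    exact Measurable.ite hset (((qf_measurable hμ).comp measurable_fst).sub
      ((qf_measurable hν).comp measurable_fst)) measurable_const
  have hb : ∀ᵐ p ∂((volume.restrict (Ioc (0:ℝ) 1)).prod (volume.restrict (Ioc (0:ℝ) 1))),
      |(fun p : ℝ × ℝ => if p.2 < qf ν p.1 then qf μ p.1 - qf ν p.1 else 0) p| ≤ 1 := by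
    rw [Measure.prod_restrict]
    filter_upwards [MeasureTheory.ae_restrict_mem (measurableSet_Ioc.prod measurableSet_Ioc)]
      with p hp
    obtain ⟨hp1, _⟩ := hp
    by_cases h : p.2 < qf ν p.1
    · simp only [h, if_true]
      rw [abs_le]
      constructor
      · have h1 := qf_nonneg hμ hp1.1
        have h2 := qf_le_one hν (m := ν) (v := p.1)
        linarith
      · have h1 := qf_le_one hμ (m := μ) (v := p.1)
        have h2 := qf_nonneg hν hp1.1
        linarith
    · simp [h]
  have hswap := swap_int (m1 := volume.restrict (Ioc (0:ℝ) 1))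
    (m2 := volume.restrict (Ioc (0:ℝ) 1)) hmeas 1 hb
  rw [hswap]
  -- step 3: each inner integral (over v, for fixed z) is nonneg
  apply MeasureTheory.setIntegral_nonneg measurableSet_Ioc
  intro z hz
  by_cases hS : ({v : ℝ | v ∈ Ioc (0:ℝ) 1 ∧ z < qf ν v}).Nonempty
  · set S := {v : ℝ | v ∈ Ioc (0:ℝ) 1 ∧ z < qf ν v} with hSdef
    have hbdd : BddBelow S := ⟨0, fun s hs => le_of_lt hs.1.1⟩
    set w := sInf S with hw
    have hw0 : 0 ≤ w := le_csInf hS (fun s hs => le_of_lt hs.1.1)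
    have hw1 : w ≤ 1 := by
      obtain ⟨s, hs⟩ := hS
      exact le_trans (csInf_le hbdd hs) hs.1.2
    have hae : ∀ᵐ v ∂(volume.restrict (Ioc (0:ℝ) 1)), v ≠ w := by
      rw [Filter.eventually_iff, MeasureTheory.mem_ae_iff]
      have hcompl : {v : ℝ | v ≠ w}ᶜ = {w} := by
        ext v; simp
      rw [hcompl, Measure.restrict_apply (measurableSet_singleton w)]
      exact measure_mono_null Set.inter_subset_left (Real.volume_singleton)
    have hcong : (fun v : ℝ => if z < qf ν v then qf μ v - qf ν v else 0)
        =ᵐ[volume.restrict (Ioc (0:ℝ) 1)]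
        (Set.indicator (Ioc w 1) (fun v => qf μ v - qf ν v)) := by
      filter_upwards [MeasureTheory.ae_restrict_mem measurableSet_Ioc, hae] with v hv hvw
      rcases lt_or_ge w v with hgt | hle
      · have hvS : v ∈ S := by
          obtain ⟨s, hsS, hsv⟩ := (csInf_lt_iff hbdd hS).1 hgt
          exact ⟨hv, lt_of_lt_of_le hsS.2 (qf_monotone hν (le_of_lt hsv))⟩
        rw [if_pos hvS.2, Set.indicator_of_mem (show v ∈ Ioc w 1 from ⟨hgt, hv.2⟩)]
      · have hvlt : v < w := lt_of_le_of_ne hle hvw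
        have hvnS : v ∉ S := fun hmem => absurd (csInf_le hbdd hmem) (not_le.2 hvlt)
        have : ¬ z < qf ν v := fun hzv => hvnS ⟨hv, hzv⟩
        rw [if_neg this, Set.indicator_of_notMem (fun hmem => absurd hmem.1 (not_lt.2 hle))]
    rw [MeasureTheory.integral_congr_ae hcong]
    rw [MeasureTheory.integral_indicator measurableSet_Ioc]
    rw [Measure.restrict_restrict measurableSet_Ioc,
      Set.inter_eq_left.2 (Set.Ioc_subset_Ioc hw0 le_rfl)]
    rcases lt_or_ge w 1 with hlt | hge
    · have := tail_mono hμ hν hdegS hw0 hlt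
      rw [MeasureTheory.integral_sub (int_qf hμ hw0) (int_qf hν hw0)]
      linarith
    · have : Ioc w 1 = (∅ : Set ℝ) := Set.Ioc_eq_empty (not_lt.2 hge)
      rw [this]
      simp
  · rw [MeasureTheory.setIntegral_congr_fun measurableSet_Ioc (g := fun _ => (0:ℝ)) ?_]
    · simp
    · intro v hv
      dsimp only
      rw [if_neg (fun hc => hS ⟨v, hv, hc⟩)]

end T

lemma cdf_int [IsFiniteMeasure m] {a b : ℝ} [IsProbabilityMeasure m] :
    Integrable (cdf m) (volume.restrict (Ioc a b)) := by
  apply int_restrict_bdd cdf_measurable 1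
  intro x _
  rw [abs_of_nonneg (cdf_nonneg m x)]
  exact cdf_le_one x

lemma qf_bdd [IsProbabilityMeasure m] (hm : m (Set.Icc (0:ℝ) 1)ᶜ = 0) {v : ℝ}
    (hv : v ∈ Ioc (0:ℝ) 1) : 0 ≤ qf m v ∧ qf m v ≤ 1 :=
  ⟨qf_nonneg hm hv.1, qf_le_one hm⟩

end DegProof

open DegProof

/-- If `μ` is degraded with respect to `ν` (in the `|D|`-domain sense on CDFs), then
the degradation measure `D(μ,ν) = ∫₀¹ x (G(x) - F(x)) dx` satisfies
`D(μ,ν) ≥ d(μ,ν)²/4` for the Wasserstein-1 distance `d`. -/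
theorem degradation_bounds_wasserstein (μ ν : Measure ℝ)
    [IsProbabilityMeasure μ] [IsProbabilityMeasure ν]
    (hμ : μ (Set.Icc (0:ℝ) 1)ᶜ = 0) (hν : ν (Set.Icc (0:ℝ) 1)ᶜ = 0)
    (hdeg : ∀ z ∈ Set.Icc (0:ℝ) 1,
      (∫ x in z..(1:ℝ), cdf μ x) ≤ ∫ x in z..(1:ℝ), cdf ν x) :
    (W1 μ ν)^2 / 4 ≤ ∫ x in (0:ℝ)..1, x * (cdf ν x - cdf μ x) := by
  set F := cdf μ with hF
  set G := cdf ν with hG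
  set f := qf μ with hf
  set g := qf ν with hg
  -- transfer the degradation hypothesis
  have hdegS : ∀ c : ℝ, 0 ≤ c → c ≤ 1 →
      ∫ x in Ioc c 1, (1 - G x) ≤ ∫ x in Ioc c 1, (1 - F x) := by
    intro c hc0 hc1
    have h := hdeg c ⟨hc0, hc1⟩
    rw [intervalIntegral.integral_of_le hc1, intervalIntegral.integral_of_le hc1] at h
    rw [MeasureTheory.integral_sub (integrable_const 1) cdf_int,
      MeasureTheory.integral_sub (integrable_const 1) cdf_int]
    linarith
  -- integrability package on Ioc 0 1 (for v-variable integrands)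
  have hfm : Measurable f := qf_measurable hμ
  have hgm : Measurable g := qf_measurable hν
  have hb : ∀ v ∈ Ioc (0:ℝ) 1, (0 ≤ f v ∧ f v ≤ 1) ∧ (0 ≤ g v ∧ g v ≤ 1) := fun v hv =>
    ⟨qf_bdd hμ hv, qf_bdd hν hv⟩
  have if2 : Integrable (fun v => (f v)^2) (volume.restrict (Ioc (0:ℝ) 1)) := by
    apply int_restrict_bdd (hfm.pow_const 2) 1
    intro v hv
    obtain ⟨⟨h1, h2⟩, _⟩ := hb v hv
    rw [abs_of_nonneg (by positivity)]
    nlinarith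
  have ig2 : Integrable (fun v => (g v)^2) (volume.restrict (Ioc (0:ℝ) 1)) := by
    apply int_restrict_bdd (hgm.pow_const 2) 1
    intro v hv
    obtain ⟨_, ⟨h1, h2⟩⟩ := hb v hv
    rw [abs_of_nonneg (by positivity)]
    nlinarith
  have iphi : Integrable (fun v => f v - g v) (volume.restrict (Ioc (0:ℝ) 1)) := by
    apply int_restrict_bdd (hfm.sub hgm) 1
    intro v hv
    simp only [Pi.sub_apply, Pi.mul_apply]
    obtain ⟨⟨h1, h2⟩, ⟨h3, h4⟩⟩ := hb v hv
    rw [abs_le]; constructor <;> linarith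
  have iphia : Integrable (fun v => |f v - g v|) (volume.restrict (Ioc (0:ℝ) 1)) := iphi.abs
  have iphi2 : Integrable (fun v => (f v - g v)^2) (volume.restrict (Ioc (0:ℝ) 1)) := by
    apply int_restrict_bdd ((hfm.sub hgm).pow_const 2) 1
    intro v hv
    simp only [Pi.sub_apply, Pi.mul_apply]
    obtain ⟨⟨h1, h2⟩, ⟨h3, h4⟩⟩ := hb v hv
    rw [abs_of_nonneg (by positivity)]
    nlinarith
  have igphi : Integrable (fun v => g v * (f v - g v)) (volume.restrict (Ioc (0:ℝ) 1)) := by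
    apply int_restrict_bdd (hgm.mul (hfm.sub hgm)) 1
    intro v hv
    simp only [Pi.sub_apply, Pi.mul_apply]
    obtain ⟨⟨h1, h2⟩, ⟨h3, h4⟩⟩ := hb v hv
    rw [abs_le]; constructor <;> nlinarith
  -- the moment identity : RHS = (∫ f² − ∫ g²)/2
  have i1 : Integrable (fun x => 2*x*(1 - F x)) (volume.restrict (Ioc (0:ℝ) 1)) := by
    apply int_restrict_bdd ((measurable_id.const_mul 2).mul
      (measurable_const.sub cdf_measurable)) 2
    intro x hx
    simp only [id_eq, Pi.sub_apply, Pi.mul_apply]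
    have h1 := cdf_nonneg μ x
    have h2 := cdf_le_one (m := μ) x
    rw [abs_le]
    constructor <;>
      nlinarith [mul_nonneg hx.1.le h1, mul_le_of_le_one_right hx.1.le h2, hx.2, hx.1.le]
  have i2 : Integrable (fun x => 2*x*(1 - G x)) (volume.restrict (Ioc (0:ℝ) 1)) := by
    apply int_restrict_bdd ((measurable_id.const_mul 2).mul
      (measurable_const.sub cdf_measurable)) 2
    intro x hx
    simp only [id_eq, Pi.sub_apply, Pi.mul_apply]
    have h1 := cdf_nonneg ν x
    have h2 := cdf_le_one (m := ν) x
    rw [abs_le]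
    constructor <;>
      nlinarith [mul_nonneg hx.1.le h1, mul_le_of_le_one_right hx.1.le h2, hx.2, hx.1.le]
  have hcong : ∫ x in Ioc (0:ℝ) 1, (2*x*(1 - F x) - 2*x*(1 - G x))
      = ∫ x in Ioc (0:ℝ) 1, 2*(x*(G x - F x)) :=
    MeasureTheory.setIntegral_congr_fun measurableSet_Ioc (fun x _ => by ring)
  have hA : ∫ x in (0:ℝ)..1, x * (G x - F x)
      = ((∫ v in Ioc (0:ℝ) 1, (f v)^2) - ∫ v in Ioc (0:ℝ) 1, (g v)^2) / 2 := by
    rw [Emoment hμ, Emoment hν]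
    rw [intervalIntegral.integral_of_le zero_le_one]
    rw [← MeasureTheory.integral_sub i1 i2, hcong, MeasureTheory.integral_const_mul]
    ring
  -- split: ∫ f² − ∫ g² = ∫ (f−g)² + 2 ∫ g (f−g)
  have hsplit : (∫ v in Ioc (0:ℝ) 1, (f v)^2) - ∫ v in Ioc (0:ℝ) 1, (g v)^2
      = (∫ v in Ioc (0:ℝ) 1, (f v - g v)^2)
        + 2 * ∫ v in Ioc (0:ℝ) 1, g v * (f v - g v) := by
    rw [← MeasureTheory.integral_sub if2 ig2, ← MeasureTheory.integral_const_mul,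
      ← MeasureTheory.integral_add iphi2 (igphi.const_mul 2)]
    apply MeasureTheory.setIntegral_congr_fun measurableSet_Ioc
    intro v _
    dsimp only
    ring
  -- Cauchy–Schwarz
  set d : ℝ := ∫ v in Ioc (0:ℝ) 1, |f v - g v| with hd
  have hd0 : 0 ≤ d := MeasureTheory.setIntegral_nonneg measurableSet_Ioc
    (fun v _ => abs_nonneg _)
  have hCS : d^2 ≤ ∫ v in Ioc (0:ℝ) 1, (f v - g v)^2 := by
    have hnn : 0 ≤ ∫ v in Ioc (0:ℝ) 1, (|f v - g v| - d)^2 :=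
      MeasureTheory.setIntegral_nonneg measurableSet_Ioc (fun v _ => sq_nonneg _)
    have hvol : ((volume.restrict (Ioc (0:ℝ) 1)) Set.univ).toReal = 1 := by
      rw [Measure.restrict_apply_univ, Real.volume_Ioc]
      norm_num
    have hexp : ∫ v in Ioc (0:ℝ) 1, (|f v - g v| - d)^2
        = (∫ v in Ioc (0:ℝ) 1, (f v - g v)^2) - 2*d*d + d^2 := by
      have e1 : ∀ v : ℝ, (|f v - g v| - d)^2 = (f v - g v)^2 - 2*d*|f v - g v| + d^2 := by
        intro v
        have : |f v - g v|^2 = (f v - g v)^2 := sq_abs _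
        nlinarith [this]
      rw [MeasureTheory.setIntegral_congr_fun measurableSet_Ioc
        (g := fun v => (f v - g v)^2 - 2*d*|f v - g v| + d^2) (fun v _ => e1 v)]
      have ia : Integrable (fun v => (f v - g v)^2 - 2*d*|f v - g v|)
          (volume.restrict (Ioc (0:ℝ) 1)) := iphi2.sub (iphia.const_mul (2*d))
      rw [MeasureTheory.integral_add ia (integrable_const _),
        MeasureTheory.integral_sub iphi2 (iphia.const_mul (2*d)),
        MeasureTheory.integral_const_mul, MeasureTheory.integral_const, measureReal_def, hvol, one_smul, ← hd]
    rw [hexp] at hnn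
    nlinarith
  -- conclude
  have hN := N_nonneg hμ hν hdegS
  have hW : W1 μ ν = d := by
    rw [W1, intervalIntegral.integral_of_le zero_le_one, hd, Ed hμ hν]
  rw [hW, hA]
  rw [hsplit]
  nlinarith
end

section
/- Let f be a function of bounded total variation on [0,1] (including boundary jumps |f(0-)| and |f(1+)| in the variation), and set F(x) = integral from 0 to x of f(z) dz. If F(x) >= 0 for all x in [0,1], then (integral from 0 to 1 of F(x) dx) * (total variation of f) >= (1/2) * (integral from 0 to 1 of |f(x)| dx)^2. -/
set_option maxHeartbeats 1000000

open MeasureTheory Set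

namespace BVKey

variable {f : ℝ → ℝ}




/-- f is measurable, from bounded variation. -/
lemma meas_of_bv (hBV : eVariationOn f Set.univ ≠ ⊤) : Measurable f := by
  have h : LocallyBoundedVariationOn f Set.univ := fun a b _ _ => by
    apply BoundedVariationOn.mono _ (Set.subset_univ _)
    exact hBV
  obtain ⟨p, q, hp, hq, hpq⟩ := h.exists_monotoneOn_sub_monotoneOn
  have hp' : Monotone p := monotoneOn_univ.mp hp
  have hq' : Monotone q := monotoneOn_univ.mp hq
  have : f = fun x => p x - q x := by funext x; rw [hpq]; rfl
  rw [this]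
  exact (hp'.measurable).sub hq'.measurable

lemma abs_sub_le_var {s : Set ℝ} {a b : ℝ}
    (hs : eVariationOn f s ≠ ⊤) (ha : a ∈ s) (hb : b ∈ s) :
    |f a - f b| ≤ (eVariationOn f s).toReal := by
  have h := eVariationOn.edist_le f ha hb
  have : edist (f a) (f b) = ENNReal.ofReal |f a - f b| := by
    rw [edist_dist, Real.dist_eq]
  rw [this] at h
  have := ENNReal.toReal_mono hs h
  rwa [ENNReal.toReal_ofReal (abs_nonneg _)] at this

lemma abs_le_var (hzero : ∀ x, x ∉ Set.Icc (0:ℝ) 1 → f x = 0)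
    (hBV : eVariationOn f Set.univ ≠ ⊤) (x : ℝ) :
    |f x| ≤ (eVariationOn f Set.univ).toReal := by
  have := abs_sub_le_var (f := f) hBV (Set.mem_univ x) (Set.mem_univ 3)
  have h3 : f 3 = 0 := hzero 3 (by norm_num)
  rwa [h3, sub_zero] at this




lemma intInt (hm : Measurable f) {C : ℝ} (hb : ∀ x, |f x| ≤ C) (a b : ℝ) :
    IntervalIntegrable f volume a b := by
  apply IntervalIntegrable.mono_fun' (g := fun _ => C)
  · exact intervalIntegrable_const
  · exact hm.aestronglyMeasurable
  · exact Filter.Eventually.of_forall fun x => by simpa using hb x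

/-- pointwise-on-open-interval integral comparison -/
lemma int_mono_ioo {g h : ℝ → ℝ} {a b : ℝ} (hab : a ≤ b)
    (hg : IntervalIntegrable g volume a b) (hh : IntervalIntegrable h volume a b)
    (hpt : ∀ x ∈ Set.Ioo a b, g x ≤ h x) :
    (∫ x in a..b, g x) ≤ ∫ x in a..b, h x := by
  apply intervalIntegral.integral_mono_ae_restrict hab hg hh
  rw [Filter.EventuallyLE, ae_restrict_iff' measurableSet_Icc]
  have hsub : {x : ℝ | ¬ (x ∈ Icc a b → g x ≤ h x)} ⊆ ({a, b} : Set ℝ) := by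
    intro x hx
    simp only [Set.mem_setOf_eq, Classical.not_imp] at hx
    obtain ⟨hx1, hx2⟩ := hx
    by_contra hab'
    simp only [Set.mem_insert_iff, Set.mem_singleton_iff] at hab'
    push_neg at hab'
    exact hx2 (hpt x ⟨lt_of_le_of_ne hx1.1 (Ne.symm hab'.1), lt_of_le_of_ne hx1.2 hab'.2⟩)
  exact measure_mono_null hsub (((Set.finite_singleton b).insert a).measure_zero volume)




lemma F_sub (hii : ∀ a b : ℝ, IntervalIntegrable f volume a b) (a b : ℝ) :
    (∫ t in (0:ℝ)..b, f t) - (∫ t in (0:ℝ)..a, f t) = ∫ t in a..b, f t := by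
  have := intervalIntegral.integral_add_adjacent_intervals (hii 0 a) (hii a b)
  linarith

lemma F_cont (hii : ∀ a b : ℝ, IntervalIntegrable f volume a b)
    {C : ℝ} (hC : 0 ≤ C) (hb : ∀ x, |f x| ≤ C) :
    Continuous (fun x => ∫ t in (0:ℝ)..x, f t) := by
  have : LipschitzWith (Real.toNNReal C) (fun x => ∫ t in (0:ℝ)..x, f t) := by
    apply LipschitzWith.of_dist_le_mul
    intro x y
    rw [Real.dist_eq, Real.dist_eq]
    have h1 : (∫ t in (0:ℝ)..x, f t) - (∫ t in (0:ℝ)..y, f t) = ∫ t in y..x, f t :=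
      F_sub hii y x
    rw [h1]
    have := intervalIntegral.norm_integral_le_of_norm_le_const
      (C := C) (f := f) (a := y) (b := x) (by
        intro t _ht
        simpa using hb t)
    simpa [Real.norm_eq_abs, Real.coe_toNNReal C hC, abs_sub_comm x y] using this
  exact this.continuous








lemma key_alg {c L M a' s Fv : ℝ} (hc : 0 < c) (hL0 : 0 < L) (hM : 0 < M)
    (hs : s = min c L) (ha'M : a' ≤ M * L) (hFv : a' ≤ Fv) :
    c * a' - c^2/2 * M ≤ s * Fv - M * s^2/2 := by
  have hs0 : 0 < s := by rw [hs]; exact lt_min hc hL0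
  have h1 : s * a' - M * s^2/2 ≤ s * Fv - M * s^2/2 := by nlinarith
  have h2 : c * a' - c^2/2 * M ≤ s * a' - M * s^2/2 := by
    rcases le_or_gt c L with h | h
    · have hsc' : s = c := by rw [hs]; exact min_eq_left h
      rw [hsc']
      have : M * c^2/2 = c^2/2 * M := by ring
      linarith
    · have hsl : s = L := by rw [hs]; exact min_eq_right (le_of_lt h)
      rw [hsl]
      nlinarith [mul_nonneg (sub_nonneg.mpr (le_of_lt h)) (sub_nonneg.mpr ha'M),
        mul_nonneg (le_of_lt hM) (sq_nonneg (c - L)), hL0]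
  linarith

/-- The per-piece estimate. -/
lemma piece (hii : ∀ a b : ℝ, IntervalIntegrable f volume a b)
    (hiabs : ∀ a b : ℝ, IntervalIntegrable (fun x => |f x|) volume a b)
    (hFc : Continuous (fun x => ∫ t in (0:ℝ)..x, f t))
    (hF : ∀ x ∈ Set.Icc (0:ℝ) 1, 0 ≤ ∫ t in (0:ℝ)..x, f t)
    {δ c M u v ε : ℝ} (hδ : 0 < δ) (hc : 0 < c) (hM : 0 < M)
    (hu : 0 ≤ u) (huv : u < v) (hv : v ≤ 1)
    (hε : ε = 1 ∨ ε = -1)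
    (hsgn : ∀ x ∈ Set.Ioo u v, -δ ≤ ε * f x)
    (habs : ∀ x ∈ Set.Ioo u v, |f x| ≤ M) :
    c * (∫ x in u..v, |f x|) - 2*c*δ*(v-u) - c^2/2 * M
      ≤ ∫ x in u..v, (∫ t in (0:ℝ)..x, f t) := by
  set F : ℝ → ℝ := fun x => ∫ t in (0:ℝ)..x, f t with hFdef
  have hFii : ∀ a b : ℝ, IntervalIntegrable F volume a b := fun a b =>
    hFc.intervalIntegrable a b
  have hFsub : ∀ a b : ℝ, F b - F a = ∫ x in a..b, f x := by
    intro a b; rw [hFdef]; exact F_sub hii a b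
  have hFnn : ∀ x, 0 ≤ x → x ≤ 1 → 0 ≤ F x := fun x h1 h2 => hF x ⟨h1, h2⟩
  set L : ℝ := v - u with hL
  have hL0 : 0 < L := by rw [hL]; linarith
  set a : ℝ := ∫ x in u..v, |f x| with ha
  set a' : ℝ := a - 2*δ*L with ha'
  have haM : a ≤ M * L := by
    have := int_mono_ioo (le_of_lt huv) (hiabs u v) intervalIntegrable_const habs
    rw [intervalIntegral.integral_const] at this
    rw [ha, hL]; simpa [smul_eq_mul, mul_comm] using this
  have ha'M : a' ≤ M * L := by
    have h2 : 0 ≤ 2*δ*L := by positivity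
    rw [ha']; linarith
  set s : ℝ := min c L with hs
  have hs0 : 0 < s := lt_min hc hL0
  have hsc : s ≤ c := min_le_left _ _
  have hsL : s ≤ L := min_le_right _ _
  clear_value F L a a' s
  have hgoal_eq : c * a - 2*c*δ*L = c * a' := by rw [ha']; ring
  rw [hgoal_eq]
  rcases hε with hε | hε
  · -- positive piece: f ≥ -δ on (u,v)
    subst hε
    simp only [one_mul] at hsgn
    have hint : a - 2*δ*L ≤ ∫ x in u..v, f x := by
      have h1 : (∫ x in u..v, (|f x| - 2*δ)) ≤ ∫ x in u..v, f x := by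
        apply int_mono_ioo (le_of_lt huv) ((hiabs u v).sub intervalIntegrable_const) (hii u v)
        intro x hx
        rcases le_or_gt 0 (f x) with h | h
        · rw [abs_of_nonneg h]; linarith
        · rw [abs_of_neg h]; have := hsgn x hx; linarith
      have h2 : (∫ x in u..v, (|f x| - 2*δ)) = a - 2*δ*L := by
        rw [intervalIntegral.integral_sub (hiabs u v) intervalIntegrable_const,
          intervalIntegral.integral_const, ha, hL]
        simp [smul_eq_mul]; ring
      linarith [h1, h2.symm.le]
    have hFv : a' ≤ F v := by
      have hFu : 0 ≤ F u := hFnn u hu (by linarith)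
      have h3 := hFsub u v
      rw [ha']; linarith
    have hsplit : (∫ x in u..v, F x) = (∫ x in u..(v-s), F x) + ∫ x in (v-s)..v, F x := by
      rw [intervalIntegral.integral_add_adjacent_intervals (hFii u (v-s)) (hFii (v-s) v)]
    have hpart1 : 0 ≤ ∫ x in u..(v-s), F x := by
      apply intervalIntegral.integral_nonneg (by linarith : u ≤ v - s)
      intro x hx
      exact hFnn x (le_trans hu hx.1) (by linarith [hx.2])
    have hramp : (∫ x in (v-s)..v, (F v - M*(v-x))) ≤ ∫ x in (v-s)..v, F x := by
      apply int_mono_ioo (by linarith) (by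
        apply Continuous.intervalIntegrable
        exact continuous_const.sub (continuous_const.mul (continuous_const.sub continuous_id)))
        (hFii _ _)
      intro t ht
      have htu : u < t := by have h5 : v - s < t := ht.1; linarith
      have h1 : F v - F t = ∫ x in t..v, f x := hFsub t v
      have h2 : (∫ x in t..v, f x) ≤ M * (v - t) := by
        have h6 := int_mono_ioo (le_of_lt ht.2) (hii t v) intervalIntegrable_const
          (fun x hx => le_trans (le_abs_self _) (habs x ⟨lt_trans htu hx.1, hx.2⟩))
        rw [intervalIntegral.integral_const] at h6
        simpa [smul_eq_mul, mul_comm] using h6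
      linarith
    have hcomp : (∫ x in (v-s)..v, (F v - M*(v-x))) = s * F v - M * s^2/2 := by
      have h1 : (∫ x in (v-s)..v, (F v - M*(v-x)))
          = (∫ x in (v-s)..v, ((F v - M*v) + M*x)) := by
        apply intervalIntegral.integral_congr; intro x _; ring
      rw [h1, intervalIntegral.integral_add intervalIntegrable_const
        (by apply Continuous.intervalIntegrable; exact continuous_const.mul continuous_id),
        intervalIntegral.integral_const, intervalIntegral.integral_const_mul, integral_id]
      simp only [smul_eq_mul]
      ring
    have key : c * a' - c^2/2 * M ≤ s * F v - M * s^2/2 :=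
      key_alg hc hL0 hM hs ha'M hFv
    rw [hsplit]; linarith
  · -- negative piece: f ≤ δ on (u,v)
    subst hε
    have hsgn' : ∀ x ∈ Set.Ioo u v, f x ≤ δ := by
      intro x hx; have := hsgn x hx; linarith
    have hint : (∫ x in u..v, f x) ≤ -(a - 2*δ*L) := by
      have h1 : (∫ x in u..v, f x) ≤ ∫ x in u..v, (2*δ - |f x|) := by
        apply int_mono_ioo (le_of_lt huv) (hii u v)
          (intervalIntegrable_const.sub (hiabs u v))
        intro x hx
        rcases le_or_gt 0 (f x) with h | h
        · rw [abs_of_nonneg h]; have := hsgn' x hx; linarith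
        · rw [abs_of_neg h]; linarith
      have h2 : (∫ x in u..v, (2*δ - |f x|)) = 2*δ*L - a := by
        rw [intervalIntegral.integral_sub intervalIntegrable_const (hiabs u v),
          intervalIntegral.integral_const, ha, hL]
        simp [smul_eq_mul]; ring
      linarith
    have hFu : a' ≤ F u := by
      have hFv0 : 0 ≤ F v := hFnn v (by linarith) hv
      have h3 := hFsub u v
      rw [ha']; linarith
    have hsplit : (∫ x in u..v, F x) = (∫ x in u..(u+s), F x) + ∫ x in (u+s)..v, F x := by
      rw [intervalIntegral.integral_add_adjacent_intervals (hFii u (u+s)) (hFii (u+s) v)]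
    have hpart1 : 0 ≤ ∫ x in (u+s)..v, F x := by
      apply intervalIntegral.integral_nonneg (by linarith : u + s ≤ v)
      intro x hx
      exact hFnn x (by linarith [hx.1]) (le_trans hx.2 hv)
    have hramp : (∫ x in u..(u+s), (F u - M*(x-u))) ≤ ∫ x in u..(u+s), F x := by
      apply int_mono_ioo (by linarith) (by
        apply Continuous.intervalIntegrable
        exact continuous_const.sub (continuous_const.mul (continuous_id.sub continuous_const)))
        (hFii _ _)
      intro t ht
      have htv : t < v := by have h5 := ht.2; linarith
      have h1 : F t - F u = ∫ x in u..t, f x := hFsub u t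
      have h2 : -(M * (t - u)) ≤ ∫ x in u..t, f x := by
        have h6 := int_mono_ioo (g := fun _ => -M) (le_of_lt ht.1) intervalIntegrable_const (hii u t)
          (fun x hx => by
            have h7 := habs x ⟨hx.1, lt_trans hx.2 htv⟩
            have h8 := neg_abs_le (f x)
            show -M ≤ f x
            linarith)
        rw [intervalIntegral.integral_const] at h6
        simpa [smul_eq_mul, mul_comm] using h6
      linarith
    have hcomp : (∫ x in u..(u+s), (F u - M*(x-u))) = s * F u - M * s^2/2 := by
      have h1 : (∫ x in u..(u+s), (F u - M*(x-u)))
          = (∫ x in u..(u+s), ((F u + M*u) + (-M)*x)) := by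
        apply intervalIntegral.integral_congr; intro x _; ring
      rw [h1, intervalIntegral.integral_add intervalIntegrable_const
        (by apply Continuous.intervalIntegrable
            exact (continuous_const.mul continuous_id)),
        intervalIntegral.integral_const, intervalIntegral.integral_const_mul, integral_id]
      simp only [smul_eq_mul]
      ring
    have key : c * a' - c^2/2 * M ≤ s * F u - M * s^2/2 :=
      key_alg hc hL0 hM hs ha'M hFu
    rw [hsplit]; linarith




/-- An alternating chain of `k+1` big points above `a`. -/
def IsAltChain (f : ℝ → ℝ) (δ a : ℝ) (k : ℕ) (z : ℕ → ℝ) : Prop :=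
  (∀ i ≤ k, a < z i ∧ z i ≤ 1 ∧ δ < |f (z i)|) ∧
  (∀ i < k, z i < z (i+1) ∧ f (z i) * f (z (i+1)) < 0)

/-- Bound on the size of alternating chains above `a`. -/
def AB (f : ℝ → ℝ) (δ a : ℝ) (n : ℕ) : Prop :=
  ∀ k z, IsAltChain f δ a k z → k + 1 ≤ n

lemma prepend {δ t u w : ℝ} {k : ℕ} {z : ℕ → ℝ}
    (hchain : IsAltChain f δ t k z) (hut : u ≤ t) (hw : u < w)
    (hwbig : δ < |f w|) (hwz : w < z 0) (hprod : f w * f (z 0) < 0) :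
    IsAltChain f δ u (k+1) (fun i => if i = 0 then w else z (i-1)) := by
  obtain ⟨hmem, hadj⟩ := hchain
  constructor
  · intro i hi
    by_cases h0 : i = 0
    · subst h0
      simp only [if_pos rfl]
      exact ⟨hw, le_trans (le_of_lt hwz) (hmem 0 (Nat.zero_le k)).2.1, hwbig⟩
    · simp only [if_neg h0]
      have hmem' := hmem (i-1) (by omega)
      exact ⟨lt_of_le_of_lt hut hmem'.1, hmem'.2.1, hmem'.2.2⟩
  · intro i hi
    by_cases h0 : i = 0
    · subst h0
      simp only [if_pos rfl, if_neg (by omega : ¬ (0+1 = 0)), Nat.add_sub_cancel]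
      exact ⟨hwz, hprod⟩
    · simp only [if_neg h0, if_neg (by omega : ¬ (i+1 = 0))]
      have := hadj (i-1) (by omega)
      have hieq : i + 1 - 1 = (i-1) + 1 := by omega
      have hieq2 : i - 1 + 1 = i := by omega
      rw [hieq]
      exact this



/-- If both signs of big points accumulate just above `u`, chains of any length exist. -/
lemma chains_of_dense {δ u : ℝ} (hδ : 0 < δ) (hu1 : u < 1)
    (hboth : ∀ x, u < x → x ≤ 1 →
      (∃ y ∈ Set.Ioo u x, δ < f y) ∧ (∃ y ∈ Set.Ioo u x, f y < -δ)) (n : ℕ) :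
    ¬ AB f δ u n := by
  have build : ∀ j : ℕ, ∀ b : ℝ, ∀ σ : Bool, u < b → b ≤ 1 →
      ∃ z : ℕ → ℝ, IsAltChain f δ u j z ∧ (∀ i ≤ j, z i < b) ∧
        (if σ then δ < f (z j) else f (z j) < -δ) := by
    intro j
    induction j with
    | zero =>
      intro b σ hb hb1
      obtain ⟨⟨y1, hy1, hy1'⟩, ⟨y2, hy2, hy2'⟩⟩ := hboth b hb hb1
      cases σ
      · exact ⟨fun _ => y2, ⟨fun i _ => ⟨hy2.1, le_trans (le_of_lt hy2.2) hb1,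
          lt_of_lt_of_le (by linarith : δ < -f y2) (neg_le_abs _)⟩, fun i hi => by omega⟩,
          fun i _ => hy2.2, by simpa using hy2'⟩
      · exact ⟨fun _ => y1, ⟨fun i _ => ⟨hy1.1, le_trans (le_of_lt hy1.2) hb1,
          lt_of_lt_of_le hy1' (le_abs_self _)⟩, fun i hi => by omega⟩,
          fun i _ => hy1.2, by simpa using hy1'⟩
    | succ j ih =>
      intro b σ hb hb1
      -- top point of sign σ
      obtain ⟨⟨y1, hy1, hy1'⟩, ⟨y2, hy2, hy2'⟩⟩ := hboth b hb hb1
      set y : ℝ := if σ then y1 else y2 with hy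
      have hyIoo : y ∈ Set.Ioo u b := by cases σ <;> simp [hy] <;> [exact hy2; exact hy1]
      have hysgn : if σ then δ < f y else f y < -δ := by
        cases σ <;> simp [hy] <;> [exact hy2'; exact hy1']
      obtain ⟨z', hz', hz'b, hz'sgn⟩ := ih y (!σ) hyIoo.1 (le_trans (le_of_lt hyIoo.2) hb1)
      refine ⟨fun i => if i ≤ j then z' i else y, ⟨?_, ?_⟩, ?_, ?_⟩
      · intro i hi
        by_cases hij : i ≤ j
        · simp only [if_pos hij]; exact hz'.1 i hij
        · simp only [if_neg hij]
          refine ⟨hyIoo.1, le_trans (le_of_lt hyIoo.2) hb1, ?_⟩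
          cases σ
          · simp only [Bool.false_eq_true, if_neg] at hysgn
            have h2 : f y < -δ := by simpa using hysgn
            exact lt_of_lt_of_le (by linarith : δ < -f y) (neg_le_abs _)
          · exact lt_of_lt_of_le (by simpa using hysgn) (le_abs_self _)
      · intro i hi
        by_cases hij : i < j
        · simp only [if_pos (by omega : i ≤ j), if_pos (by omega : i + 1 ≤ j)]
          exact hz'.2 i hij
        · have hij' : i = j := by omega
          subst hij'
          simp only [if_pos le_rfl, if_neg (by omega : ¬ i + 1 ≤ i)]
          refine ⟨hz'b i le_rfl, ?_⟩
          cases σ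
          · simp only [Bool.not_false, if_pos] at hz'sgn
            simp only [Bool.false_eq_true, if_neg] at hysgn
            have h1 : δ < f (z' i) := by simpa using hz'sgn
            have h2 : f y < -δ := by simpa using hysgn
            exact mul_neg_of_pos_of_neg (by linarith) (by linarith)
          · have h1 : f (z' i) < -δ := by simpa using hz'sgn
            have h2 : δ < f y := by simpa using hysgn
            exact mul_neg_of_neg_of_pos (by linarith) (by linarith)
      · intro i hi
        by_cases hij : i ≤ j
        · simp only [if_pos hij]; exact lt_trans (hz'b i hij) hyIoo.2
        · simp only [if_neg hij]; exact hyIoo.2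
      · simp only [if_neg (by omega : ¬ j + 1 ≤ j)]
        exact hysgn
  intro hAB
  obtain ⟨z, hz, -, -⟩ := build n 1 true hu1 le_rfl
  have := hAB n z hz
  omega

/-- opposite signs give additive jumps -/
lemma abs_sub_of_opp {a b : ℝ} (h : a * b < 0) : |a - b| = |a| + |b| := by
  rcases mul_neg_iff.mp h with ⟨ha, hb⟩ | ⟨ha, hb⟩
  · rw [abs_of_pos ha, abs_of_neg hb, abs_of_pos (by linarith)]; ring
  · rw [abs_of_neg ha, abs_of_pos hb, abs_of_neg (by linarith)]; ring



section Wlem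
variable (hBV : eVariationOn f Set.univ ≠ ⊤)
include hBV

lemma W_fin (s : Set ℝ) : eVariationOn f s ≠ ⊤ :=
  fun h => hBV (top_le_iff.mp (h ▸ eVariationOn.mono f (Set.subset_univ s)))

lemma W_edist {a b : ℝ} (hab : a ≤ b) :
    |f a - f b| ≤ (eVariationOn f (Set.Icc a b)).toReal :=
  abs_sub_le_var (W_fin hBV _) (Set.left_mem_Icc.mpr hab) (Set.right_mem_Icc.mpr hab)

lemma W_split {a b : ℝ} (hab : a ≤ b) (hb2 : b ≤ 2) :
    (eVariationOn f (Set.Icc a 2)).toReal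
      = (eVariationOn f (Set.Icc a b)).toReal + (eVariationOn f (Set.Icc b 2)).toReal := by
  have h := eVariationOn.Icc_add_Icc f (s := Set.univ) hab hb2 (Set.mem_univ b)
  simp only [Set.univ_inter] at h
  rw [← h, ENNReal.toReal_add (W_fin hBV _) (W_fin hBV _)]

/-- budget estimate, no separator needed -/
lemma budget_direct {p y : ℝ} (hpy : p ≤ y) (hy2 : y ≤ 2)
    (hopp : f p = 0 ∨ f p * f y < 0) :
    |f p| + |f y| + (eVariationOn f (Set.Icc y 2)).toReal
      ≤ (eVariationOn f (Set.Icc p 2)).toReal := by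
  rw [W_split hBV hpy hy2]
  have h1 : |f p| + |f y| ≤ (eVariationOn f (Set.Icc p y)).toReal := by
    rcases hopp with h | h
    · have := W_edist hBV hpy
      rw [h] at this ⊢
      simpa using this
    · have := W_edist hBV hpy
      rwa [abs_sub_of_opp h] at this
  linarith

/-- budget estimate with a separator point -/
lemma budget_sep {p w y : ℝ} (hpw : p ≤ w) (hwy : w ≤ y) (hy2 : y ≤ 2)
    (h1 : f p * f w < 0) (h2 : f w * f y < 0) :
    |f p| + |f y| + (eVariationOn f (Set.Icc y 2)).toReal
      ≤ (eVariationOn f (Set.Icc p 2)).toReal := by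
  rw [W_split hBV (le_trans hpw hwy) hy2]
  have h6' := eVariationOn.Icc_add_Icc f (s := Set.univ) hpw hwy (Set.mem_univ w)
  simp only [Set.univ_inter] at h6'
  have h6 : (eVariationOn f (Set.Icc p y)).toReal
      = (eVariationOn f (Set.Icc p w)).toReal + (eVariationOn f (Set.Icc w y)).toReal := by
    rw [← h6', ENNReal.toReal_add (W_fin hBV _) (W_fin hBV _)]
  rw [h6]
  have e1 : |f p| + |f w| ≤ (eVariationOn f (Set.Icc p w)).toReal := by
    have := W_edist hBV hpw; rwa [abs_sub_of_opp h1] at this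
  have e2 : |f w| + |f y| ≤ (eVariationOn f (Set.Icc w y)).toReal := by
    have := W_edist hBV hwy; rwa [abs_sub_of_opp h2] at this
  have e3 : 0 ≤ |f w| := abs_nonneg _
  linarith

/-- The top-level chain bound. -/
lemma AB_top {δ : ℝ} (hδ : 0 < δ) :
    AB f δ 0 (Nat.floor ((eVariationOn f Set.univ).toReal / (2*δ)) + 1) := by
  intro k z hz
  obtain ⟨hmem, hadj⟩ := hz
  set z' : ℕ → ℝ := fun i => z (min i k) with hz'
  have hmono : Monotone z' := by
    apply monotone_nat_of_le_succ
    intro i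
    rcases le_or_gt k i with h | h
    · have : min i k = k := min_eq_right h
      have h2 : min (i+1) k = k := min_eq_right (by omega)
      simp only [hz', this, h2, le_refl]
    · have h1 : min i k = i := min_eq_left (by omega)
      have h2 : min (i+1) k = i+1 := min_eq_left (by omega)
      simp only [hz', h1, h2]
      exact le_of_lt (hadj i h).1
  have hsum := eVariationOn.sum_le (f := f) (s := Set.univ) (n := k) hmono (fun i => Set.mem_univ _)
  have hterm : ∀ i ∈ Finset.range k,
      ENNReal.ofReal (2*δ) ≤ edist (f (z' (i+1))) (f (z' i)) := by
    intro i hi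
    have hik : i < k := Finset.mem_range.mp hi
    have h1 : z' i = z i := by simp only [hz', min_eq_left (by omega : i ≤ k)]
    have h2 : z' (i+1) = z (i+1) := by simp only [hz', min_eq_left (by omega : i+1 ≤ k)]
    rw [h1, h2, edist_dist, Real.dist_eq]
    apply ENNReal.ofReal_le_ofReal
    have hbig1 := (hmem i (by omega)).2.2
    have hbig2 := (hmem (i+1) (by omega)).2.2
    have hopp := (hadj i hik).2
    have : |f (z (i+1)) - f (z i)| = |f (z (i+1))| + |f (z i)| :=
      abs_sub_of_opp (by nlinarith)
    rw [this]; linarith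
  have hsum2 : (k : ENNReal) * ENNReal.ofReal (2*δ) ≤ eVariationOn f Set.univ := by
    have e1 : (k : ENNReal) * ENNReal.ofReal (2*δ)
        = ∑ _i ∈ Finset.range k, ENNReal.ofReal (2*δ) := by
      rw [Finset.sum_const, Finset.card_range, nsmul_eq_mul]
    rw [e1]
    exact le_trans (Finset.sum_le_sum hterm) hsum
  have := ENNReal.toReal_mono hBV hsum2
  rw [ENNReal.toReal_mul, ENNReal.toReal_ofReal (by linarith), ENNReal.toReal_natCast] at this
  have hk : (k : ℝ) ≤ (eVariationOn f Set.univ).toReal / (2*δ) := by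
    rw [le_div_iff₀ (by linarith)]
    linarith
  have := Nat.le_floor hk
  omega

end Wlem



-- placeholders for already-proven lemmas (sorried here for isolated compilation)




-- actual new content:

lemma small_case (hBV : eVariationOn f Set.univ ≠ ⊤)
    (hzero : ∀ x, x ∉ Set.Icc (0:ℝ) 1 → f x = 0)
    (hF : ∀ x ∈ Set.Icc (0:ℝ) 1, 0 ≤ ∫ t in (0:ℝ)..x, f t)
    (hiabs : ∀ a b : ℝ, IntervalIntegrable (fun x => |f x|) volume a b)
    (hFc : Continuous (fun x => ∫ t in (0:ℝ)..x, f t))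
    {δ c u p : ℝ} (hδ : 0 < δ) (hc : 0 < c) (hp2 : p ≤ 2)
    (hu0 : 0 ≤ u) (hu1 : u ≤ 1)
    (hsmall : ∀ x ∈ Set.Ioo u 1, |f x| ≤ δ) :
    c * (∫ x in u..1, |f x|) - 2*c*δ*(1-u)
      - c^2/2 * ((eVariationOn f (Set.Icc p 2)).toReal - |f p|)
      ≤ ∫ x in u..1, (∫ t in (0:ℝ)..x, f t) := by
  have h1 : (∫ x in u..1, |f x|) ≤ δ * (1 - u) := by
    have := int_mono_ioo (g := fun x => |f x|) (h := fun _ => δ) hu1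
      (hiabs u 1) intervalIntegrable_const hsmall
    rw [intervalIntegral.integral_const] at this
    simpa [smul_eq_mul, mul_comm] using this
  have h2 : 0 ≤ ∫ x in u..1, (∫ t in (0:ℝ)..x, f t) :=
    intervalIntegral.integral_nonneg hu1 (fun x hx => hF x ⟨le_trans hu0 hx.1, hx.2⟩)
  have h3 : |f p| ≤ (eVariationOn f (Set.Icc p 2)).toReal := by
    have := W_edist hBV hp2
    rwa [hzero 2 (by norm_num), sub_zero] at this
  have hY : c * (∫ x in u..1, |f x|) ≤ c * (δ * (1 - u)) :=
    mul_le_mul_of_nonneg_left h1 (le_of_lt hc)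
  have hX : 0 ≤ c^2/2 * ((eVariationOn f (Set.Icc p 2)).toReal - |f p|) :=
    mul_nonneg (by positivity) (by linarith)
  have hZ : 0 ≤ c * δ * (1 - u) := by
    apply mul_nonneg (mul_nonneg (le_of_lt hc) (le_of_lt hδ)); linarith
  have hE : c * (δ * (1 - u)) = c * δ * (1 - u) := by ring
  linarith

lemma main_ind (hBV : eVariationOn f Set.univ ≠ ⊤)
    (hzero : ∀ x, x ∉ Set.Icc (0:ℝ) 1 → f x = 0)
    (hF : ∀ x ∈ Set.Icc (0:ℝ) 1, 0 ≤ ∫ t in (0:ℝ)..x, f t)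
    (hii : ∀ a b : ℝ, IntervalIntegrable f volume a b)
    (hiabs : ∀ a b : ℝ, IntervalIntegrable (fun x => |f x|) volume a b)
    (hFc : Continuous (fun x => ∫ t in (0:ℝ)..x, f t))
    (hbound : ∀ x, |f x| ≤ (eVariationOn f Set.univ).toReal)
    {δ c : ℝ} (hδ : 0 < δ) (hc : 0 < c) :
    ∀ n : ℕ, ∀ u p : ℝ, -1 ≤ p → p < u → 0 ≤ u → u ≤ 1 →
    AB f δ u n →
    (∀ x, u < x → x ≤ 1 → f p ≠ 0 → ∃ w, p < w ∧ w < x ∧ f p * f w < 0) →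
    c * (∫ x in u..1, |f x|) - 2*c*δ*(1-u)
      - c^2/2 * ((eVariationOn f (Set.Icc p 2)).toReal - |f p|)
      ≤ ∫ x in u..1, (∫ t in (0:ℝ)..x, f t) := by
  intro n
  induction n with
  | zero =>
    intro u p hp hpu hu0 hu1 hAB hsep
    apply small_case hBV hzero hF hiabs hFc hδ hc (by linarith) hu0 hu1
    intro x hx
    by_contra hb
    push_neg at hb
    have := hAB 0 (fun _ => x)
      ⟨fun i _ => ⟨hx.1, le_of_lt hx.2, hb⟩, fun i h => absurd h (by omega)⟩
    omega
  | succ n ih =>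
    intro u p hp hpu hu0 hu1 hAB hsep
    rcases eq_or_lt_of_le hu1 with hu | hu1'
    · -- u = 1 : trivial
      apply small_case hBV hzero hF hiabs hFc hδ hc (by linarith) hu0 hu1
      intro x hx
      rw [hu] at hx
      exact absurd (lt_trans hx.1 hx.2) (lt_irrefl 1)
    -- u < 1
    set T : Set ℝ := {x | x ∈ Set.Icc u 1 ∧
      ((∀ y ∈ Set.Ioo u x, f y ≤ δ) ∨ (∀ y ∈ Set.Ioo u x, -δ ≤ f y))} with hT
    have huT : u ∈ T := ⟨⟨le_refl u, hu1⟩, Or.inl (fun y hy => absurd hy.1 (not_lt.mpr (le_of_lt hy.2) |> fun _ => (lt_irrefl u (lt_trans hy.1 hy.2)).elim))⟩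
    have hTbdd : BddAbove T := ⟨1, fun x hx => hx.1.2⟩
    set t : ℝ := sSup T with ht
    have hut : u ≤ t := le_csSup hTbdd huT
    have ht1 : t ≤ 1 := csSup_le ⟨u, huT⟩ (fun x hx => hx.1.2)
    have hmax : ∀ x, t < x → x ≤ 1 →
        (∃ y ∈ Set.Ioo u x, δ < f y) ∧ (∃ y ∈ Set.Ioo u x, f y < -δ) := by
      intro x hx hx1
      have hxT : x ∉ T := fun hxT => absurd (le_csSup hTbdd hxT) (not_le.mpr hx)
      have hxI : x ∈ Set.Icc u 1 := ⟨le_trans hut (le_of_lt hx), hx1⟩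
      rw [hT] at hxT
      simp only [Set.mem_setOf_eq, not_and_or] at hxT
      rcases hxT with h | h
      · exact absurd hxI h
      · push_neg at h
        obtain ⟨h1, h2⟩ := h
        obtain ⟨y1, hy1, hy1'⟩ := h1
        obtain ⟨y2, hy2, hy2'⟩ := h2
        exact ⟨⟨y1, hy1, hy1'⟩, ⟨y2, hy2, hy2'⟩⟩
    have htu : u < t := by
      rcases eq_or_lt_of_le hut with h | h
      · exfalso
        apply chains_of_dense hδ hu1' _ (n+1) hAB
        intro x hx hx1
        exact hmax x (by rw [← h]; exact hx) hx1
      · exact h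
    have hsingle : (∀ y ∈ Set.Ioo u t, f y ≤ δ) ∨ (∀ y ∈ Set.Ioo u t, -δ ≤ f y) := by
      by_contra hns
      push_neg at hns
      obtain ⟨⟨y1, hy1, hy1'⟩, ⟨y2, hy2, hy2'⟩⟩ := hns
      obtain ⟨x, hxT, hx⟩ := exists_lt_of_lt_csSup ⟨u, huT⟩
        (show max y1 y2 < t from max_lt hy1.2 hy2.2)
      rcases hxT.2 with h | h
      · exact absurd (h y1 ⟨hy1.1, lt_of_le_of_lt (le_max_left _ _) hx⟩) (not_le.mpr hy1')
      · exact absurd (h y2 ⟨hy2.1, lt_of_le_of_lt (le_max_right _ _) hx⟩) (not_le.mpr hy2')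
    have hABt : AB f δ t n := by
      intro k z hchain
      have hmem0 := hchain.1 0 (Nat.zero_le k)
      obtain ⟨⟨w1, hw1, hw1'⟩, ⟨w2, hw2, hw2'⟩⟩ := hmax (z 0) hmem0.1 hmem0.2.1
      have hz0ne : f (z 0) ≠ 0 := by
        intro h
        have := hmem0.2.2
        rw [h] at this
        simp at this
        linarith
      rcases lt_or_gt_of_ne hz0ne with hneg | hpos
      · -- f (z 0) < 0 : prepend w1 with f w1 > δ
        have hch := prepend hchain hut hw1.1
          (lt_of_lt_of_le hw1' (le_abs_self _)) hw1.2
          (mul_neg_of_pos_of_neg (by linarith) hneg)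
        have := hAB (k+1) _ hch
        omega
      · have hch := prepend hchain hut hw2.1
          (lt_of_lt_of_le (by linarith : δ < -(f w2)) (neg_le_abs _)) hw2.2
          (mul_neg_of_neg_of_pos (by linarith) hpos)
        have := hAB (k+1) _ hch
        omega
    clear_value t
    -- splitting of the integrals at t
    have hsplit1 : (∫ x in u..1, |f x|)
        = (∫ x in u..t, |f x|) + ∫ x in t..1, |f x| := by
      rw [intervalIntegral.integral_add_adjacent_intervals (hiabs u t) (hiabs t 1)]
    have hsplit2 : (∫ x in u..1, (∫ s in (0:ℝ)..x, f s))
        = (∫ x in u..t, (∫ s in (0:ℝ)..x, f s)) + ∫ x in t..1, (∫ s in (0:ℝ)..x, f s) := by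
      rw [intervalIntegral.integral_add_adjacent_intervals
        (hFc.intervalIntegrable u t) (hFc.intervalIntegrable t 1)]
    by_cases hbig : ∃ x ∈ Set.Ioo u t, δ < |f x|
    · -- counted piece
      obtain ⟨x0, hx0, hx0'⟩ := hbig
      obtain ⟨ε, hε, hsgnpt⟩ : ∃ ε : ℝ, (ε = 1 ∨ ε = -1) ∧
          ∀ x ∈ Set.Ioo u t, -δ ≤ ε * f x := by
        rcases hsingle with h | h
        · exact ⟨-1, Or.inr rfl, fun x hx => by have := h x hx; nlinarith⟩
        · exact ⟨1, Or.inl rfl, fun x hx => by have := h x hx; nlinarith⟩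
      have hεabs : ∀ x : ℝ, |ε * f x| = |f x| := by
        rcases hε with h | h <;> subst h <;> intro x <;>
          simp [abs_mul]
      -- the sup of ε * f on the piece
      set S : ℝ := sSup ((fun x => ε * f x) '' Set.Ioo u t) with hS
      have hSbdd : BddAbove ((fun x => ε * f x) '' Set.Ioo u t) := by
        refine ⟨(eVariationOn f Set.univ).toReal, ?_⟩
        rintro b ⟨x, hx, rfl⟩
        exact le_trans (le_abs_self _) (le_trans (le_of_eq (hεabs x)) (hbound x))
      have hx0sgn : δ < ε * f x0 := by
        have h1 := hsgnpt x0 hx0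
        have h2 : δ < |ε * f x0| := by rw [hεabs]; exact hx0'
        rcases abs_cases (ε * f x0) with ⟨he, _⟩ | ⟨he, _⟩
        · rwa [he] at h2
        · rw [he] at h2; linarith
      have hδS : δ < S :=
        lt_of_lt_of_le hx0sgn (le_csSup hSbdd (Set.mem_image_of_mem _ hx0))
      obtain ⟨b, hbmem, hb⟩ := exists_lt_of_lt_csSup
        (Set.Nonempty.image _ ⟨x0, hx0⟩)
        (show max δ (S/2) < S from max_lt hδS (by linarith))
      obtain ⟨y, hyIoo, rfl⟩ := hbmem
      have hyδ : δ < ε * f y := lt_of_le_of_lt (le_max_left _ _) hb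
      have hyS : S/2 < ε * f y := lt_of_le_of_lt (le_max_right _ _) hb
      set M : ℝ := 2 * (ε * f y) with hM
      have hM0 : 0 < M := by rw [hM]; linarith
      have habsM : ∀ x ∈ Set.Ioo u t, |f x| ≤ M := by
        intro x hx
        have h1 : ε * f x ≤ S := le_csSup hSbdd (Set.mem_image_of_mem _ hx)
        have h2 := hsgnpt x hx
        rw [← hεabs x]
        rw [abs_le]
        constructor
        · rw [hM]; linarith
        · rw [hM]; linarith
      have hfyabs : |f y| = ε * f y := by
        rcases hε with h | h <;> subst h
        · simp only [one_mul] at hyδ ⊢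
          exact abs_of_pos (by linarith)
        · have : f y < 0 := by nlinarith
          rw [abs_of_neg this]; ring
      have hfyne : f y ≠ 0 := by
        intro h
        rw [h] at hfyabs
        simp at hfyabs
        have := hyδ
        rw [h] at this
        simp at this
        linarith
      -- piece estimate
      have hpiece := piece hii hiabs hFc hF hδ hc hM0 hu0 htu ht1 hε hsgnpt habsM
      -- separator property for y
      have hsep_y : ∀ x, t < x → x ≤ 1 → f y ≠ 0 →
          ∃ w, y < w ∧ w < x ∧ f y * f w < 0 := by
        intro x hx hx1 _
        obtain ⟨⟨w1, hw1, hw1'⟩, ⟨w2, hw2, hw2'⟩⟩ := hmax x hx hx1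
        rcases hε with h | h
        · -- ε = 1 : f y > δ, pick w2 with f w2 < -δ
          subst h
          simp only [one_mul] at hyδ hsgnpt
          refine ⟨w2, ?_, hw2.2, mul_neg_of_pos_of_neg (by linarith) (by linarith)⟩
          by_contra hle
          push_neg at hle
          have hw2t : w2 < t := lt_of_le_of_lt hle hyIoo.2
          have := hsgnpt w2 ⟨hw2.1, hw2t⟩
          linarith
        · -- ε = -1 : f y < -δ, pick w1 with f w1 > δ
          subst h
          have hyneg : f y < -δ := by nlinarith
          refine ⟨w1, ?_, hw1.2, mul_neg_of_neg_of_pos (by linarith) (by linarith)⟩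
          by_contra hle
          push_neg at hle
          have hw1t : w1 < t := lt_of_le_of_lt hle hyIoo.2
          have := hsgnpt w1 ⟨hw1.1, hw1t⟩
          nlinarith
      -- recursion
      have hIH := ih t y (by linarith [hyIoo.1] : (-1:ℝ) ≤ y) hyIoo.2
        (by linarith) ht1 hABt hsep_y
      -- budget
      have hbud : |f p| + |f y| + (eVariationOn f (Set.Icc y 2)).toReal
          ≤ (eVariationOn f (Set.Icc p 2)).toReal := by
        have hpy : p ≤ y := by linarith [hyIoo.1]
        have hy2 : y ≤ 2 := by linarith [hyIoo.2]
        rcases eq_or_ne (f p) 0 with h0 | h0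
        · exact budget_direct hBV hpy hy2 (Or.inl h0)
        rcases lt_trichotomy (f p * f y) 0 with hlt | heq | hgt
        · exact budget_direct hBV hpy hy2 (Or.inr hlt)
        · rcases mul_eq_zero.mp heq with h | h
          · exact absurd h h0
          · exact absurd h hfyne
        · obtain ⟨w, hpw, hwy, hprod⟩ := hsep y (by linarith [hyIoo.1])
            (by linarith [hyIoo.2]) h0
          have hwfy : f w * f y < 0 := by
            rcases mul_pos_iff.mp hgt with ⟨hp1, hy1⟩ | ⟨hp1, hy1⟩
            · rcases mul_neg_iff.mp hprod with ⟨_, hw1⟩ | ⟨hp2, _⟩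
              · exact mul_neg_of_neg_of_pos hw1 hy1
              · linarith
            · rcases mul_neg_iff.mp hprod with ⟨hp2, _⟩ | ⟨_, hw1⟩
              · linarith
              · exact mul_neg_of_pos_of_neg hw1 hy1
          exact budget_sep hBV (le_of_lt hpw) (le_of_lt hwy) hy2 hprod hwfy
      -- combine
      have hc2 : (0:ℝ) ≤ c^2/2 := by positivity
      have hmul := mul_le_mul_of_nonneg_left hbud hc2
      have hMfy : M = 2 * |f y| := by rw [hM, hfyabs]
      clear_value S M
      rw [hsplit1, hsplit2]
      have e0 : c * ((∫ x in u..t, |f x|) + ∫ x in t..1, |f x|)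
          = c * (∫ x in u..t, |f x|) + c * (∫ x in t..1, |f x|) := by ring
      have eA : c^2/2 * ((eVariationOn f (Set.Icc p 2)).toReal - |f p|)
          = c^2/2 * (eVariationOn f (Set.Icc p 2)).toReal - c^2/2 * |f p| := by ring
      have eB : c^2/2 * ((eVariationOn f (Set.Icc y 2)).toReal - |f y|)
          = c^2/2 * (eVariationOn f (Set.Icc y 2)).toReal - c^2/2 * |f y| := by ring
      have eC : c^2/2 * M = c^2/2 * |f y| + c^2/2 * |f y| := by rw [hMfy]; ring
      have eE : c^2/2 * (|f p| + |f y| + (eVariationOn f (Set.Icc y 2)).toReal)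
          = c^2/2 * |f p| + c^2/2 * |f y| + c^2/2 * (eVariationOn f (Set.Icc y 2)).toReal := by
        ring
      have eF : 2*c*δ*(1-u) = 2*c*δ*(t-u) + 2*c*δ*(1-t) := by ring
      rw [eB] at hIH
      rw [eC] at hpiece
      rw [eE] at hmul
      linarith [hpiece, hIH, hmul]
    · -- uncounted piece
      push_neg at hbig
      have hIH := ih t p hp (lt_trans hpu htu) (by linarith) ht1 hABt
        (fun x hx hx1 => hsep x (lt_trans htu hx) hx1)
      have h1 : (∫ x in u..t, |f x|) ≤ δ * (t - u) := by
        have := int_mono_ioo (g := fun x => |f x|) (h := fun _ => δ) (le_of_lt htu)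
          (hiabs u t) intervalIntegrable_const hbig
        rw [intervalIntegral.integral_const] at this
        simpa [smul_eq_mul, mul_comm] using this
      have h2 : 0 ≤ ∫ x in u..t, (∫ s in (0:ℝ)..x, f s) :=
        intervalIntegral.integral_nonneg (le_of_lt htu)
          (fun x hx => hF x ⟨le_trans hu0 hx.1, le_trans hx.2 ht1⟩)
      rw [hsplit1, hsplit2]
      have e0 : c * ((∫ x in u..t, |f x|) + ∫ x in t..1, |f x|)
          = c * (∫ x in u..t, |f x|) + c * (∫ x in t..1, |f x|) := by ring
      have eF : 2*c*δ*(1-u) = 2*c*δ*(t-u) + 2*c*δ*(1-t) := by ring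
      have hY := mul_le_mul_of_nonneg_left h1 (le_of_lt hc)
      have eG : c * (δ*(t-u)) = c*δ*(t-u) := by ring
      have hZ : 0 ≤ c*δ*(t-u) :=
        mul_nonneg (mul_nonneg (le_of_lt hc) (le_of_lt hδ)) (by linarith)
      linarith [hIH, h2, hY]


end BVKey

open MeasureTheory

/-- For a function `f` of bounded total variation on `[0,1]` (vanishing outside `[0,1]`, so
that the total variation over `ℝ` also includes the boundary jumps `|f(0-)|` and `|f(1+)|`),
if `F(x) = ∫₀ˣ f ≥ 0` on `[0,1]`, then
`(∫₀¹ F) · (total variation of f) ≥ (1/2) (∫₀¹ |f|)²`. -/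
theorem bv_key_inequality (f : ℝ → ℝ)
    (hzero : ∀ x, x ∉ Set.Icc (0:ℝ) 1 → f x = 0)
    (hBV : eVariationOn f Set.univ ≠ ⊤)
    (hF : ∀ x ∈ Set.Icc (0:ℝ) 1, 0 ≤ ∫ t in (0:ℝ)..x, f t) :
    (1/2) * (∫ x in (0:ℝ)..1, |f x|)^2
      ≤ (∫ x in (0:ℝ)..1, ∫ t in (0:ℝ)..x, f t) * (eVariationOn f Set.univ).toReal := by
  classical
  set Vr : ℝ := (eVariationOn f Set.univ).toReal with hVr
  have hm : Measurable f := BVKey.meas_of_bv hBV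
  have hbound : ∀ x, |f x| ≤ Vr := BVKey.abs_le_var hzero hBV
  have hii : ∀ a b : ℝ, IntervalIntegrable f volume a b := BVKey.intInt hm hbound
  have hiabs : ∀ a b : ℝ, IntervalIntegrable (fun x => |f x|) volume a b :=
    BVKey.intInt hm.abs (fun x => by rw [abs_abs]; exact hbound x)
  have hVr0 : (0:ℝ) ≤ Vr := ENNReal.toReal_nonneg
  have hFc : Continuous (fun x => ∫ t in (0:ℝ)..x, f t) := BVKey.F_cont hii hVr0 hbound
  set A : ℝ := ∫ x in (0:ℝ)..1, |f x| with hA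
  set D : ℝ := ∫ x in (0:ℝ)..1, (∫ t in (0:ℝ)..x, f t) with hD
  have hA0 : 0 ≤ A :=
    intervalIntegral.integral_nonneg zero_le_one (fun x _ => abs_nonneg _)
  have hD0 : 0 ≤ D :=
    intervalIntegral.integral_nonneg zero_le_one (fun x hx => hF x hx)
  clear_value A D
  have step1 : ∀ δ : ℝ, 0 < δ → ∀ c : ℝ, 0 < c → c * A - 2*c*δ - c^2/2 * Vr ≤ D := by
    intro δ hδ c hc
    have hAB := BVKey.AB_top hBV (δ := δ) hδ
    have hsep : ∀ x, (0:ℝ) < x → x ≤ 1 → f (-1) ≠ 0 →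
        ∃ w, (-1:ℝ) < w ∧ w < x ∧ f (-1) * f w < 0 := by
      intro x _ _ hne
      exact absurd (hzero (-1) (by norm_num)) hne
    have hmain := BVKey.main_ind hBV hzero hF hii hiabs hFc hbound hδ hc _ 0 (-1)
      le_rfl (by norm_num) le_rfl zero_le_one hAB hsep
    have hf1 : f (-1) = 0 := hzero (-1) (by norm_num)
    rw [hf1] at hmain
    simp only [abs_zero, sub_zero] at hmain
    have hWle : (eVariationOn f (Set.Icc (-1:ℝ) 2)).toReal ≤ Vr := by
      rw [hVr]
      exact ENNReal.toReal_mono hBV (eVariationOn.mono f (Set.subset_univ _))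
    have h1 : c^2/2 * (eVariationOn f (Set.Icc (-1:ℝ) 2)).toReal ≤ c^2/2 * Vr :=
      mul_le_mul_of_nonneg_left hWle (by positivity)
    have h2 : 2*c*δ*(1:ℝ) = 2*c*δ := by norm_num
    rw [h2] at hmain
    rw [← hA, ← hD] at hmain
    linarith
  have step2 : ∀ c : ℝ, 0 < c → c * A - c^2/2 * Vr ≤ D := by
    intro c hc
    apply le_of_forall_pos_le_add
    intro ε hε
    have hδ : 0 < ε / (2*c) := by positivity
    have h1 := step1 _ hδ c hc
    have h2 : 2*c*(ε/(2*c)) = ε := by field_simp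
    linarith
  show (1/2) * A^2 ≤ D * Vr
  rcases eq_or_lt_of_le hVr0 with hV0 | hV0
  · have hA00 : A = 0 := by
      by_contra hAne
      have hA0' : 0 < A := lt_of_le_of_ne hA0 (Ne.symm hAne)
      have h3 := step2 ((D+1)/A) (by positivity)
      rw [← hV0] at h3
      have h4 : (D+1)/A * A = D + 1 := by field_simp
      have h5 : ((D+1)/A)^2/2 * 0 = 0 := by ring
      rw [h5, h4] at h3
      linarith
    rw [hA00]
    norm_num
    exact mul_nonneg hD0 hVr0
  · rcases eq_or_lt_of_le hA0 with hA00 | hA0'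
    · rw [← hA00]
      norm_num
      exact mul_nonneg hD0 hVr0
    · have h3 := step2 (A/Vr) (by positivity)
      have h4 : (A/Vr) * A - (A/Vr)^2/2 * Vr = A^2/(2*Vr) := by
        field_simp
        ring
      rw [h4] at h3
      have h5 := mul_le_mul_of_nonneg_right h3 hVr0
      have h6 : A^2/(2*Vr)*Vr = 1/2*A^2 := by field_simp
      rw [h6] at h5
      linarith
end

section
/- Let g be a nonnegative measurable function on [0,1] bounded by c > 0, and let f be a C^2 concave decreasing function on [0,1]. Then -integral from 0 to 1 of f'(x)*g(x) dx <= c * ( f(1 - (1/c)*integral from 0 to 1 of g(z) dz) - f(1) ). -/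
open MeasureTheory

private lemma aux_int {φ g : ℝ → ℝ} {C c : ℝ}
    (hφ : ContinuousOn φ (Set.Icc (0:ℝ) 1)) (hgm : Measurable g)
    (hbd : ∀ x ∈ Set.Icc (0:ℝ) 1, ‖φ x‖ ≤ C)
    (hgbd : ∀ x ∈ Set.Icc (0:ℝ) 1, ‖g x‖ ≤ c)
    {u v : ℝ} (hu : 0 ≤ u) (huv : u ≤ v) (hv : v ≤ 1) :
    IntervalIntegrable (fun x => φ x * g x) volume u v := by
  rw [intervalIntegrable_iff_integrableOn_Ioc_of_le huv]
  have hsub : Set.Ioc u v ⊆ Set.Icc (0:ℝ) 1 := fun x hx => ⟨hu.trans hx.1.le, hx.2.trans hv⟩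
  have hsub2 : Set.Ioc u v ⊆ Set.Ioc u v := subset_rfl
  have hmeas : AEStronglyMeasurable (fun x => φ x * g x) (volume.restrict (Set.Ioc u v)) :=
    ((hφ.mono hsub).aestronglyMeasurable measurableSet_Ioc).mul hgm.aestronglyMeasurable
  refine Integrable.mono' (integrable_const (C * c)) hmeas ?_
  refine (ae_restrict_iff' measurableSet_Ioc).2 (Filter.Eventually.of_forall fun x hx => ?_)
  have h1 := hbd x (hsub hx)
  have h2 := hgbd x (hsub hx)
  calc ‖φ x * g x‖ = ‖φ x‖ * ‖g x‖ := norm_mul _ _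
    _ ≤ C * c := mul_le_mul h1 h2 (norm_nonneg _) ((norm_nonneg _).trans h1)

/-- The extremal inequality: for a nonnegative measurable `g ≤ c` on `[0,1]` and a `C²`
concave decreasing `f` on `[0,1]`,
`-∫₀¹ f'(x) g(x) dx ≤ c (f(1 - (1/c)∫₀¹ g) - f(1))`. -/
theorem extremal_inequality (g : ℝ → ℝ) (c : ℝ) (hc : 0 < c)
    (hg_meas : Measurable g)
    (hg : ∀ x ∈ Set.Icc (0:ℝ) 1, 0 ≤ g x ∧ g x ≤ c)
    (f : ℝ → ℝ) (hf : ContDiffOn ℝ 2 f (Set.Icc (0:ℝ) 1))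
    (hconc : ConcaveOn ℝ (Set.Icc (0:ℝ) 1) f)
    (hdec : AntitoneOn f (Set.Icc (0:ℝ) 1)) :
    -∫ x in (0:ℝ)..1, derivWithin f (Set.Icc (0:ℝ) 1) x * g x
      ≤ c * (f (1 - (1/c) * ∫ z in (0:ℝ)..1, g z) - f 1) := by
  have hUD : UniqueDiffOn ℝ (Set.Icc (0:ℝ) 1) := uniqueDiffOn_Icc one_pos
  set φ : ℝ → ℝ := derivWithin f (Set.Icc (0:ℝ) 1) with hφdef
  have hfd : DifferentiableOn ℝ f (Set.Icc (0:ℝ) 1) := hf.differentiableOn two_ne_zero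
  have hφcont : ContinuousOn φ (Set.Icc (0:ℝ) 1) :=
    hf.continuousOn_derivWithin hUD one_le_two
  have hφanti : AntitoneOn φ (Set.Icc (0:ℝ) 1) := hconc.antitoneOn_derivWithin hfd
  obtain ⟨C, hC⟩ := (isCompact_Icc).exists_bound_of_continuousOn hφcont
  have hgbd : ∀ x ∈ Set.Icc (0:ℝ) 1, ‖g x‖ ≤ c := fun x hx => by
    rw [Real.norm_eq_abs, abs_le]
    exact ⟨by linarith [(hg x hx).1, hc.le], (hg x hx).2⟩
  have hgI : ∀ u v : ℝ, 0 ≤ u → u ≤ v → v ≤ 1 → IntervalIntegrable g volume u v := by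
    intro u v hu huv hv
    have := aux_int (φ := fun _ => (1:ℝ)) (C := 1) continuousOn_const hg_meas
      (by simp) hgbd hu huv hv
    simpa using this
  have hφgI : ∀ u v : ℝ, 0 ≤ u → u ≤ v → v ≤ 1 →
      IntervalIntegrable (fun x => φ x * g x) volume u v :=
    fun u v hu huv hv => aux_int hφcont hg_meas hC hgbd hu huv hv
  set J := ∫ z in (0:ℝ)..1, g z with hJ
  have hJ0 : 0 ≤ J := intervalIntegral.integral_nonneg (by norm_num) fun x hx => (hg x hx).1
  have hJc : J ≤ c := by
    calc J ≤ ∫ z in (0:ℝ)..1, c := intervalIntegral.integral_mono_on (by norm_num)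
          (hgI 0 1 le_rfl zero_le_one le_rfl) intervalIntegrable_const fun x hx => (hg x hx).2
      _ = c := by simp
  set a : ℝ := 1 - (1/c) * J with ha_def
  have hcJ1 : (1/c) * J ≤ 1 := by
    rw [div_mul_eq_mul_div, one_mul, div_le_one hc]; exact hJc
  have ha0 : 0 ≤ a := by simp only [ha_def]; linarith
  have ha1 : a ≤ 1 := by
    have : 0 ≤ (1/c) * J := mul_nonneg (by positivity) hJ0
    simp only [ha_def]; linarith
  have haI : a ∈ Set.Icc (0:ℝ) 1 := ⟨ha0, ha1⟩
  have hJeq : c * (1 - a) = J := by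
    simp only [ha_def]; field_simp; ring
  set K := φ a with hK
  have hsub1 : Set.Icc a 1 ⊆ Set.Icc (0:ℝ) 1 := Set.Icc_subset_Icc ha0 le_rfl
  -- FTC on [a, 1]
  have hφint : IntervalIntegrable φ volume a 1 := by
    apply ContinuousOn.intervalIntegrable
    rw [Set.uIcc_of_le ha1]; exact hφcont.mono hsub1
  have hFTC : ∫ x in a..1, φ x = f 1 - f a := by
    apply intervalIntegral.integral_eq_sub_of_hasDeriv_right_of_le ha1
      (hf.continuousOn.mono hsub1) _ hφint
    intro x hx
    have hxI : x ∈ Set.Ioo (0:ℝ) 1 := ⟨lt_of_le_of_lt ha0 hx.1, hx.2⟩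
    have h1 : HasDerivAt f (φ x) x :=
      ((hfd x ⟨hxI.1.le, hxI.2.le⟩).hasDerivWithinAt).hasDerivAt
        (Icc_mem_nhds hxI.1 hxI.2)
    exact h1.hasDerivWithinAt
  -- split the integral
  have hsplit : ∫ x in (0:ℝ)..1, φ x * g x
      = (∫ x in (0:ℝ)..a, φ x * g x) + ∫ x in a..1, φ x * g x :=
    (intervalIntegral.integral_add_adjacent_intervals
      (hφgI 0 a le_rfl ha0 ha1) (hφgI a 1 ha0 ha1 le_rfl)).symm
  have hgsplit : (∫ x in (0:ℝ)..a, g x) + ∫ x in a..1, g x = J :=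
    intervalIntegral.integral_add_adjacent_intervals
      (hgI 0 a le_rfl ha0 ha1) (hgI a 1 ha0 ha1 le_rfl)
  -- bound on [0, a]
  have hB1 : -∫ x in (0:ℝ)..a, φ x * g x ≤ -K * ∫ x in (0:ℝ)..a, g x := by
    rw [← intervalIntegral.integral_neg, ← intervalIntegral.integral_const_mul]
    apply intervalIntegral.integral_mono_on ha0 ((hφgI 0 a le_rfl ha0 ha1).neg)
      ((hgI 0 a le_rfl ha0 ha1).const_mul _)
    intro x hx
    have hxI : x ∈ Set.Icc (0:ℝ) 1 := ⟨hx.1, hx.2.trans ha1⟩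
    have h1 : K ≤ φ x := hφanti hxI haI hx.2
    have h2 := (hg x hxI).1
    simp only [Pi.neg_apply]
    nlinarith
  -- bound on [a, 1]
  have hB2 : -∫ x in a..1, φ x * g x
      ≤ (-K * ∫ x in a..1, g x) + c * (K * (1 - a) - (f 1 - f a)) := by
    have e1 : ∫ x in a..1, (-K * g x + (K - φ x) * c)
        = (-K * ∫ x in a..1, g x) + c * (K * (1 - a) - (f 1 - f a)) := by
      rw [intervalIntegral.integral_add ((hgI a 1 ha0 ha1 le_rfl).const_mul _)
        ((intervalIntegrable_const.sub hφint).mul_const _),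
        intervalIntegral.integral_const_mul, intervalIntegral.integral_mul_const,
        intervalIntegral.integral_sub intervalIntegrable_const hφint,
        hFTC, intervalIntegral.integral_const]
      simp only [smul_eq_mul]
      ring
    rw [← e1, ← intervalIntegral.integral_neg]
    apply intervalIntegral.integral_mono_on ha1 ((hφgI a 1 ha0 ha1 le_rfl).neg)
      (((hgI a 1 ha0 ha1 le_rfl).const_mul _).add
        ((intervalIntegrable_const.sub hφint).mul_const _))
    intro x hx
    have hxI : x ∈ Set.Icc (0:ℝ) 1 := hsub1 hx
    have h1 : φ x ≤ K := hφanti haI hxI hx.1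
    have h2 := (hg x hxI).2
    have h3 := (hg x hxI).1
    simp only [Pi.neg_apply]
    nlinarith
  -- combine
  have hzero : -K * J + c * (K * (1 - a)) = 0 := by rw [← hJeq]; ring
  calc -∫ x in (0:ℝ)..1, φ x * g x
      = (-∫ x in (0:ℝ)..a, φ x * g x) + -∫ x in a..1, φ x * g x := by rw [hsplit]; ring
    _ ≤ (-K * ∫ x in (0:ℝ)..a, g x)
        + ((-K * ∫ x in a..1, g x) + c * (K * (1 - a) - (f 1 - f a))) := add_le_add hB1 hB2
    _ = -K * J + c * (K * (1 - a)) + c * (f a - f 1) := by rw [← hgsplit]; ring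
    _ = c * (f a - f 1) := by rw [hzero]; ring
end

section
/- Let mu, nu be probability measures on [0,1]. Then |B(mu) - B(nu)| <= sqrt(d(mu,nu)) * sqrt(2 - d(mu,nu)), where B(a) = integral of sqrt(1-z^2) da(z) is the Battacharyya functional and d is the Wasserstein-1 distance (L1 distance of CDFs). -/
open MeasureTheory

/-- The Battacharyya functional of a `|D|`-distribution. -/
noncomputable def batta (μ : Measure ℝ) : ℝ := ∫ z, Real.sqrt (1 - z^2) ∂μ

namespace WBBaux

open Set
open scoped ENNReal

/-- The weight function `x / √(1-x²)`, the (negated) derivative of `√(1-x²)`. -/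
noncomputable def W (x : ℝ) : ℝ := x / Real.sqrt (1 - x ^ 2)

lemma W_meas : Measurable W :=
  measurable_id.div ((measurable_const.sub (measurable_id.pow_const 2)).sqrt)

lemma W_nonneg {x : ℝ} (hx : 0 ≤ x) : 0 ≤ W x :=
  div_nonneg hx (Real.sqrt_nonneg _)

lemma W_le_bound {x : ℝ} (hx : x ∈ Set.Icc (0:ℝ) 1) :
    W x ≤ (1 - x) ^ (-2⁻¹ : ℝ) := by
  obtain ⟨h0, h1⟩ := hx
  rcases eq_or_lt_of_le h1 with rfl | h1
  · have : W 1 = 0 := by norm_num [W]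
    rw [this]
    rw [show (1:ℝ) - 1 = 0 by ring, Real.zero_rpow (by norm_num)]
  · have hpos : (0:ℝ) < 1 - x := by linarith
    have hsq : Real.sqrt (1 - x) ≤ Real.sqrt (1 - x ^ 2) :=
      Real.sqrt_le_sqrt (by nlinarith)
    have hspos : 0 < Real.sqrt (1 - x) := Real.sqrt_pos.2 hpos
    have h2 : W x ≤ 1 / Real.sqrt (1 - x) := div_le_div₀ zero_le_one h1.le hspos hsq
    have h3 : (1 - x) ^ (-2⁻¹ : ℝ) = 1 / Real.sqrt (1 - x) := by
      rw [Real.sqrt_eq_rpow, one_div, ← Real.rpow_neg hpos.le]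
      norm_num
    rw [h3]; exact h2

lemma W_intOn {z : ℝ} (hz : 0 ≤ z) : IntegrableOn W (Set.Ioc z 1) := by
  have hb : IntervalIntegrable (fun x : ℝ => (1 - x) ^ (-2⁻¹ : ℝ)) volume z 1 := by
    have h := (intervalIntegral.intervalIntegrable_rpow' (r := -2⁻¹) (by norm_num)
      (a := (1:ℝ) - z) (b := (1:ℝ) - 1)).comp_sub_left 1
    simpa using h
  refine Integrable.mono hb.1 W_meas.aestronglyMeasurable ?_
  filter_upwards [ae_restrict_mem measurableSet_Ioc] with x hx
  have hx0 : 0 ≤ x := hz.trans hx.1.le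
  rw [Real.norm_eq_abs, Real.norm_eq_abs, abs_of_nonneg (W_nonneg hx0)]
  exact (W_le_bound ⟨hx0, hx.2⟩).trans (le_abs_self _)

lemma W_ftc {z : ℝ} (hz : z ∈ Set.Icc (0:ℝ) 1) :
    ∫ x in Set.Ioc z 1, W x = Real.sqrt (1 - z ^ 2) := by
  have h1 : z ≤ 1 := hz.2
  have hint : IntervalIntegrable W volume z 1 :=
    (intervalIntegrable_iff_integrableOn_Ioc_of_le h1).2 (W_intOn hz.1)
  have key := intervalIntegral.integral_eq_sub_of_hasDeriv_right_of_le h1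
    (f := fun x => -Real.sqrt (1 - x ^ 2)) (f' := W)
    (Continuous.continuousOn (by continuity)) ?_ hint
  · rw [← intervalIntegral.integral_of_le h1, key]
    norm_num
  · intro x hx
    have hx1 : 0 < 1 - x ^ 2 := by
      rcases hx with ⟨ha, hb⟩
      have : -1 < x := lt_of_lt_of_le (by linarith [hz.1]) ha.le
      nlinarith
    have hd : HasDerivAt (fun x : ℝ => 1 - x ^ 2) (-(2 * x)) x := by
      simpa using (hasDerivAt_pow 2 x).const_sub 1
    have hs : HasDerivAt (fun x : ℝ => Real.sqrt (1 - x ^ 2))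
        (-(2 * x) / (2 * Real.sqrt (1 - x ^ 2))) x := hd.sqrt hx1.ne'
    have hneg := hs.neg
    have heq : -(-(2 * x) / (2 * Real.sqrt (1 - x ^ 2))) = W x := by
      have hsp : Real.sqrt (1 - x ^ 2) ≠ 0 := (Real.sqrt_pos.2 hx1).ne'
      simp only [W]
      field_simp
    rw [heq] at hneg
    exact hneg.hasDerivWithinAt

lemma W_mono {x y : ℝ} (hx : 0 ≤ x) (hxy : x ≤ y) (hy : y < 1) : W x ≤ W y := by
  have hy0 : 0 < 1 - y ^ 2 := by nlinarith
  have h1 : Real.sqrt (1 - y ^ 2) ≤ Real.sqrt (1 - x ^ 2) :=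
    Real.sqrt_le_sqrt (by nlinarith)
  have h2 : 0 < Real.sqrt (1 - y ^ 2) := Real.sqrt_pos.2 hy0
  exact div_le_div₀ (hx.trans hxy) hxy h2 h1

lemma intOn_W_mul {h : ℝ → ℝ} (hm : Measurable h) (hb : ∀ x, |h x| ≤ 1) {a : ℝ} (ha : 0 ≤ a) :
    IntegrableOn (fun x => W x * h x) (Set.Ioc a 1) := by
  refine Integrable.mono (W_intOn ha) ((W_meas.mul hm).aestronglyMeasurable) ?_
  filter_upwards [ae_restrict_mem measurableSet_Ioc] with x hx
  have hw : 0 ≤ W x := W_nonneg (ha.trans hx.1.le)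
  rw [Real.norm_eq_abs, Real.norm_eq_abs, abs_mul, abs_of_nonneg hw]
  calc W x * |h x| ≤ W x * 1 := mul_le_mul_of_nonneg_left (hb x) hw
  _ = W x := mul_one _

lemma cdf_mono (μ : Measure ℝ) [IsFiniteMeasure μ] : Monotone (cdf μ) := fun _ _ hab =>
  ENNReal.toReal_mono (measure_ne_top μ _) (measure_mono (Iic_subset_Iic.2 hab))

lemma cdf_meas (μ : Measure ℝ) [IsFiniteMeasure μ] : Measurable (cdf μ) :=
  (cdf_mono μ).measurable

lemma cdf_nonneg (μ : Measure ℝ) (x : ℝ) : 0 ≤ cdf μ x := ENNReal.toReal_nonneg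

lemma cdf_le_one (μ : Measure ℝ) [IsProbabilityMeasure μ] (x : ℝ) : cdf μ x ≤ 1 := by
  unfold cdf
  rw [show (1:ℝ) = (1:ℝ≥0∞).toReal by simp]
  exact ENNReal.toReal_mono ENNReal.one_ne_top prob_le_one

/-- The key integration-by-parts/Fubini identity:
`∫ √(1-z²) dμ(z) = ∫₀¹ x/√(1-x²) · F_μ(x) dx`. -/
lemma batta_eq (μ : Measure ℝ) [IsProbabilityMeasure μ] (hμ : μ (Set.Icc (0:ℝ) 1)ᶜ = 0) :
    batta μ = ∫ x in Set.Ioc (0:ℝ) 1, W x * cdf μ x := by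
  set Wt : ℝ → ℝ≥0∞ := fun x => ENNReal.ofReal (W x) with hWtdef
  have hWt : Measurable Wt := ENNReal.measurable_ofReal.comp W_meas
  have h1 : batta μ = (∫⁻ z, ENNReal.ofReal (Real.sqrt (1 - z ^ 2)) ∂μ).toReal := by
    unfold batta
    rw [integral_eq_lintegral_of_nonneg_ae (ae_of_all _ fun z => Real.sqrt_nonneg (1 - z ^ 2))
      (Measurable.aestronglyMeasurable (by fun_prop))]
  have hres : μ.restrict (Set.Icc (0:ℝ) 1) = μ :=
    Measure.restrict_eq_self_of_ae_mem (by rw [ae_iff]; exact hμ)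
  have h2 : ∀ z ∈ Set.Icc (0:ℝ) 1,
      ENNReal.ofReal (Real.sqrt (1 - z ^ 2))
        = ∫⁻ x in Set.Ioc (0:ℝ) 1, (Set.Ici z).indicator Wt x := by
    intro z hz
    rw [← W_ftc hz, ofReal_integral_eq_lintegral_ofReal (W_intOn hz.1)
      ((ae_restrict_iff' measurableSet_Ioc).2 (ae_of_all _ fun x hx =>
        W_nonneg (hz.1.trans hx.1.le)))]
    have hae : (Set.Ioc z 1 : Set ℝ) =ᵐ[volume] ((Set.Ioc (0:ℝ) 1 ∩ Set.Ici z : Set ℝ)) := by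
      rw [MeasureTheory.ae_eq_set]
      constructor
      · have hsub : Set.Ioc z 1 ⊆ Set.Ioc (0:ℝ) 1 ∩ Set.Ici z := fun x hx =>
          ⟨⟨lt_of_le_of_lt hz.1 hx.1, hx.2⟩, hx.1.le⟩
        rw [Set.diff_eq_empty.2 hsub]; exact measure_empty
      · refine measure_mono_null ?_ (Real.volume_singleton (a := z))
        rintro x ⟨⟨⟨h0x, h1x⟩, h2x⟩, h3x⟩
        have hnlt : ¬ z < x := fun hlt => h3x ⟨hlt, h1x⟩
        exact Set.mem_singleton_iff.2 (le_antisymm (not_lt.1 hnlt) h2x)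
    rw [setLIntegral_congr hae, lintegral_indicator measurableSet_Ici,
      Measure.restrict_restrict measurableSet_Ici, Set.inter_comm]
  have hswap : ∫⁻ z in Set.Icc (0:ℝ) 1, (∫⁻ x in Set.Ioc (0:ℝ) 1, (Set.Ici z).indicator Wt x) ∂μ
      = ∫⁻ x in Set.Ioc (0:ℝ) 1, (∫⁻ z in Set.Icc (0:ℝ) 1, (Set.Ici z).indicator Wt x ∂μ) := by
    refine lintegral_lintegral_swap (μ := μ.restrict (Set.Icc (0:ℝ) 1))
      (ν := volume.restrict (Set.Ioc (0:ℝ) 1)) (f := fun (z x : ℝ) => (Set.Ici z).indicator Wt x) ?_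
    have hme : (Function.uncurry fun (z x : ℝ) => (Set.Ici z).indicator Wt x)
        = Set.indicator {p : ℝ × ℝ | p.1 ≤ p.2} (fun p => Wt p.2) := by
      ext p
      by_cases h : p.1 ≤ p.2 <;>
        simp [Function.uncurry, Set.indicator, h, Set.mem_Ici]
    rw [hme]
    exact ((hWt.comp measurable_snd).indicator
      (measurableSet_le measurable_fst measurable_snd)).aemeasurable
  have hinner : ∀ x : ℝ, ∫⁻ z in Set.Icc (0:ℝ) 1, (Set.Ici z).indicator Wt x ∂μ
      = Wt x * μ (Set.Iic x) := by
    intro x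
    have hpt : ∀ z : ℝ, (Set.Ici z).indicator Wt x = (Set.Iic x).indicator (fun _ => Wt x) z := by
      intro z
      by_cases h : z ≤ x <;> simp [Set.indicator, h]
    rw [lintegral_congr hpt, lintegral_indicator measurableSet_Iic, setLIntegral_const,
      Measure.restrict_apply measurableSet_Iic, measure_inter_conull hμ]
  have hfinal : ∫ x in Set.Ioc (0:ℝ) 1, W x * cdf μ x
      = (∫⁻ x in Set.Ioc (0:ℝ) 1, Wt x * μ (Set.Iic x)).toReal := by
    rw [integral_eq_lintegral_of_nonneg_ae
      ((ae_restrict_iff' measurableSet_Ioc).2 (ae_of_all _ fun x hx =>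
        mul_nonneg (W_nonneg hx.1.le) (cdf_nonneg μ x)))
      ((W_meas.mul (cdf_meas μ)).aestronglyMeasurable)]
    congr 1
    refine setLIntegral_congr_fun_ae measurableSet_Ioc (ae_of_all _ fun x hx => ?_)
    rw [ENNReal.ofReal_mul (W_nonneg hx.1.le)]
    unfold cdf
    rw [ENNReal.ofReal_toReal (measure_ne_top μ _)]
  rw [h1, hfinal]
  congr 1
  conv_lhs => rw [← hres]
  rw [setLIntegral_congr_fun_ae measurableSet_Icc (ae_of_all _ h2), hswap]
  exact lintegral_congr hinner

end WBBaux

open WBBaux in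
/-- The Wasserstein distance bounds the difference of Battacharyya parameters:
`|B(μ) - B(ν)| ≤ √d(μ,ν) · √(2 - d(μ,ν))`. -/
theorem wasserstein_bounds_battacharyya (μ ν : Measure ℝ)
    [IsProbabilityMeasure μ] [IsProbabilityMeasure ν]
    (hμ : μ (Set.Icc (0:ℝ) 1)ᶜ = 0) (hν : ν (Set.Icc (0:ℝ) 1)ᶜ = 0) :
    |batta μ - batta ν| ≤ Real.sqrt (W1 μ ν) * Real.sqrt (2 - W1 μ ν) := by
  classical
  set g : ℝ → ℝ := fun x => |cdf μ x - cdf ν x| with hgdef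
  set d : ℝ := W1 μ ν with hddef
  have hgmeas : Measurable g := ((cdf_meas μ).sub (cdf_meas ν)).abs
  have hg0 : ∀ x, 0 ≤ g x := fun x => abs_nonneg _
  have hgle : ∀ x, g x ≤ 1 := fun x => by
    have h1 := cdf_nonneg μ x; have h2 := cdf_le_one μ x
    have h3 := cdf_nonneg ν x; have h4 := cdf_le_one ν x
    rw [hgdef]
    simp only [abs_le]
    constructor <;> linarith
  have hgabs : ∀ x, |g x| ≤ 1 := fun x => by rw [abs_abs]; exact hgle x
  have hdIoc : d = ∫ x in Set.Ioc (0:ℝ) 1, g x := by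
    rw [hddef]
    exact intervalIntegral.integral_of_le zero_le_one
  have hconst : ∀ a b : ℝ, IntegrableOn (fun _ => (1:ℝ)) (Set.Ioc a b) volume :=
    fun a b => integrableOn_const measure_Ioc_lt_top.ne
  have gint : ∀ a b : ℝ, IntegrableOn g (Set.Ioc a b) volume := by
    intro a b
    refine Integrable.mono (hconst a b) hgmeas.aestronglyMeasurable ?_
    refine ae_of_all _ fun x => ?_
    rw [Real.norm_eq_abs, Real.norm_eq_abs]
    simpa using hgabs x
  have hWg : IntegrableOn (fun x => W x * g x) (Set.Ioc (0:ℝ) 1) :=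
    intOn_W_mul hgmeas hgabs le_rfl
  have hμint : IntegrableOn (fun x => W x * cdf μ x) (Set.Ioc (0:ℝ) 1) :=
    intOn_W_mul (cdf_meas μ)
      (fun x => by rw [abs_of_nonneg (cdf_nonneg μ x)]; exact cdf_le_one μ x) le_rfl
  have hνint : IntegrableOn (fun x => W x * cdf ν x) (Set.Ioc (0:ℝ) 1) :=
    intOn_W_mul (cdf_meas ν)
      (fun x => by rw [abs_of_nonneg (cdf_nonneg ν x)]; exact cdf_le_one ν x) le_rfl
  have hdiff : batta μ - batta ν = ∫ x in Set.Ioc (0:ℝ) 1, W x * (cdf μ x - cdf ν x) := by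
    rw [batta_eq μ hμ, batta_eq ν hν, ← integral_sub hμint hνint]
    congr 1
    ext x
    ring
  have habs : |batta μ - batta ν| ≤ ∫ x in Set.Ioc (0:ℝ) 1, W x * g x := by
    rw [hdiff]
    have h := norm_integral_le_integral_norm (μ := volume.restrict (Set.Ioc (0:ℝ) 1))
      (fun x => W x * (cdf μ x - cdf ν x))
    simp only [Real.norm_eq_abs] at h
    refine h.trans (le_of_eq ?_)
    refine setIntegral_congr_fun measurableSet_Ioc fun x hx => ?_
    rw [abs_mul, abs_of_nonneg (W_nonneg hx.1.le)]
  have hd0 : 0 ≤ d := by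
    rw [hdIoc]
    exact setIntegral_nonneg measurableSet_Ioc fun x _ => hg0 x
  have hd1 : d ≤ 1 := by
    rw [hdIoc]
    calc ∫ x in Set.Ioc (0:ℝ) 1, g x ≤ ∫ _ in Set.Ioc (0:ℝ) 1, (1:ℝ) :=
          setIntegral_mono_on (gint 0 1) (hconst 0 1) measurableSet_Ioc fun x _ => hgle x
    _ = 1 := by
        rw [setIntegral_const]
        simp [Real.volume_Ioc]
  rcases eq_or_lt_of_le hd0 with h0 | h0
  · -- degenerate case d = 0
    have hgzero : g =ᵐ[volume.restrict (Set.Ioc (0:ℝ) 1)] 0 :=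
      (integral_eq_zero_iff_of_nonneg_ae (ae_of_all _ hg0) (gint 0 1)).1
        (by rw [← hdIoc]; exact h0.symm)
    have hzero : ∫ x in Set.Ioc (0:ℝ) 1, W x * g x = 0 := by
      have hz : (fun x => W x * g x) =ᵐ[volume.restrict (Set.Ioc (0:ℝ) 1)] 0 :=
        hgzero.mono fun x hx => by simp [hx]
      rw [integral_congr_ae hz]
      simp
    have hle0 : |batta μ - batta ν| ≤ 0 := habs.trans hzero.le
    have hrhs : 0 ≤ Real.sqrt d * Real.sqrt (2 - d) :=
      mul_nonneg (Real.sqrt_nonneg _) (Real.sqrt_nonneg _)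
    linarith
  · set c : ℝ := 1 - d with hcdef
    have hc0 : 0 ≤ c := by rw [hcdef]; linarith
    have hc1 : c < 1 := by rw [hcdef]; linarith
    have hWg1 : IntegrableOn (fun x => W x * g x) (Set.Ioc (0:ℝ) c) :=
      hWg.mono_set (Set.Ioc_subset_Ioc le_rfl hc1.le)
    have hWg2 : IntegrableOn (fun x => W x * g x) (Set.Ioc c 1) :=
      intOn_W_mul hgmeas hgabs hc0
    have hW2 : IntegrableOn W (Set.Ioc c 1) := W_intOn hc0
    have hW1g : IntegrableOn (fun x => W x * (1 - g x)) (Set.Ioc c 1) := by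
      have he : (fun x => W x * (1 - g x)) = fun x => W x - W x * g x := by ext x; ring
      rw [he]
      exact hW2.sub hWg2
    have hsplit : ∫ x in Set.Ioc (0:ℝ) 1, W x * g x
        = (∫ x in Set.Ioc (0:ℝ) c, W x * g x) + ∫ x in Set.Ioc c 1, W x * g x := by
      rw [← Set.Ioc_union_Ioc_eq_Ioc hc0 hc1.le,
        setIntegral_union (Set.Ioc_disjoint_Ioc_of_le le_rfl) measurableSet_Ioc hWg1 hWg2]
    have hdsplit : d = (∫ x in Set.Ioc (0:ℝ) c, g x) + ∫ x in Set.Ioc c 1, g x := by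
      rw [hdIoc, ← Set.Ioc_union_Ioc_eq_Ioc hc0 hc1.le,
        setIntegral_union (Set.Ioc_disjoint_Ioc_of_le le_rfl) measurableSet_Ioc (gint 0 c) (gint c 1)]
    have hJ : ∫ x in Set.Ioc (0:ℝ) c, g x = ∫ x in Set.Ioc c 1, (1 - g x) := by
      have hs : ∫ x in Set.Ioc c 1, (1 - g x)
          = (∫ _ in Set.Ioc c 1, (1:ℝ)) - ∫ x in Set.Ioc c 1, g x :=
        integral_sub (hconst c 1) (gint c 1)
      have hone : ∫ _ in Set.Ioc c 1, (1:ℝ) = 1 - c := by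
        rw [setIntegral_const]
        simp [Real.volume_Ioc, ENNReal.toReal_ofReal (by linarith : (0:ℝ) ≤ 1 - c), hc1.le]
      rw [hs, hone]
      have := hdsplit
      rw [hcdef] at *
      linarith
    have hstep1 : (∫ x in Set.Ioc (0:ℝ) c, W x * g x) ≤ W c * ∫ x in Set.Ioc (0:ℝ) c, g x := by
      rw [← integral_const_mul]
      refine setIntegral_mono_on hWg1 ((gint 0 c).const_mul _) measurableSet_Ioc fun x hx => ?_
      exact mul_le_mul_of_nonneg_right (W_mono hx.1.le hx.2 hc1) (hg0 x)
    have hcint : IntegrableOn (fun x => W c * (1 - g x)) (Set.Ioc c 1) :=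
      ((hconst c 1).sub (gint c 1)).const_mul (W c)
    have hstep2 : W c * ∫ x in Set.Ioc c 1, (1 - g x) ≤ ∫ x in Set.Ioc c 1, W x * (1 - g x) := by
      rw [← integral_const_mul]
      rw [integral_Ioc_eq_integral_Ioo, integral_Ioc_eq_integral_Ioo
        (f := fun x => W x * (1 - g x))]
      refine setIntegral_mono_on (hcint.mono_set Set.Ioo_subset_Ioc_self)
        (hW1g.mono_set Set.Ioo_subset_Ioc_self) measurableSet_Ioo fun x hx => ?_
      exact mul_le_mul_of_nonneg_right (W_mono hc0 hx.1.le hx.2) (by linarith [hgle x])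
    have hWsum : (∫ x in Set.Ioc c 1, W x * g x) + ∫ x in Set.Ioc c 1, W x * (1 - g x)
        = Real.sqrt (1 - c ^ 2) := by
      rw [← W_ftc ⟨hc0, hc1.le⟩, ← integral_add hWg2 hW1g]
      refine setIntegral_congr_fun measurableSet_Ioc fun x _ => ?_
      ring
    have hfin : ∫ x in Set.Ioc (0:ℝ) 1, W x * g x ≤ Real.sqrt (1 - c ^ 2) := by
      rw [hsplit]
      have h1 := hstep1
      rw [hJ] at h1
      linarith [hstep2, hWsum]
    have hcs : Real.sqrt (1 - c ^ 2) = Real.sqrt d * Real.sqrt (2 - d) := by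
      rw [show 1 - c ^ 2 = d * (2 - d) by rw [hcdef]; ring, Real.sqrt_mul hd0]
    exact habs.trans (hfin.trans_eq hcs)
end

section
/- Let mu, nu be probability measures on [0,1]. Then |H(mu) - H(nu)| <= h2(d(mu,nu)/2) <= (1/ln 2)*sqrt(d(mu,nu))*sqrt(2 - d(mu,nu)), where H(a) = integral of h2((1-z)/2) da(z) is the entropy functional, h2 the binary entropy, and d the Wasserstein-1 distance. -/
open MeasureTheory

/-- The entropy functional of a `|D|`-distribution. -/
noncomputable def entF (μ : Measure ℝ) : ℝ := ∫ z, h2 ((1 - z)/2) ∂μ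

/- ### Auxiliary material -/

/-- The (negated) derivative of `z ↦ h2 ((1-z)/2)`. -/
noncomputable def gg (t : ℝ) : ℝ := (Real.log (1 + t) - Real.log (1 - t)) / (2 * Real.log 2)

lemma h2_eq (x : ℝ) : h2 x = Real.binEntropy x / Real.log 2 := by
  simp only [h2, Real.binEntropy, Real.logb, Real.log_inv]
  ring

lemma h2_zero : h2 0 = 0 := by simp [h2]

lemma ff_cont : Continuous (fun z : ℝ => h2 ((1 - z)/2)) := by
  simp only [h2_eq]
  fun_prop

lemma ff_deriv {x : ℝ} (hx1 : x ≠ 1) (hx2 : x ≠ -1) :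
    HasDerivAt (fun z : ℝ => h2 ((1 - z)/2)) (-(gg x)) x := by
  have hp0 : (1 - x)/2 ≠ 0 := by
    intro h
    rw [div_eq_zero_iff] at h
    rcases h with h | h
    · exact hx1 (by linarith)
    · norm_num at h
  have hp1 : (1 - x)/2 ≠ 1 := by
    intro h
    apply hx2
    have := (div_eq_iff (two_ne_zero (α := ℝ))).mp h
    linarith
  have hinner : HasDerivAt (fun z : ℝ => (1 - z)/2) (-(1/2) : ℝ) x := by
    have h1 : HasDerivAt (fun z : ℝ => 1 - z) (-1 : ℝ) x := (hasDerivAt_id x).const_sub 1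
    have := h1.div_const 2
    norm_num at this ⊢
    convert this using 1
  have hb := (Real.hasDerivAt_binEntropy hp0 hp1).comp x hinner
  have hfun : (fun z : ℝ => h2 ((1 - z)/2))
      = fun z : ℝ => Real.binEntropy ((1 - z)/2) / Real.log 2 := by
    funext z; exact h2_eq _
  rw [hfun]
  have hd := hb.div_const (Real.log 2)
  simp only [Function.comp] at hd
  convert hd using 1
  all_goals try rfl
  have e1 : Real.log (1 - (1 - x)/2) = Real.log (1 + x) - Real.log 2 := by
    rw [show (1 - (1 - x)/2) = (1 + x)/2 by ring]
    exact Real.log_div (fun h => hx2 (by linarith)) two_ne_zero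
  have e2 : Real.log ((1 - x)/2) = Real.log (1 - x) - Real.log 2 := by
    exact Real.log_div (fun h => hx1 (by linarith)) two_ne_zero
  rw [gg, e1, e2]
  ring

lemma gg_nonneg {t : ℝ} (h0 : 0 ≤ t) (h1 : t ≤ 1) : 0 ≤ gg t := by
  have h2 : (0:ℝ) < Real.log 2 := Real.log_pos (by norm_num)
  have l1 : 0 ≤ Real.log (1 + t) := Real.log_nonneg (by linarith)
  have l2 : Real.log (1 - t) ≤ 0 := Real.log_nonpos (by linarith) (by linarith)
  have : 0 ≤ Real.log (1 + t) - Real.log (1 - t) := by linarith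
  exact div_nonneg this (by positivity)

lemma gg_mono : MonotoneOn gg (Set.Ico (0:ℝ) 1) := by
  intro a ha b hb hab
  simp only [Set.mem_Ico] at ha hb
  have h2 : (0:ℝ) < 2 * Real.log 2 := by
    have := Real.log_pos (show (1:ℝ) < 2 by norm_num); linarith
  unfold gg
  have l1 : Real.log (1 + a) ≤ Real.log (1 + b) :=
    Real.log_le_log (by linarith) (by linarith)
  have l2 : Real.log (1 - b) ≤ Real.log (1 - a) :=
    Real.log_le_log (by linarith) (by linarith)
  have : Real.log (1 + a) - Real.log (1 - a) ≤ Real.log (1 + b) - Real.log (1 - b) := by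
    linarith
  exact div_le_div_of_nonneg_right this h2.le

lemma gg_intI : IntervalIntegrable gg MeasureTheory.volume 0 1 := by
  apply intervalIntegral.intervalIntegrable_deriv_of_nonneg
    (g := fun z : ℝ => -(h2 ((1 - z)/2)))
  · exact ff_cont.neg.continuousOn
  · intro x hx
    norm_num at hx
    convert (ff_deriv (ne_of_lt hx.2) (by linarith [hx.1])).neg using 1 <;> first | rfl | simp
  · intro x hx
    norm_num at hx
    exact gg_nonneg hx.1.le hx.2.le

lemma gg_measurable : Measurable gg := by
  apply Measurable.div_const
  exact (Real.measurable_log.comp (measurable_const.add measurable_id)).sub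
    (Real.measurable_log.comp (measurable_const.sub measurable_id))

lemma gg_int2 {a b : ℝ} (ha : a ∈ Set.Icc (0:ℝ) 1) (hb : b ∈ Set.Icc (0:ℝ) 1) :
    IntervalIntegrable gg MeasureTheory.volume a b := by
  apply gg_intI.mono_set
  rw [Set.uIcc_of_le (zero_le_one)]
  exact Set.uIcc_subset_Icc ha hb

lemma integral_gg {z : ℝ} (h0 : 0 ≤ z) (h1 : z ≤ 1) :
    ∫ t in z..1, gg t = h2 ((1 - z)/2) := by
  have key := intervalIntegral.integral_eq_sub_of_hasDeriv_right_of_le h1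
    (f := fun z : ℝ => -(h2 ((1 - z)/2))) (f' := gg)
    (ff_cont.neg.continuousOn)
    (fun x hx => by
      convert ((ff_deriv (ne_of_lt hx.2) (by linarith [hx.1])).neg).hasDerivWithinAt using 1 <;> first | rfl | simp)
    (gg_int2 ⟨h0, h1⟩ ⟨zero_le_one, le_rfl⟩)
  rw [key]
  norm_num [h2_zero]

lemma cdf_mono (μ : Measure ℝ) [IsProbabilityMeasure μ] : Monotone (cdf μ) := by
  intro a b hab
  exact ENNReal.toReal_mono (measure_ne_top μ _) (measure_mono (Set.Iic_subset_Iic.2 hab))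

lemma cdf_nonneg (μ : Measure ℝ) (x : ℝ) : 0 ≤ cdf μ x := ENNReal.toReal_nonneg

lemma cdf_le_one (μ : Measure ℝ) [IsProbabilityMeasure μ] (x : ℝ) : cdf μ x ≤ 1 := by
  rw [cdf]
  calc (μ (Set.Iic x)).toReal ≤ (μ Set.univ).toReal :=
        ENNReal.toReal_mono (measure_ne_top μ _) (measure_mono (Set.subset_univ _))
    _ = 1 := by simp

lemma cdf_measurable (μ : Measure ℝ) [IsProbabilityMeasure μ] : Measurable (cdf μ) :=
  (cdf_mono μ).measurable

lemma entF_eq (μ : Measure ℝ) [IsProbabilityMeasure μ] (hμ : μ (Set.Icc (0:ℝ) 1)ᶜ = 0) :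
    entF μ = ∫ t in Set.Ioc (0:ℝ) 1, gg t * cdf μ t := by
  set ν' : Measure ℝ := MeasureTheory.volume.restrict (Set.Ioc (0:ℝ) 1) with hν'
  set k : ℝ → ℝ → ℝ := fun z t => if z ≤ t then gg t else 0 with hk
  have hkm : Measurable (Function.uncurry k) := by
    apply Measurable.ite (measurableSet_le measurable_fst measurable_snd)
    · exact gg_measurable.comp measurable_snd
    · exact measurable_const
  have hggOn : IntegrableOn gg (Set.Ioc (0:ℝ) 1) := gg_intI.1
  have hae : ∀ᵐ z ∂μ, z ∈ Set.Icc (0:ℝ) 1 := by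
    rw [MeasureTheory.ae_iff]
    exact hμ
  have hk_ind : ∀ z : ℝ, (fun t => k z t) = (Set.Ici z).indicator gg := by
    intro z; funext t
    simp only [hk, Set.indicator, Set.mem_Ici]
  have hInt1 : ∀ z : ℝ, Integrable (fun t => k z t) ν' := by
    intro z
    rw [hk_ind]
    exact hggOn.indicator measurableSet_Ici
  have hprod : Integrable (Function.uncurry k) (μ.prod ν') := by
    rw [MeasureTheory.integrable_prod_iff hkm.aestronglyMeasurable]
    refine ⟨Filter.Eventually.of_forall hInt1, ?_⟩
    apply MeasureTheory.Integrable.mono' (g := fun _ => ∫ t, |gg t| ∂ν')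
      (integrable_const _)
    · exact (hkm.norm.stronglyMeasurable.integral_prod_right').aestronglyMeasurable
    · apply Filter.Eventually.of_forall
      intro z
      have h1 : ∫ t, ‖Function.uncurry k (z, t)‖ ∂ν' ≤ ∫ t, |gg t| ∂ν' := by
        apply MeasureTheory.integral_mono ((hInt1 z).norm) hggOn.abs
        intro t
        simp only [Function.uncurry, hk, Real.norm_eq_abs]
        split_ifs
        · exact le_rfl
        · simp [abs_nonneg]
      have h2 : 0 ≤ ∫ t, ‖Function.uncurry k (z, t)‖ ∂ν' :=
        MeasureTheory.integral_nonneg fun t => norm_nonneg _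
      rw [Real.norm_eq_abs, abs_of_nonneg h2]
      exact h1
  have hswap := MeasureTheory.integral_integral_swap (f := k) hprod
  have hL : ∫ z, ∫ t, k z t ∂ν' ∂μ = entF μ := by
    rw [entF]
    apply MeasureTheory.integral_congr_ae
    filter_upwards [hae] with z hz
    obtain ⟨hz0, hz1⟩ := hz
    rw [hk_ind z, MeasureTheory.integral_indicator measurableSet_Ici, hν',
      MeasureTheory.Measure.restrict_restrict measurableSet_Ici]
    have hset : (Set.Ici z ∩ Set.Ioc (0:ℝ) 1 : Set ℝ) =ᵐ[MeasureTheory.volume] Set.Ioc z 1 := by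
      rw [MeasureTheory.ae_eq_set]
      constructor
      · have hsub : (Set.Ici z ∩ Set.Ioc (0:ℝ) 1) \ Set.Ioc z 1 ⊆ {z} := by
          intro t ht
          simp only [Set.mem_diff, Set.mem_inter_iff, Set.mem_Ici, Set.mem_Ioc,
            Set.mem_singleton_iff] at ht ⊢
          rcases ht with ⟨⟨hzt, _, ht1⟩, hnot⟩
          by_contra hne
          exact hnot ⟨lt_of_le_of_ne hzt (Ne.symm hne), ht1⟩
        exact measure_mono_null hsub Real.volume_singleton
      · have hsub : Set.Ioc z 1 \ (Set.Ici z ∩ Set.Ioc (0:ℝ) 1) ⊆ (∅ : Set ℝ) := by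
          intro t ht
          simp only [Set.mem_diff, Set.mem_inter_iff, Set.mem_Ici, Set.mem_Ioc] at ht
          rcases ht with ⟨⟨hzt, ht1⟩, hnot⟩
          exact absurd ⟨hzt.le, lt_of_le_of_lt hz0 hzt, ht1⟩ hnot
        exact measure_mono_null hsub measure_empty
    rw [MeasureTheory.setIntegral_congr_set hset,
      ← intervalIntegral.integral_of_le hz1, integral_gg hz0 hz1]
  have hR : ∫ t, ∫ z, k z t ∂μ ∂ν' = ∫ t in Set.Ioc (0:ℝ) 1, gg t * cdf μ t := by
    apply MeasureTheory.integral_congr_ae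
    apply Filter.Eventually.of_forall
    intro t
    show (∫ z, k z t ∂μ) = gg t * cdf μ t
    have hind : (fun z => k z t) = (Set.Iic t).indicator (fun _ => gg t) := by
      funext z
      simp only [hk, Set.indicator, Set.mem_Iic]
    rw [hind, MeasureTheory.integral_indicator_const _ measurableSet_Iic]
    rw [cdf, smul_eq_mul, mul_comm]; rfl
  rw [← hL, hswap, hR]

lemma neg_log_le {x : ℝ} (h0 : 0 < x) (h1 : x ≤ 1) :
    -Real.log x ≤ (1 - x) / Real.sqrt x := by
  set s := Real.sqrt x with hs
  have hs0 : 0 < s := Real.sqrt_pos.mpr h0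
  have hs2 : s^2 = x := Real.sq_sqrt h0.le
  have hs1 : s ≤ 1 := by nlinarith
  have hu : (1:ℝ) ≤ 1/s := (one_le_div hs0).mpr hs1
  have hlog : Real.log (1/s) ≤ Real.sinh (Real.log (1/s)) :=
    Real.self_le_sinh_iff.mpr (Real.log_nonneg hu)
  rw [Real.sinh_log (by positivity)] at hlog
  have hls : Real.log (1/s) = -Real.log s := by rw [one_div, Real.log_inv]
  have hinv : (1/s)⁻¹ = s := by field_simp
  rw [hls, hinv] at hlog
  have hlx : Real.log x = 2 * Real.log s := by
    rw [← hs2, Real.log_pow]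
    norm_num
  rw [hlx]
  have heq : (1 - x)/s = 1/s - s := by
    rw [← hs2]
    field_simp
  rw [heq]
  linarith

lemma binEntropy_le_sqrt {x : ℝ} (h0 : 0 ≤ x) (h1 : x ≤ 1) :
    Real.binEntropy x ≤ 2 * Real.sqrt (x * (1 - x)) := by
  rcases eq_or_lt_of_le h0 with h | hx0
  · rw [← h]; simp [Real.sqrt_nonneg]
  rcases eq_or_lt_of_le h1 with h | hx1
  · rw [h]; simp [Real.sqrt_nonneg]
  have ha := neg_log_le hx0 h1
  have hb := neg_log_le (by linarith : (0:ℝ) < 1 - x) (by linarith)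
  set a := Real.sqrt x with hsa
  set b := Real.sqrt (1 - x) with hsb
  have ha0 : 0 < a := Real.sqrt_pos.mpr hx0
  have hb0 : 0 < b := Real.sqrt_pos.mpr (by linarith)
  have ha2 : a^2 = x := Real.sq_sqrt h0
  have hb2 : b^2 = 1 - x := Real.sq_sqrt (by linarith)
  have ha1 : a ≤ 1 := by nlinarith
  have hb1 : b ≤ 1 := by nlinarith
  have habq : Real.sqrt (x * (1 - x)) = a * b := by
    rw [Real.sqrt_mul h0]
  have hBE : Real.binEntropy x = x * (-Real.log x) + (1 - x) * (-Real.log (1 - x)) := by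
    rw [Real.binEntropy, Real.log_inv, Real.log_inv]
  have hb' : (1:ℝ) - (1 - x) = x := by ring
  rw [hb'] at hb
  rw [hBE, habq]
  have s1 : x * (-Real.log x) ≤ x * ((1 - x)/a) :=
    mul_le_mul_of_nonneg_left ha h0
  have s2 : (1 - x) * (-Real.log (1 - x)) ≤ (1 - x) * (x/b) :=
    mul_le_mul_of_nonneg_left hb (by linarith)
  have haz : a ≠ 0 := ne_of_gt ha0
  have hbz : b ≠ 0 := ne_of_gt hb0
  have e1 : x * ((1 - x)/a) = a * b^2 := by
    rw [hb2, ← ha2]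
    field_simp
  have e2 : (1 - x) * (x/b) = b * a^2 := by
    rw [← hb2, ← ha2]
    field_simp
  rw [e1] at s1
  rw [e2] at s2
  have hfin : a * b^2 + b * a^2 ≤ 2 * (a * b) := by
    nlinarith [mul_nonneg (mul_nonneg ha0.le hb0.le) (by linarith : (0:ℝ) ≤ 2 - (a + b))]
  linarith

/-- The Wasserstein distance bounds the difference of entropies:
`|H(μ) - H(ν)| ≤ h2(d(μ,ν)/2) ≤ (1/ln 2) √d(μ,ν) √(2 - d(μ,ν))`. -/
theorem wasserstein_bounds_entropy (μ ν : Measure ℝ)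
    [IsProbabilityMeasure μ] [IsProbabilityMeasure ν]
    (hμ : μ (Set.Icc (0:ℝ) 1)ᶜ = 0) (hν : ν (Set.Icc (0:ℝ) 1)ᶜ = 0) :
    |entF μ - entF ν| ≤ h2 (W1 μ ν / 2) ∧
    h2 (W1 μ ν / 2) ≤ (1 / Real.log 2) * Real.sqrt (W1 μ ν) * Real.sqrt (2 - W1 μ ν) := by
  have hlog2 : (0:ℝ) < Real.log 2 := Real.log_pos (by norm_num)
  set D : ℝ → ℝ := fun t => |cdf μ t - cdf ν t| with hD
  have hDm : Measurable D := ((cdf_measurable μ).sub (cdf_measurable ν)).abs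
  have hD0 : ∀ t, 0 ≤ D t := fun t => abs_nonneg _
  have hD1 : ∀ t, D t ≤ 1 := by
    intro t
    have h1 := cdf_nonneg μ t; have h2 := cdf_le_one μ t
    have h3 := cdf_nonneg ν t; have h4 := cdf_le_one ν t
    show |cdf μ t - cdf ν t| ≤ 1
    rw [abs_le]
    constructor <;> linarith
  have hDInt : ∀ a b : ℝ, IntervalIntegrable D MeasureTheory.volume a b := by
    intro a b
    apply IntervalIntegrable.mono_fun (intervalIntegrable_const (c := (1:ℝ)))
      hDm.aestronglyMeasurable
    apply Filter.Eventually.of_forall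
    intro t
    simp only [Real.norm_eq_abs, hD, abs_abs, abs_one]
    exact hD1 t
  have hprodInt : ∀ (f : ℝ → ℝ), Measurable f → (∀ t, |f t| ≤ 1) →
      ∀ a b : ℝ, a ∈ Set.Icc (0:ℝ) 1 → b ∈ Set.Icc (0:ℝ) 1 →
      IntervalIntegrable (fun t => gg t * f t) MeasureTheory.volume a b := by
    intro f hf hf1 a b ha hb
    apply IntervalIntegrable.mono_fun (gg_int2 ha hb)
      ((gg_measurable.mul hf).aestronglyMeasurable)
    apply Filter.Eventually.of_forall
    intro t
    simp only [Real.norm_eq_abs, abs_mul, Pi.mul_apply]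
    exact (mul_le_mul_of_nonneg_left (hf1 t) (abs_nonneg _)).trans (by rw [mul_one])
  set d := W1 μ ν with hd
  have hdD : d = ∫ t in (0:ℝ)..1, D t := rfl
  have hd0 : 0 ≤ d := by
    rw [hdD]
    exact intervalIntegral.integral_nonneg zero_le_one (fun t _ => hD0 t)
  have hd1 : d ≤ 1 := by
    rw [hdD]
    calc ∫ t in (0:ℝ)..1, D t ≤ ∫ _t in (0:ℝ)..1, (1:ℝ) :=
          intervalIntegral.integral_mono_on zero_le_one (hDInt 0 1)
            intervalIntegrable_const (fun t _ => hD1 t)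
      _ = 1 := by simp
  constructor
  · -- first inequality
    have hμ1 : ∀ t, |cdf μ t| ≤ 1 := fun t =>
      abs_le.mpr ⟨by linarith [cdf_nonneg μ t], cdf_le_one μ t⟩
    have hν1 : ∀ t, |cdf ν t| ≤ 1 := fun t =>
      abs_le.mpr ⟨by linarith [cdf_nonneg ν t], cdf_le_one ν t⟩
    have h0mem : (0:ℝ) ∈ Set.Icc (0:ℝ) 1 := ⟨le_rfl, zero_le_one⟩
    have h1mem : (1:ℝ) ∈ Set.Icc (0:ℝ) 1 := ⟨zero_le_one, le_rfl⟩
    have hIμ := hprodInt (cdf μ) (cdf_measurable μ) hμ1 0 1 h0mem h1mem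
    have hIν := hprodInt (cdf ν) (cdf_measurable ν) hν1 0 1 h0mem h1mem
    have hDabs : ∀ t, |D t| ≤ 1 := fun t => by
      rw [hD, abs_abs]
      exact hD1 t
    have hdiff : entF μ - entF ν = ∫ t in (0:ℝ)..1, gg t * (cdf μ t - cdf ν t) := by
      rw [entF_eq μ hμ, entF_eq ν hν,
        ← intervalIntegral.integral_of_le zero_le_one,
        ← intervalIntegral.integral_of_le zero_le_one,
        ← intervalIntegral.integral_sub hIμ hIν]
      congr 1
      funext t
      ring
    have habs : |entF μ - entF ν| ≤ ∫ t in (0:ℝ)..1, gg t * D t := by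
      rw [hdiff]
      calc |∫ t in (0:ℝ)..1, gg t * (cdf μ t - cdf ν t)|
          ≤ ∫ t in (0:ℝ)..1, |gg t * (cdf μ t - cdf ν t)| :=
            intervalIntegral.abs_integral_le_integral_abs zero_le_one
        _ = ∫ t in (0:ℝ)..1, gg t * D t := by
            apply intervalIntegral.integral_congr
            intro t ht
            rw [Set.uIcc_of_le zero_le_one] at ht
            show |gg t * (cdf μ t - cdf ν t)| = gg t * D t
            rw [abs_mul, abs_of_nonneg (gg_nonneg ht.1 ht.2)]
    have key : ∫ t in (0:ℝ)..1, gg t * D t ≤ h2 (d/2) := by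
      rcases eq_or_lt_of_le hd0 with h0 | h0
      · -- d = 0
        have hintD : ∫ t in Set.Ioc (0:ℝ) 1, D t = 0 := by
          rw [← intervalIntegral.integral_of_le zero_le_one, ← hdD, ← h0]
        have hD0' : D =ᵐ[MeasureTheory.volume.restrict (Set.Ioc (0:ℝ) 1)] 0 :=
          (MeasureTheory.integral_eq_zero_iff_of_nonneg_ae
            (Filter.Eventually.of_forall hD0)
            ((hDInt 0 1).1)).mp hintD
        have hzero : ∫ t in (0:ℝ)..1, gg t * D t = 0 := by
          rw [intervalIntegral.integral_of_le zero_le_one]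
          apply MeasureTheory.integral_eq_zero_of_ae
          filter_upwards [hD0'] with t ht
          simp [ht]
        rw [hzero, ← h0]
        norm_num [h2_zero]
      · -- d > 0
        set c := gg (1 - d) with hc
        have h1d0 : (0:ℝ) ≤ 1 - d := by linarith
        have h1d1 : (1:ℝ) - d ≤ 1 := by linarith
        have h1dmem : (1:ℝ) - d ∈ Set.Icc (0:ℝ) 1 := ⟨h1d0, h1d1⟩
        have h0mem : (0:ℝ) ∈ Set.Icc (0:ℝ) 1 := ⟨le_rfl, zero_le_one⟩
        have h1mem : (1:ℝ) ∈ Set.Icc (0:ℝ) 1 := ⟨zero_le_one, le_rfl⟩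
        have hA := hprodInt D hDm hDabs 0 (1-d) h0mem h1dmem
        have hB := hprodInt D hDm hDabs (1-d) 1 h1dmem h1mem
        have hg1 : IntervalIntegrable gg MeasureTheory.volume (1-d) 1 :=
          gg_int2 h1dmem h1mem
        have split : ∫ t in (0:ℝ)..1, gg t * D t
            = (∫ t in (0:ℝ)..(1-d), gg t * D t) + ∫ t in (1-d)..1, gg t * D t :=
          (intervalIntegral.integral_add_adjacent_intervals hA hB).symm
        have splitD : (∫ t in (0:ℝ)..(1-d), D t) + ∫ t in (1-d)..1, D t = d := by
          rw [intervalIntegral.integral_add_adjacent_intervals (hDInt 0 (1-d)) (hDInt (1-d) 1)]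
          exact hdD.symm
        have step1 : ∫ t in (0:ℝ)..(1-d), gg t * D t
            ≤ c * ∫ t in (0:ℝ)..(1-d), D t := by
          rw [← intervalIntegral.integral_const_mul]
          apply intervalIntegral.integral_mono_on h1d0 hA
            ((hDInt 0 (1-d)).const_mul c)
          intro t ht
          have hgc : gg t ≤ c := gg_mono ⟨ht.1, lt_of_le_of_lt ht.2 (by linarith)⟩
            ⟨h1d0, by linarith⟩ ht.2
          exact mul_le_mul_of_nonneg_right hgc (hD0 t)
        have hInt2 : IntervalIntegrable (fun t => gg t * D t - gg t - c * D t)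
            MeasureTheory.volume (1-d) 1 :=
          (hB.sub hg1).sub ((hDInt (1-d) 1).const_mul c)
        have hne1 : ∀ᵐ t ∂(MeasureTheory.volume.restrict (Set.Icc (1-d) 1)), t ≠ (1:ℝ) := by
          apply MeasureTheory.ae_restrict_of_ae
          rw [MeasureTheory.ae_iff]
          have : {t : ℝ | ¬t ≠ 1} = {1} := by
            ext t; simp
          rw [this]
          exact Real.volume_singleton
        have step2 : ∫ t in (1-d)..1, (gg t * D t - gg t - c * D t)
            ≤ ∫ _t in (1-d)..1, (-c : ℝ) := by
          apply intervalIntegral.integral_mono_ae_restrict h1d1 hInt2 intervalIntegrable_const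
          filter_upwards [hne1, MeasureTheory.ae_restrict_mem measurableSet_Icc] with t ht hmem
          have hct : c ≤ gg t := gg_mono ⟨h1d0, by linarith⟩
            ⟨by linarith [hmem.1], lt_of_le_of_ne hmem.2 ht⟩ hmem.1
          have hprod0 : 0 ≤ (gg t - c) * (1 - D t) :=
            mul_nonneg (sub_nonneg.mpr hct) (sub_nonneg.mpr (hD1 t))
          nlinarith [hprod0]
        have eq2 : ∫ t in (1-d)..1, (gg t * D t - gg t - c * D t)
            = (∫ t in (1-d)..1, gg t * D t) - (∫ t in (1-d)..1, gg t)
              - c * ∫ t in (1-d)..1, D t := by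
          rw [intervalIntegral.integral_sub (hB.sub hg1) ((hDInt (1-d) 1).const_mul c),
            intervalIntegral.integral_sub hB hg1, intervalIntegral.integral_const_mul]
        have eqc : ∫ _t in (1-d)..1, (-c : ℝ) = -(c * d) := by
          rw [intervalIntegral.integral_const]
          simp only [smul_eq_mul]
          ring
        have hT : ∫ t in (1-d)..1, gg t = h2 (d/2) := by
          have h := integral_gg h1d0 h1d1
          rw [show (1 - (1 - d))/2 = d/2 by ring] at h
          exact h
        have hcPS : c * (∫ t in (0:ℝ)..(1-d), D t) + c * (∫ t in (1-d)..1, D t) = c * d := by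
          rw [← mul_add, splitD]
        have hB' : (∫ t in (1-d)..1, gg t * D t)
            ≤ h2 (d/2) + c * (∫ t in (1-d)..1, D t) - c * d := by
          have h := step2
          rw [eq2, eqc, hT] at h
          linarith
        rw [split]
        linarith [step1, hcPS, hB']
    exact habs.trans key
  · -- second inequality
    have hbin := binEntropy_le_sqrt (x := d/2) (by linarith) (by linarith)
    rw [h2_eq]
    have h4 : Real.sqrt (d/2 * (1 - d/2)) = Real.sqrt d * Real.sqrt (2 - d) / 2 := by
      rw [show d/2 * (1 - d/2) = (d * (2 - d))/2^2 by ring]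
      rw [Real.sqrt_div (by nlinarith : (0:ℝ) ≤ d * (2 - d)),
        Real.sqrt_sq (by norm_num : (0:ℝ) ≤ 2), Real.sqrt_mul hd0]
    rw [h4] at hbin
    calc Real.binEntropy (d/2) / Real.log 2
        ≤ (2 * (Real.sqrt d * Real.sqrt (2 - d) / 2)) / Real.log 2 :=
          (div_le_div_iff_of_pos_right hlog2).mpr hbin
      _ = (1 / Real.log 2) * Real.sqrt d * Real.sqrt (2 - d) := by ring
end

section
/- For integers r >= l >= 3, define a(x) = (1-(1-x)^(r-1))^(l-1) and b(x) = (l-1)^2*(r-1)^2*x*(1-x)^(2(r-2)) on (0,1]. Then the equation a(x) = b(x) has exactly one solution in (0,1]. -/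
open Real Set

lemma hasDerivAt_L (m n : ℕ) (hn : 2 ≤ n) {x : ℝ} (hx0 : 0 < x) (hx1 : x < 1) :
    HasDerivAt (fun y : ℝ => (m:ℝ) * Real.log (1-(1-y)^n) - Real.log y - ((2*(n-1):ℕ):ℝ) * Real.log (1-y))
      ((m:ℝ) * (((n:ℝ) * (1-x)^(n-1)) / (1-(1-x)^n)) - 1/x + ((2*(n-1):ℕ):ℝ)/(1-x)) x := by
  have h1x : (0:ℝ) < 1 - x := by linarith
  have hpowlt : (1-x)^n < 1 := pow_lt_one₀ (by linarith) (by linarith) (by omega)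
  have hA : (0:ℝ) < 1 - (1-x)^n := by linarith
  have h1 : HasDerivAt (fun y : ℝ => 1 - y) (-1) x := by
    simpa using (hasDerivAt_id x).const_sub 1
  have h2 : HasDerivAt (fun y : ℝ => (1 - y)^n) (-((n:ℝ) * (1-x)^(n-1))) x := by
    simpa [mul_comm] using h1.fun_pow n
  have h3 : HasDerivAt (fun y : ℝ => 1 - (1-y)^n) ((n:ℝ)*(1-x)^(n-1)) x := by
    simpa using h2.const_sub 1
  have h4 := (h3.log (ne_of_gt hA)).const_mul (m:ℝ)
  have h6 : HasDerivAt Real.log x⁻¹ x := Real.hasDerivAt_log (ne_of_gt hx0)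
  have h7 := (h1.log (ne_of_gt h1x)).const_mul ((2*(n-1):ℕ):ℝ)
  have := (h4.sub h6).sub h7
  refine this.congr_deriv ?_
  field_simp
  ring

lemma deriv_pos (m n : ℕ) (hm : 2 ≤ m) (hn : 2 ≤ n) {x : ℝ} (hx0 : 0 < x) (hx1 : x < 1) :
    0 < (m:ℝ) * (((n:ℝ) * (1-x)^(n-1)) / (1-(1-x)^n)) - 1/x + ((2*(n-1):ℕ):ℝ)/(1-x) := by
  set N : ℝ := (n:ℝ) with hNdef
  set M : ℝ := (m:ℝ) with hMdef
  have hN : (2:ℝ) ≤ N := by simp only [hNdef]; exact_mod_cast hn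
  have hM : (2:ℝ) ≤ M := by simp only [hMdef]; exact_mod_cast hm
  have h1x : (0:ℝ) < 1 - x := by linarith
  have hpowlt : (1-x)^n < 1 := pow_lt_one₀ (by linarith) (by linarith) (by omega)
  have hA : (0:ℝ) < 1 - (1-x)^n := by linarith
  have hk : ((2*(n-1):ℕ):ℝ) = 2*(N-1) := by
    rw [Nat.cast_mul, Nat.cast_sub (by omega : 1 ≤ n)]; push_cast; ring
  have hcast1 : ((n-1:ℕ):ℝ) = N - 1 := by
    rw [Nat.cast_sub (by omega : 1 ≤ n)]; norm_num; rfl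
  -- Bernoulli: 1 - N*x ≤ (1-x)^n
  have hbern1 : 1 - N*x ≤ (1-x)^n := by
    have := one_add_mul_le_pow (show (-2:ℝ) ≤ -x by linarith) n
    calc 1 - N*x = 1 + (n:ℝ)*(-x) := by ring
    _ ≤ (1 + -x)^n := this
    _ = (1-x)^n := by ring_nf
  have hA2 : 1 - (1-x)^n ≤ N*x := by linarith
  have ht0 : (0:ℝ) ≤ (1-x)^(n-1) := by positivity
  have hbern2 : 1 - (N-1)*x ≤ (1-x)^(n-1) := by
    have := one_add_mul_le_pow (show (-2:ℝ) ≤ -x by linarith) (n-1)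
    calc 1 - (N-1)*x = 1 + ((n-1:ℕ):ℝ)*(-x) := by rw [hcast1]; ring
    _ ≤ (1 + -x)^(n-1) := this
    _ = (1-x)^(n-1) := by ring_nf
  set t : ℝ := (1-x)^(n-1) with htdef
  have hNx : 0 < N*x := by positivity
  have key : 2*((1 - (N-1)*x)/x) ≤ M * ((N*t)/(1-(1-x)^n)) := by
    calc 2*((1 - (N-1)*x)/x) ≤ 2*(t/x) := by gcongr
    _ = 2*((N*t)/(N*x)) := by rw [mul_div_mul_left t x (by linarith : N ≠ 0)]
    _ ≤ 2*((N*t)/(1-(1-x)^n)) := by gcongr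
    _ ≤ M*((N*t)/(1-(1-x)^n)) := by gcongr
  have key2 : 0 < (1-2*(N-1)*x)/x + (2*(N-1))/(1-x) := by
    rw [div_add_div _ _ (ne_of_gt hx0) (ne_of_gt h1x)]
    apply div_pos
    · nlinarith [mul_nonneg (show (0:ℝ) ≤ N-1 by linarith) (mul_self_nonneg x)]
    · positivity
  have key3 : 2*((1 - (N-1)*x)/x) - 1/x = (1-2*(N-1)*x)/x := by
    field_simp; ring
  rw [hk]
  linarith

lemma main_aux (m n : ℕ) (hm : 2 ≤ m) (hn : 2 ≤ n) :
    ∃! x : ℝ, x ∈ Set.Ioc (0:ℝ) 1 ∧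
      (1 - (1-x)^n)^m = (m:ℝ)^2 * (n:ℝ)^2 * x * (1-x)^(2*(n-1)) := by
  have hN : (2:ℝ) ≤ (n:ℝ) := by exact_mod_cast hn
  have hM : (2:ℝ) ≤ (m:ℝ) := by exact_mod_cast hm
  set L : ℝ → ℝ := fun y => (m:ℝ) * Real.log (1-(1-y)^n) - Real.log y
      - ((2*(n-1):ℕ):ℝ) * Real.log (1-y) with hLdef
  -- strict monotonicity of L on (0,1)
  have hmono : StrictMonoOn L (Ioo (0:ℝ) 1) := by
    apply strictMonoOn_of_deriv_pos (convex_Ioo 0 1)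
    · intro y hy
      exact ((hasDerivAt_L m n hn hy.1 hy.2).continuousAt).continuousWithinAt
    · intro y hy
      rw [interior_Ioo] at hy
      rw [(hasDerivAt_L m n hn hy.1 hy.2).deriv]
      exact deriv_pos m n hm hn hy.1 hy.2
  -- the equation implies L x = log (m²n²)
  have hlog : ∀ x ∈ Ioo (0:ℝ) 1,
      (1 - (1-x)^n)^m = (m:ℝ)^2 * (n:ℝ)^2 * x * (1-x)^(2*(n-1)) →
      L x = Real.log ((m:ℝ)^2 * (n:ℝ)^2) := by
    intro x hx heq
    have hx0 := hx.1
    have h1x : (0:ℝ) < 1 - x := by linarith [hx.2]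
    have hpowlt : (1-x)^n < 1 := pow_lt_one₀ (by linarith) (by linarith [hx.2]) (by omega)
    have hA : (0:ℝ) < 1 - (1-x)^n := by linarith
    have hMN : (0:ℝ) < (m:ℝ)^2 * (n:ℝ)^2 := by positivity
    have := congrArg Real.log heq
    rw [Real.log_pow, Real.log_mul (by positivity) (by positivity),
        Real.log_mul (ne_of_gt hMN) (ne_of_gt hx0), Real.log_pow] at this
    simp only [hLdef]
    push_cast at this ⊢
    linarith
  -- 1 is not a solution
  have hnot1 : ¬ ((1 - (1-(1:ℝ))^n)^m = (m:ℝ)^2 * (n:ℝ)^2 * 1 * (1-(1:ℝ))^(2*(n-1))) := by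
    rw [sub_self, zero_pow (by omega : n ≠ 0), zero_pow (by omega : 2*(n-1) ≠ 0)]
    norm_num
  -- existence via IVT
  set x₀ : ℝ := 1/(2*(n:ℝ)) with hx₀def
  have hx₀pos : 0 < x₀ := by positivity
  have hx₀lt : x₀ < 1 := by
    rw [hx₀def, div_lt_one (by positivity)]; linarith
  have hNx₀ : (n:ℝ) * x₀ = 1/2 := by
    rw [hx₀def]; field_simp
  set D : ℝ → ℝ := fun x => (1 - (1-x)^n)^m - (m:ℝ)^2 * (n:ℝ)^2 * x * (1-x)^(2*(n-1)) with hDdef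
  have hDcont : ContinuousOn D (Icc x₀ 1) := by fun_prop
  have hD0 : D x₀ ≤ 0 := by
    have hbern1 : 1 - (n:ℝ)*x₀ ≤ (1-x₀)^n := by
      have := one_add_mul_le_pow (show (-2:ℝ) ≤ -x₀ by linarith) n
      calc 1 - (n:ℝ)*x₀ = 1 + (n:ℝ)*(-x₀) := by ring
      _ ≤ (1 + -x₀)^n := this
      _ = (1-x₀)^n := by ring_nf
    have hA2 : 1 - (1-x₀)^n ≤ 1/2 := by rw [← hNx₀]; linarith
    have hA0 : 0 ≤ 1 - (1-x₀)^n := by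
      have : (1-x₀)^n ≤ 1 := pow_le_one₀ (by linarith) (by linarith)
      linarith
    have hf : (1 - (1-x₀)^n)^m ≤ (1/2:ℝ)^2 := by
      calc (1 - (1-x₀)^n)^m ≤ (1/2:ℝ)^m := pow_le_pow_left₀ hA0 hA2 m
      _ ≤ (1/2:ℝ)^2 := pow_le_pow_of_le_one (by norm_num) (by norm_num) hm
    have hkx : ((2*(n-1):ℕ):ℝ) * x₀ = 1 - 1/(n:ℝ) := by
      rw [Nat.cast_mul, Nat.cast_sub (by omega : 1 ≤ n), hx₀def]
      field_simp
      ring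
    have hbern2 : 1/(n:ℝ) ≤ (1-x₀)^(2*(n-1)) := by
      have := one_add_mul_le_pow (show (-2:ℝ) ≤ -x₀ by linarith) (2*(n-1))
      calc 1/(n:ℝ) = 1 - ((2*(n-1):ℕ):ℝ)*x₀ := by rw [hkx]; ring
      _ = 1 + ((2*(n-1):ℕ):ℝ)*(-x₀) := by ring
      _ ≤ (1 + -x₀)^(2*(n-1)) := this
      _ = (1-x₀)^(2*(n-1)) := by ring_nf
    have hg : (2:ℝ) ≤ (m:ℝ)^2 * (n:ℝ)^2 * x₀ * (1-x₀)^(2*(n-1)) := by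
      have h2 : (2:ℝ) = 2^2 * (n:ℝ)^2 * x₀ * (1/(n:ℝ)) := by
        rw [hx₀def]; field_simp
      rw [h2]
      gcongr
    simp only [hDdef]
    norm_num at hf
    linarith
  have hD1 : (0:ℝ) ≤ D 1 := by
    simp only [hDdef]
    rw [sub_self, zero_pow (by omega : n ≠ 0), zero_pow (by omega : 2*(n-1) ≠ 0)]
    norm_num
  obtain ⟨c, hc, hDc⟩ := intermediate_value_Icc hx₀lt.le hDcont ⟨hD0, hD1⟩
  have hc0 : 0 < c := lt_of_lt_of_le hx₀pos hc.1
  have hceq : (1 - (1-c)^n)^m = (m:ℝ)^2 * (n:ℝ)^2 * c * (1-c)^(2*(n-1)) := by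
    have : D c = 0 := hDc
    simp only [hDdef] at this
    linarith
  refine ⟨c, ⟨⟨hc0, hc.2⟩, hceq⟩, ?_⟩
  -- uniqueness
  have huniq : ∀ y ∈ Ioc (0:ℝ) 1,
      (1 - (1-y)^n)^m = (m:ℝ)^2 * (n:ℝ)^2 * y * (1-y)^(2*(n-1)) → y ∈ Ioo (0:ℝ) 1 := by
    intro y hy heq
    rcases lt_or_eq_of_le hy.2 with h | h
    · exact ⟨hy.1, h⟩
    · exfalso; rw [h] at heq; exact hnot1 heq
  intro y ⟨hy, hyeq⟩
  have hyIoo := huniq y hy hyeq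
  have hcIoo : c ∈ Ioo (0:ℝ) 1 := huniq c ⟨hc0, hc.2⟩ hceq
  exact hmono.injOn hyIoo hcIoo (by rw [hlog y hyIoo hyeq, hlog c hcIoo hceq])

/-- For integers `r ≥ l ≥ 3`, the equation
`(1-(1-x)^(r-1))^(l-1) = (l-1)²(r-1)² x (1-x)^(2(r-2))`
has exactly one solution in `(0,1]`. -/
theorem unique_crossing_point (l r : ℕ) (hl : 3 ≤ l) (hlr : l ≤ r) :
    ∃! x : ℝ, x ∈ Set.Ioc (0:ℝ) 1 ∧
      (1 - (1 - x)^(r-1))^(l-1)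
        = ((l:ℝ) - 1)^2 * ((r:ℝ) - 1)^2 * x * (1 - x)^(2*(r-2)) := by
  have h1 : ((l:ℝ) - 1) = ((l-1:ℕ):ℝ) := by
    rw [Nat.cast_sub (by omega : 1 ≤ l)]; norm_num
  have h2 : ((r:ℝ) - 1) = ((r-1:ℕ):ℝ) := by
    rw [Nat.cast_sub (by omega : 1 ≤ r)]; norm_num
  have h3 : 2*(r-2) = 2*((r-1)-1) := by omega
  rw [h1, h2, h3]
  exact main_aux (l-1) (r-1) (by omega) (by omega)
end

section
/- For integers 3 <= l <= r, let x_u(1) be the smallest strictly positive solution of x = (1-(1-x)^(r-1))^(l-1). Then x_u(1) >= (r-1)^(-(l-1)/(l-2)). Moreover, for x-bar = 1 - ((l-1)*(r-1))^(-1/(r-2)) with r >= 4, one has (1 - (1-x-bar)^(r-1))^(l-1) >= x-bar, so x-bar >= x_u(1). -/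
/-- Bernoulli-type bound: `1 - (1-x)^n ≤ n*x` for `0 ≤ x ≤ 1`. -/
lemma bern_aux (n : ℕ) (x : ℝ) (hx1 : x ≤ 1) : 1 - (1-x)^n ≤ n * x := by
  have h := one_add_mul_le_pow (a := -x) (by linarith) n
  have h2 : ((1:ℝ) + -x)^n = (1 - x)^n := by ring_nf
  rw [h2] at h
  linarith

set_option maxHeartbeats 1000000 in
/-- Let `x_u(1)` be the smallest strictly positive solution of
`x = (1-(1-x)^(r-1))^(l-1)` (the unstable DE fixed point over BEC(1)). Then
`x_u(1) ≥ (r-1)^(-(l-1)/(l-2))`, and moreover, for `r ≥ 4` and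
`x̄ = 1 - ((l-1)(r-1))^(-1/(r-2))`, one has
`(1-(1-x̄)^(r-1))^(l-1) ≥ x̄`, hence `x̄ ≥ x_u(1)`. -/
theorem xu_lower_bound (l r : ℕ) (hl : 3 ≤ l) (hlr : l ≤ r) (xu : ℝ)
    (hxu_pos : 0 < xu)
    (hxu_fix : xu = (1 - (1 - xu)^(r-1))^(l-1))
    (hxu_min : ∀ y : ℝ, 0 < y → y = (1 - (1 - y)^(r-1))^(l-1) → xu ≤ y) :
    ((r:ℝ) - 1) ^ (-(((l:ℝ) - 1)/((l:ℝ) - 2))) ≤ xu ∧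
    (4 ≤ r →
      (1 - ((((l:ℝ) - 1) * ((r:ℝ) - 1)) ^ (-(1/((r:ℝ) - 2))))^(r-1))^(l-1)
          ≥ 1 - (((l:ℝ) - 1) * ((r:ℝ) - 1)) ^ (-(1/((r:ℝ) - 2))) ∧
      xu ≤ 1 - (((l:ℝ) - 1) * ((r:ℝ) - 1)) ^ (-(1/((r:ℝ) - 2)))) := by
  have hr3 : 3 ≤ r := le_trans hl hlr
  have hlR : (3:ℝ) ≤ (l:ℝ) := by exact_mod_cast hl
  have hrR : (3:ℝ) ≤ (r:ℝ) := by exact_mod_cast hr3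
  have hcl1 : ((l-1:ℕ):ℝ) = (l:ℝ) - 1 := by
    have : 1 ≤ l := by omega
    push_cast [this]; ring
  have hcl2 : ((l-2:ℕ):ℝ) = (l:ℝ) - 2 := by
    have : 2 ≤ l := by omega
    push_cast [this]; ring
  have hcr1 : ((r-1:ℕ):ℝ) = (r:ℝ) - 1 := by
    have : 1 ≤ r := by omega
    push_cast [this]; ring
  have hR1 : (0:ℝ) < (r:ℝ) - 1 := by linarith
  -- xu ≤ 1 since 1 is a fixed point
  have hone : (1:ℝ) = (1 - (1 - 1)^(r-1))^(l-1) := by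
    simp [zero_pow (by omega : r - 1 ≠ 0)]
  have hxu1 : xu ≤ 1 := hxu_min 1 one_pos hone
  -- key inequality : 1 ≤ (r-1)^(l-1) * xu^(l-2)
  have hbern : 1 - (1 - xu)^(r-1) ≤ ((r:ℝ)-1) * xu := by
    have h := bern_aux (r-1) xu hxu1
    rw [hcr1] at h; exact h
  have hbase0 : 0 ≤ 1 - (1 - xu)^(r-1) := by
    have : (1 - xu)^(r-1) ≤ 1 := pow_le_one₀ (by linarith) (by linarith)
    linarith
  have hstep : xu ≤ (((r:ℝ)-1) * xu)^(l-1) := by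
    calc xu = (1 - (1 - xu)^(r-1))^(l-1) := hxu_fix
    _ ≤ (((r:ℝ)-1) * xu)^(l-1) := pow_le_pow_left₀ hbase0 hbern _
  have hlsplit : l - 1 = (l-2) + 1 := by omega
  have key : 1 ≤ ((r:ℝ)-1)^(l-1) * xu^(l-2) := by
    have h2 : xu ≤ (((r:ℝ)-1)^(l-1) * xu^(l-2)) * xu := by
      calc xu ≤ (((r:ℝ)-1) * xu)^(l-1) := hstep
      _ = (((r:ℝ)-1)^(l-1) * xu^(l-2)) * xu := by
          rw [mul_pow]; rw [hlsplit, pow_succ xu]; ring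
    have := (mul_le_mul_iff_left₀ hxu_pos).mp (by linarith : 1 * xu ≤ (((r:ℝ)-1)^(l-1) * xu^(l-2)) * xu)
    linarith
  -- Part 1
  have hL2 : (0:ℝ) < (l:ℝ) - 2 := by linarith
  have part1 : ((r:ℝ) - 1) ^ (-(((l:ℝ) - 1)/((l:ℝ) - 2))) ≤ xu := by
    have hpow : ((r:ℝ)-1) ^ (-(((l:ℝ)-1))) ≤ xu ^ ((l:ℝ)-2) := by
      rw [← hcl1, ← hcl2, Real.rpow_neg hR1.le, Real.rpow_natCast, Real.rpow_natCast]
      rw [inv_le_iff_one_le_mul₀' (by positivity)]  -- maybe wrong name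
      exact key
    have h := Real.rpow_le_rpow (by positivity) hpow (by positivity : (0:ℝ) ≤ 1/((l:ℝ)-2))
    rw [← Real.rpow_mul hR1.le, ← Real.rpow_mul hxu_pos.le] at h
    have e1 : -((l:ℝ)-1) * (1/((l:ℝ)-2)) = -(((l:ℝ) - 1)/((l:ℝ) - 2)) := by ring
    have e2 : ((l:ℝ)-2) * (1/((l:ℝ)-2)) = 1 := by field_simp
    rw [e1, e2, Real.rpow_one] at h
    exact h
  refine ⟨part1, fun hr4 => ?_⟩
  -- Part 2
  have hrR4 : (4:ℝ) ≤ (r:ℝ) := by exact_mod_cast hr4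
  set A : ℝ := ((l:ℝ) - 1) * ((r:ℝ) - 1) with hA
  have hA1 : (1:ℝ) < A := by nlinarith
  have hA0 : (0:ℝ) < A := by linarith
  set s : ℝ := A ^ (-(1/((r:ℝ) - 2))) with hs
  have hd : (0:ℝ) < (r:ℝ) - 2 := by linarith
  have hs0 : 0 < s := Real.rpow_pos_of_pos hA0 _
  have hs1 : s < 1 := Real.rpow_lt_one_of_one_lt_of_neg hA1 (by
    have : (0:ℝ) < 1/((r:ℝ)-2) := by positivity
    linarith)
  -- key identity : s^(r-1) = s / A
  have hkey : s^(r-1) = s / A := by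
    rw [← Real.rpow_natCast s (r-1), hs, ← Real.rpow_mul hA0.le, hcr1]
    have e : (-(1/((r:ℝ)-2))) * ((r:ℝ)-1) = (-(1/((r:ℝ)-2))) - 1 := by
      field_simp; ring
    rw [e, Real.rpow_sub hA0, Real.rpow_one]
  -- first conjunct
  have G1 : (1 - s^(r-1))^(l-1) ≥ 1 - s := by
    rw [hkey]
    have hb := one_add_mul_le_pow (a := -(s/A)) (by
      have : s/A ≤ s := by
        rw [div_le_iff₀ hA0]; nlinarith
      linarith) (l-1)
    have h2 : ((1:ℝ) + -(s/A))^(l-1) = (1 - s/A)^(l-1) := by ring_nf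
    rw [h2, hcl1] at hb
    have hl1 : ((l:ℝ)-1) ≠ 0 := by linarith
    have hr1 : ((r:ℝ)-1) ≠ 0 := by linarith
    have e4 : (1:ℝ) + ((l:ℝ)-1) * (-(s/A)) = 1 - s/((r:ℝ)-1) := by
      rw [hA]; field_simp; ring
    rw [e4] at hb
    have h5 : s/((r:ℝ)-1) ≤ s := div_le_self hs0.le (by linarith)
    linarith
  refine ⟨G1, ?_⟩
  -- xu ≤ 1 - s via IVT
  set b : ℝ := ((r:ℝ) - 1) ^ (-(((l:ℝ) - 1)/((l:ℝ) - 2))) with hbdef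
  have hb0 : 0 < b := Real.rpow_pos_of_pos hR1 _
  set ε : ℝ := min (1-s) (b/2) with hε
  have hε0 : 0 < ε := lt_min (by linarith) (by linarith)
  have hεx : ε ≤ 1 - s := min_le_left _ _
  have hεb : ε < b := lt_of_le_of_lt (min_le_right _ _) (by linarith)
  have hε1 : ε ≤ 1 := by
    have := Real.rpow_le_rpow hR1.le (le_refl ((r:ℝ)-1)) (le_refl 0)
    have hble : b ≤ 1 := Real.rpow_le_one_of_one_le_of_nonpos (by linarith)
      (by
        have h1 : (0:ℝ) < ((l:ℝ)-1)/((l:ℝ)-2) := div_pos (by linarith) (by linarith)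
        linarith)
    linarith [min_le_right (1-s) (b/2)]
  -- f(ε) < ε
  have hfε : (1 - (1 - ε)^(r-1))^(l-1) < ε := by
    have hbern2 : 1 - (1 - ε)^(r-1) ≤ ((r:ℝ)-1) * ε := by
      have h := bern_aux (r-1) ε hε1
      rw [hcr1] at h; exact h
    have hbase2 : 0 ≤ 1 - (1 - ε)^(r-1) := by
      have : (1 - ε)^(r-1) ≤ 1 := pow_le_one₀ (by linarith) (by linarith)
      linarith
    have h1 : (1 - (1 - ε)^(r-1))^(l-1) ≤ (((r:ℝ)-1) * ε)^(l-1) :=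
      pow_le_pow_left₀ hbase2 hbern2 _
    have hbpow : ((r:ℝ)-1)^(l-1) * b^(l-2) = 1 := by
      rw [← Real.rpow_natCast ((r:ℝ)-1) (l-1), ← Real.rpow_natCast b (l-2), hbdef,
        ← Real.rpow_mul hR1.le, hcl1, hcl2, ← Real.rpow_add hR1]
      have e : ((l:ℝ)-1) + (-(((l:ℝ) - 1)/((l:ℝ) - 2))) * ((l:ℝ)-2) = 0 := by
        field_simp; ring
      rw [e, Real.rpow_zero]
    have hεpow : ε^(l-2) < b^(l-2) := by
      apply pow_lt_pow_left₀ hεb hε0.le (by omega)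
    have h2 : (((r:ℝ)-1) * ε)^(l-1) = (((r:ℝ)-1)^(l-1) * ε^(l-2)) * ε := by
      rw [mul_pow, hlsplit, pow_succ ε]; ring
    have h3 : ((r:ℝ)-1)^(l-1) * ε^(l-2) < 1 := by
      calc ((r:ℝ)-1)^(l-1) * ε^(l-2) < ((r:ℝ)-1)^(l-1) * b^(l-2) := by
            apply mul_lt_mul_of_pos_left hεpow (by positivity)
      _ = 1 := hbpow
    calc (1 - (1 - ε)^(r-1))^(l-1) ≤ (((r:ℝ)-1) * ε)^(l-1) := h1
    _ = (((r:ℝ)-1)^(l-1) * ε^(l-2)) * ε := h2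
    _ < 1 * ε := by apply mul_lt_mul_of_pos_right h3 hε0
    _ = ε := one_mul ε
  -- IVT
  have hgc : Continuous (fun x : ℝ => (1 - (1 - x)^(r-1))^(l-1) - x) :=
    Continuous.sub
      ((continuous_const.sub ((continuous_const.sub continuous_id).pow _)).pow _)
      continuous_id
  have hgε : (1 - (1 - ε)^(r-1))^(l-1) - ε ≤ 0 := by linarith
  have hgx : (0:ℝ) ≤ (1 - (1 - (1-s))^(r-1))^(l-1) - (1-s) := by
    have e : (1 - (1-s)) = s := by ring
    rw [e]; linarith [G1]
  obtain ⟨y, hy, hgy⟩ := intermediate_value_Icc hεx hgc.continuousOn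
    (Set.mem_Icc.mpr ⟨hgε, hgx⟩)
  have hgy' : (1 - (1 - y)^(r-1))^(l-1) - y = 0 := hgy
  have hyfix : y = (1 - (1 - y)^(r-1))^(l-1) := by linarith
  exact le_trans (hxu_min y (lt_of_lt_of_le hε0 hy.1) hyfix) hy.2
end
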